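/- arXiv:1505.01731 — 13 statements merged into one kernel-verified Lean document; each statement's English description precedes it below -/
import Mathlib

section
/- Let k ≥ 1 be an integer and let G = (V, E) be a finite simple graph with matching(G) ≤ k. Let U = {v ∈ V : deg_G(v) ≥ 10k} and let F be the set of edges of G both of whose endpoints lie outside U. Let G' = (V, E') be a spanning subgraph of G (E' ⊆ E) such that F ⊆ E' and deg_{G'}(u) ≥ 5k for every u ∈ U. Then matching(G') = matching(G) and vc(G') = vc(G). -/
/-- `M` is a matching of the graph `G`: a finite set of edges of `G`
that are pairwise vertex-disjoint. -/
def IsMatchingSet {V : Type*} (G : SimpleGraph V) (M : Finset (Sym2 V)) : Prop :=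
  (↑M : Set (Sym2 V)) ⊆ G.edgeSet ∧
    ∀ e ∈ M, ∀ f ∈ M, e ≠ f → ∀ v : V, v ∈ e → v ∉ f

/-- The maximum size of a matching of `G`. -/
noncomputable def matchNum {V : Type*} (G : SimpleGraph V) : ℕ :=
  sSup {n | ∃ M : Finset (Sym2 V), IsMatchingSet G M ∧ M.card = n}

/-- `W` is a vertex cover of `G`: every edge has an endpoint in `W`. -/
def IsVertexCover {V : Type*} (G : SimpleGraph V) (W : Finset V) : Prop :=
  ∀ e ∈ G.edgeSet, ∃ v ∈ W, v ∈ e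

/-- The minimum size of a vertex cover of `G`. -/
noncomputable def vcNum {V : Type*} (G : SimpleGraph V) : ℕ :=
  sInf {n | ∃ W : Finset V, IsVertexCover G W ∧ W.card = n}

open Finset

section Aux

variable {V : Type*} [Fintype V] [DecidableEq V]

/-- The set of vertices covered by a set of edges. -/
def mvert (M : Finset (Sym2 V)) : Finset V := univ.filter (fun v => ∃ e ∈ M, v ∈ e)

lemma mem_mvert {M : Finset (Sym2 V)} {v : V} : v ∈ mvert M ↔ ∃ e ∈ M, v ∈ e := by
  simp [mvert]

lemma card_filter_mem_sym2 (e : Sym2 V) : (univ.filter (· ∈ e)).card ≤ 2 := by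
  induction e using Sym2.ind with
  | _ a b =>
    have hsub : (univ.filter (· ∈ s(a, b))) ⊆ {a, b} := by
      intro v hv
      simp only [mem_filter, Sym2.mem_iff] at hv
      simp [hv.2]
    calc (univ.filter (· ∈ s(a, b))).card ≤ ({a, b} : Finset V).card := card_le_card hsub
      _ ≤ ({b} : Finset V).card + 1 := card_insert_le _ _
      _ ≤ 2 := by simp

lemma card_mvert_le (M : Finset (Sym2 V)) : (mvert M).card ≤ 2 * M.card := by
  have hsub : mvert M ⊆ M.biUnion (fun e => univ.filter (· ∈ e)) := by
    intro v hv
    obtain ⟨e, he, hve⟩ := mem_mvert.1 hv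
    exact mem_biUnion.2 ⟨e, he, mem_filter.2 ⟨mem_univ v, hve⟩⟩
  calc (mvert M).card ≤ (M.biUnion (fun e => univ.filter (· ∈ e))).card := card_le_card hsub
    _ ≤ ∑ e ∈ M, (univ.filter (· ∈ e)).card := card_biUnion_le
    _ ≤ ∑ _e ∈ M, 2 := sum_le_sum (fun e _ => card_filter_mem_sym2 e)
    _ = 2 * M.card := by rw [sum_const, smul_eq_mul, mul_comm]

lemma matchSet_nonempty (G : SimpleGraph V) :
    Set.Nonempty {n | ∃ M : Finset (Sym2 V), IsMatchingSet G M ∧ M.card = n} :=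
  ⟨0, ∅, ⟨by simp, by simp⟩, by simp⟩

lemma matchSet_bdd (G : SimpleGraph V) :
    BddAbove {n | ∃ M : Finset (Sym2 V), IsMatchingSet G M ∧ M.card = n} :=
  ⟨Fintype.card (Sym2 V), fun n ⟨M, _, hM⟩ => hM ▸ Finset.card_le_univ M⟩

lemma le_matchNum {G : SimpleGraph V} {M : Finset (Sym2 V)} (h : IsMatchingSet G M) :
    M.card ≤ matchNum G :=
  le_csSup (matchSet_bdd G) ⟨M, h, rfl⟩

lemma exists_max_matching (G : SimpleGraph V) :
    ∃ M : Finset (Sym2 V), IsMatchingSet G M ∧ M.card = matchNum G := by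
  have := Nat.sSup_mem (matchSet_nonempty G) (matchSet_bdd G)
  exact this

lemma coverSet_nonempty (G : SimpleGraph V) :
    Set.Nonempty {n | ∃ W : Finset V, IsVertexCover G W ∧ W.card = n} := by
  refine ⟨(univ : Finset V).card, univ, ?_, rfl⟩
  intro e he
  induction e using Sym2.ind with
  | _ a b => exact ⟨a, mem_univ a, Sym2.mem_mk_left a b⟩

lemma vcNum_le {G : SimpleGraph V} {W : Finset V} (h : IsVertexCover G W) :
    vcNum G ≤ W.card :=
  Nat.sInf_le ⟨W, h, rfl⟩

lemma exists_min_cover (G : SimpleGraph V) :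
    ∃ W : Finset V, IsVertexCover G W ∧ W.card = vcNum G :=
  Nat.sInf_mem (coverSet_nonempty G)

/-- Key replacement lemma: any small matching of `G` can be converted into a matching
of `G'` of the same size. -/
lemma key_replace (k : ℕ) (hk : 1 ≤ k) (G G' : SimpleGraph V)
    [DecidableRel G.Adj] [DecidableRel G'.Adj]
    (hsub : G' ≤ G)
    (hF : ∀ e ∈ G.edgeSet, (∀ v ∈ e, G.degree v < 10 * k) → e ∈ G'.edgeSet)
    (hU : ∀ u : V, 10 * k ≤ G.degree u → 5 * k ≤ G'.degree u) :
    ∀ n, ∀ M : Finset (Sym2 V), IsMatchingSet G M → M.card ≤ k →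
      (M.filter (fun e => e ∉ G'.edgeSet)).card = n →
      ∃ M' : Finset (Sym2 V), IsMatchingSet G' M' ∧ M'.card = M.card := by
  intro n
  induction n using Nat.strong_induction_on with
  | _ n ih =>
  intro M hM hMk hn
  rcases Nat.eq_zero_or_pos n with h0 | hpos
  · subst h0
    have hall : ∀ e ∈ M, e ∈ G'.edgeSet := by
      intro e he
      by_contra hne
      have hmem : e ∈ M.filter (fun e => e ∉ G'.edgeSet) := mem_filter.2 ⟨he, hne⟩
      rw [card_eq_zero.1 hn] at hmem
      exact absurd hmem (notMem_empty e)
    exact ⟨M, ⟨fun e he => hall e (mem_coe.1 he), hM.2⟩, rfl⟩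
  · obtain ⟨e, heM, heE⟩ : ∃ e ∈ M, e ∉ G'.edgeSet := by
      obtain ⟨e, he⟩ := card_pos.1 (hn ▸ hpos)
      exact ⟨e, (mem_filter.1 he).1, (mem_filter.1 he).2⟩
    have heG : e ∈ G.edgeSet := hM.1 (mem_coe.2 heM)
    have hex : ¬ ∀ v ∈ e, G.degree v < 10 * k := fun h => heE (hF e heG h)
    push_neg at hex
    obtain ⟨u, hue, hdeg⟩ := hex
    have hdeg' : 5 * k ≤ G'.degree u := hU u hdeg
    -- find a fresh neighbor of u in G'
    have hcard : (mvert M).card < (G'.neighborFinset u).card := by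
      have h1 : (mvert M).card ≤ 2 * k := (card_mvert_le M).trans (by omega)
      have h2 : (G'.neighborFinset u).card = G'.degree u :=
        SimpleGraph.card_neighborFinset_eq_degree G' u
      omega
    obtain ⟨w, hwN, hwM⟩ : ∃ w ∈ G'.neighborFinset u, w ∉ mvert M := by
      by_contra hc
      push_neg at hc
      exact absurd (card_le_card hc) (not_le.2 hcard)
    have hadj : G'.Adj u w := (SimpleGraph.mem_neighborFinset G' u w).1 hwN
    have hfE' : s(u, w) ∈ G'.edgeSet := hadj
    have huf : u ∈ s(u, w) := Sym2.mem_mk_left u w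
    have hwf : w ∈ s(u, w) := Sym2.mem_mk_right u w
    have hu_not : ∀ g ∈ M, g ≠ e → u ∉ g := fun g hg hne =>
      hM.2 e heM g hg (fun h => hne h.symm) u hue
    have hw_not : ∀ g ∈ M, w ∉ g := fun g hg hwg => hwM (mem_mvert.2 ⟨g, hg, hwg⟩)
    have hfM : s(u, w) ∉ M.erase e := by
      intro hmem
      exact hu_not _ (mem_of_mem_erase hmem) (ne_of_mem_erase hmem) huf
    set M' : Finset (Sym2 V) := insert s(u, w) (M.erase e) with hM'def
    have hM'match : IsMatchingSet G M' := by
      constructor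
      · intro g hg
        rcases mem_insert.1 (mem_coe.1 hg) with h | h
        · exact h ▸ (SimpleGraph.edgeSet_mono hsub hfE')
        · exact hM.1 (mem_coe.2 (mem_of_mem_erase h))
      · intro a ha b hb hab v hva
        rcases mem_insert.1 ha with ha' | ha' <;> rcases mem_insert.1 hb with hb' | hb'
        · exact absurd (ha'.trans hb'.symm) hab
        · subst ha'
          rcases Sym2.mem_iff.1 hva with rfl | rfl
          · exact hu_not b (mem_of_mem_erase hb') (ne_of_mem_erase hb')
          · exact hw_not b (mem_of_mem_erase hb')
        · subst hb'
          intro hvb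
          rcases Sym2.mem_iff.1 hvb with rfl | rfl
          · exact hu_not a (mem_of_mem_erase ha') (ne_of_mem_erase ha') hva
          · exact hw_not a (mem_of_mem_erase ha') hva
        · exact hM.2 a (mem_of_mem_erase ha') b (mem_of_mem_erase hb') hab v hva
    have hcard1 : 1 ≤ M.card := card_pos.2 ⟨e, heM⟩
    have hM'card : M'.card = M.card := by
      rw [hM'def, card_insert_of_notMem hfM, card_erase_of_mem heM]
      omega
    have hfilter : (M'.filter (fun g => g ∉ G'.edgeSet)).card = n - 1 := by
      rw [hM'def, filter_insert]
      rw [if_neg (by simp [hfE'])]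
      rw [filter_erase, card_erase_of_mem (mem_filter.2 ⟨heM, heE⟩), hn]
    obtain ⟨M'', hM''⟩ := ih (n - 1) (by omega) M' hM'match (hM'card ▸ hMk) hfilter
    exact ⟨M'', hM''.1, hM''.2.trans hM'card⟩

end Aux

theorem stmt_2 {V : Type*} [Fintype V] [DecidableEq V]
    (k : ℕ) (hk : 1 ≤ k)
    (G G' : SimpleGraph V) [DecidableRel G.Adj] [DecidableRel G'.Adj]
    (hsub : G' ≤ G)
    (hmatch : matchNum G ≤ k)
    (hF : ∀ e ∈ G.edgeSet, (∀ v ∈ e, G.degree v < 10 * k) → e ∈ G'.edgeSet)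
    (hU : ∀ u : V, 10 * k ≤ G.degree u → 5 * k ≤ G'.degree u) :
    matchNum G' = matchNum G ∧ vcNum G' = vcNum G := by
  have hedge : G'.edgeSet ⊆ G.edgeSet := SimpleGraph.edgeSet_mono hsub
  -- matchings of G' are matchings of G
  have hup : ∀ M : Finset (Sym2 V), IsMatchingSet G' M → IsMatchingSet G M :=
    fun M hM => ⟨fun e he => hedge (hM.1 he), hM.2⟩
  have hle : matchNum G' ≤ matchNum G := by
    apply csSup_le (matchSet_nonempty G')
    rintro n ⟨M, hM, rfl⟩
    exact le_matchNum (hup M hM)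
  -- matchNum G ≤ matchNum G'
  obtain ⟨M, hMmatch, hMcard⟩ := exists_max_matching G
  obtain ⟨M', hM'match, hM'card⟩ := key_replace k hk G G' hsub hF hU
    ((M.filter (fun e => e ∉ G'.edgeSet)).card) M hMmatch (hMcard ▸ hmatch) rfl
  have hge : matchNum G ≤ matchNum G' := by
    calc matchNum G = M.card := hMcard.symm
      _ = M'.card := hM'card.symm
      _ ≤ matchNum G' := le_matchNum hM'match
  have hmeq : matchNum G' = matchNum G := le_antisymm hle hge
  refine ⟨hmeq, ?_⟩
  -- vertex cover part
  -- vcNum G' ≤ vcNum G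
  obtain ⟨W, hWcov, hWcard⟩ := exists_min_cover G
  have h1 : vcNum G' ≤ vcNum G := by
    have : IsVertexCover G' W := fun e he => hWcov e (hedge he)
    exact hWcard ▸ vcNum_le this
  -- a small cover of G' from a maximum matching of G'
  obtain ⟨N, hNmatch, hNcard⟩ := exists_max_matching G'
  have hNcover : IsVertexCover G' (mvert N) := by
    intro e he
    by_contra hc
    push_neg at hc
    have hnotin : ∀ v ∈ e, ∀ g ∈ N, v ∉ g := by
      intro v hv g hg hvg
      exact hc v (mem_mvert.2 ⟨g, hg, hvg⟩) hv
    have heN : e ∉ N := by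
      intro heN
      induction e using Sym2.ind with
      | _ a b => exact hnotin a (Sym2.mem_mk_left a b) _ heN (Sym2.mem_mk_left a b)
    have : IsMatchingSet G' (insert e N) := by
      constructor
      · intro g hg
        rcases mem_insert.1 (mem_coe.1 hg) with rfl | h
        · exact he
        · exact hNmatch.1 (mem_coe.2 h)
      · intro a ha b hb hab v hva
        rcases mem_insert.1 ha with rfl | ha' <;> rcases mem_insert.1 hb with rfl | hb'
        · exact absurd rfl hab
        · exact hnotin v hva b hb'
        · intro hvb; exact hnotin v hvb a ha' hva
        · exact hNmatch.2 a ha' b hb' hab v hva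
    have hcard := le_matchNum this
    rw [card_insert_of_notMem heN, hNcard] at hcard
    omega
  have hsmall : vcNum G' ≤ 2 * k := by
    calc vcNum G' ≤ (mvert N).card := vcNum_le hNcover
      _ ≤ 2 * N.card := card_mvert_le N
      _ ≤ 2 * k := by rw [hNcard, hmeq]; omega
  -- minimum cover of G' contains all high-degree vertices
  obtain ⟨W', hW'cov, hW'card⟩ := exists_min_cover G'
  have hWU : ∀ u : V, 10 * k ≤ G.degree u → u ∈ W' := by
    intro u hdeg
    by_contra hu
    have hnb : G'.neighborFinset u ⊆ W' := by
      intro w hw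
      have hadj : G'.Adj u w := (SimpleGraph.mem_neighborFinset G' u w).1 hw
      obtain ⟨v, hvW, hve⟩ := hW'cov s(u, w) hadj
      rcases Sym2.mem_iff.1 hve with rfl | rfl
      · exact absurd hvW hu
      · exact hvW
    have h5 : 5 * k ≤ W'.card := by
      have := card_le_card hnb
      have h2 := SimpleGraph.card_neighborFinset_eq_degree G' u
      have := hU u hdeg
      omega
    have : W'.card ≤ 2 * k := hW'card ▸ hsmall
    omega
  -- W' covers G
  have hW'G : IsVertexCover G W' := by
    intro e he
    by_cases h : e ∈ G'.edgeSet
    · exact hW'cov e h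
    · have hex : ¬ ∀ v ∈ e, G.degree v < 10 * k := fun hh => h (hF e he hh)
      push_neg at hex
      obtain ⟨u, hue, hdeg⟩ := hex
      exact ⟨u, hWU u hdeg, hue⟩
  have h2 : vcNum G ≤ vcNum G' := hW'card ▸ vcNum_le hW'G
  omega
end

section
/- Let k ≥ 1 be an integer and let G = (V, E) be a finite simple graph with matching(G) ≤ k. Let U = {v ∈ V : deg_G(v) ≥ 10k} and let F be the set of edges of G both of whose endpoints lie outside U. Then |U| ≤ 2k and |F| ≤ 20k². -/
open scoped Classical

theorem stmt_3 {V : Type*} [Fintype V] [DecidableEq V]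
    (k : ℕ) (hk : 1 ≤ k)
    (G : SimpleGraph V) [DecidableRel G.Adj]
    (hmatch : matchNum G ≤ k) :
    (Finset.univ.filter (fun v : V => 10 * k ≤ G.degree v)).card ≤ 2 * k ∧
    (G.edgeFinset.filter (fun e => ∀ v ∈ e, G.degree v < 10 * k)).card ≤ 20 * k ^ 2 := by
  classical
  -- a maximum matching
  obtain ⟨M, hMmem, hMmax⟩ :=
    Finset.exists_max_image
      (Finset.univ.filter (fun M : Finset (Sym2 V) => IsMatchingSet G M))
      Finset.card ⟨∅, Finset.mem_filter.2 ⟨Finset.mem_univ _, by simp [IsMatchingSet]⟩⟩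
  have hM : IsMatchingSet G M := (Finset.mem_filter.1 hMmem).2
  have hmax : ∀ M' : Finset (Sym2 V), IsMatchingSet G M' → M'.card ≤ M.card := by
    intro M' hM'
    exact hMmax M' (Finset.mem_filter.2 ⟨Finset.mem_univ _, hM'⟩)
  -- card M ≤ k
  have hMk : M.card ≤ k := by
    refine le_trans ?_ hmatch
    apply le_csSup
    · exact ⟨Fintype.card (Sym2 V), fun n ⟨N, _, hc⟩ => hc ▸ Finset.card_le_univ N⟩
    · exact ⟨M, hM, rfl⟩
  -- the set of matched vertices
  set W : Finset V := Finset.univ.filter (fun v => ∃ f ∈ M, v ∈ f) with hWdef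
  have hmemW : ∀ v : V, v ∈ W ↔ ∃ f ∈ M, v ∈ f := by
    intro v; simp [hWdef]
  have hout : ∀ (e : Sym2 V) (v : V), v ∈ e → v = e.out.1 ∨ v = e.out.2 := by
    intro e v hv
    rw [← e.out_eq] at hv
    exact Sym2.mem_iff.1 hv
  have hWcard : W.card ≤ 2 * k := by
    have hsub : W ⊆ M.biUnion (fun e => {e.out.1, e.out.2}) := by
      intro v hv
      obtain ⟨f, hf, hvf⟩ := (hmemW v).1 hv
      refine Finset.mem_biUnion.2 ⟨f, hf, ?_⟩
      rcases hout f v hvf with h | h <;> simp [h]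
    calc W.card ≤ (M.biUnion (fun e => ({e.out.1, e.out.2} : Finset V))).card :=
          Finset.card_le_card hsub
      _ ≤ ∑ e ∈ M, ({e.out.1, e.out.2} : Finset V).card := Finset.card_biUnion_le
      _ ≤ ∑ _e ∈ M, 2 := Finset.sum_le_sum (fun e _ =>
          (Finset.card_insert_le _ _).trans (by simp))
      _ = 2 * M.card := by rw [Finset.sum_const, smul_eq_mul, mul_comm]
      _ ≤ 2 * k := by omega
  -- maximality: every edge meets W
  have hmeet : ∀ e ∈ G.edgeFinset, ∃ v, v ∈ e ∧ v ∈ W := by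
    intro e he
    by_contra hcon
    push_neg at hcon
    have hnotW : ∀ v ∈ e, ∀ f ∈ M, v ∉ f := by
      intro v hv f hf hvf
      exact hcon v hv ((hmemW v).2 ⟨f, hf, hvf⟩)
    have heM : e ∉ M := fun hmem =>
      hnotW e.out.1 e.out_fst_mem e hmem e.out_fst_mem
    have hmatching : IsMatchingSet G (insert e M) := by
      constructor
      · intro f hf
        rcases Finset.mem_insert.1 (Finset.mem_coe.1 hf) with rfl | hfM
        · exact SimpleGraph.mem_edgeFinset.1 he
        · exact hM.1 hfM
      · intro f hf g hg hfg v hvf hvg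
        rcases Finset.mem_insert.1 hf with rfl | hf' <;>
          rcases Finset.mem_insert.1 hg with rfl | hg'
        · exact hfg rfl
        · exact hnotW v hvf g hg' hvg
        · exact hnotW v hvg f hf' hvf
        · exact hM.2 f hf' g hg' hfg v hvf hvg
    have := hmax (insert e M) hmatching
    rw [Finset.card_insert_of_notMem heM] at this
    omega
  -- Part 1 : U ⊆ W
  have hUsub : (Finset.univ.filter (fun v : V => 10 * k ≤ G.degree v)) ⊆ W := by
    intro u hu
    have hdeg : 10 * k ≤ G.degree u := (Finset.mem_filter.1 hu).2
    by_contra huW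
    -- u has a neighbor outside W
    have hnb : ¬ (G.neighborFinset u ⊆ W) := by
      intro hsub
      have := Finset.card_le_card hsub
      rw [G.card_neighborFinset_eq_degree] at this
      omega
    obtain ⟨w, hw, hwW⟩ := Finset.not_subset.1 hnb
    have hadj : G.Adj u w := (SimpleGraph.mem_neighborFinset _ _ _).1 hw
    obtain ⟨v, hv, hvW⟩ := hmeet s(u, w) (SimpleGraph.mem_edgeFinset.2 hadj)
    rcases Sym2.mem_iff.1 hv with rfl | rfl
    · exact huW hvW
    · exact hwW hvW
  constructor
  · exact (Finset.card_le_card hUsub).trans hWcard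
  -- Part 2
  · set W' : Finset V := W.filter (fun v => G.degree v < 10 * k) with hW'def
    have hFsub : G.edgeFinset.filter (fun e => ∀ v ∈ e, G.degree v < 10 * k) ⊆
        W'.biUnion (fun v => G.incidenceFinset v) := by
      intro e he
      rw [Finset.mem_filter] at he
      obtain ⟨v, hv, hvW⟩ := hmeet e he.1
      refine Finset.mem_biUnion.2 ⟨v, Finset.mem_filter.2 ⟨hvW, he.2 v hv⟩, ?_⟩
      rw [SimpleGraph.mem_incidenceFinset]
      exact ⟨SimpleGraph.mem_edgeFinset.1 he.1, hv⟩
    calc (G.edgeFinset.filter (fun e => ∀ v ∈ e, G.degree v < 10 * k)).card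
        ≤ (W'.biUnion (fun v => G.incidenceFinset v)).card := Finset.card_le_card hFsub
      _ ≤ ∑ v ∈ W', (G.incidenceFinset v).card := Finset.card_biUnion_le
      _ ≤ ∑ _v ∈ W', 10 * k := Finset.sum_le_sum (fun v hv => by
          rw [SimpleGraph.card_incidenceFinset_eq_degree]
          exact le_of_lt (Finset.mem_filter.1 hv).2)
      _ = W'.card * (10 * k) := by rw [Finset.sum_const, smul_eq_mul]
      _ ≤ (2 * k) * (10 * k) := by
          have : W'.card ≤ W.card := Finset.card_le_card (Finset.filter_subset _ _)
          exact Nat.mul_le_mul_right _ (this.trans hWcard)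
      _ = 20 * k ^ 2 := by ring
end

section
/- Let k ≥ 1 be an integer, let G = (V, E) be a finite simple graph with positive real edge weights w : E → ℝ_{>0}, and suppose every matching in G has at most k edges. Let G' = (V, E') with E' ⊆ E (edges of E' keeping their weights) be such that for every edge uv ∈ E ∖ E', either deg_{G'}^{w(uv)}(u) ≥ 5k or deg_{G'}^{w(uv)}(v) ≥ 5k. Then the maximum total weight of a matching in G' equals the maximum total weight of a matching in G. -/
open scoped Classical

/-- `degW G w t x` is the number of edges of `G` incident to `x` whose weight
(under `w`) equals exactly `t`. -/
noncomputable def degW {V : Type*} [Fintype V] [DecidableEq V]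
    (G : SimpleGraph V) [DecidableRel G.Adj] (w : Sym2 V → ℝ) (t : ℝ) (x : V) : ℕ :=
  (G.edgeFinset.filter (fun e => x ∈ e ∧ w e = t)).card

lemma covered_card {V : Type*} [Fintype V] [DecidableEq V]
    (G : SimpleGraph V) (M : Finset (Sym2 V)) (hM : IsMatchingSet G M) :
    (M.biUnion (fun f => Finset.univ.filter (fun z => z ∈ f))).card ≤ 2 * M.card := by
  refine (Finset.card_biUnion_le).trans ?_
  have : ∀ f ∈ M, (Finset.univ.filter (fun z => z ∈ f)).card ≤ 2 := by
    intro f hf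
    have hfe : f ∈ G.edgeSet := hM.1 hf
    induction f with
    | h a b =>
      have hab : a ≠ b := (G.mem_edgeSet.1 hfe).ne
      have : Finset.univ.filter (fun z => z ∈ s(a,b)) = {a, b} := by
        ext z; simp [Sym2.mem_iff]
      rw [this]
      exact (Finset.card_insert_le _ _).trans (by simp)
  calc ∑ f ∈ M, (Finset.univ.filter (fun z => z ∈ f)).card ≤ ∑ _f ∈ M, 2 :=
        Finset.sum_le_sum this
    _ = 2 * M.card := by rw [Finset.sum_const, smul_eq_mul, mul_comm]

lemma key {V : Type*} [Fintype V] [DecidableEq V]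
    (k : ℕ) (hk : 1 ≤ k)
    (G G' : SimpleGraph V) [DecidableRel G.Adj] [DecidableRel G'.Adj]
    (hsub : G' ≤ G) (w : Sym2 V → ℝ)
    (hmatch : ∀ M : Finset (Sym2 V), IsMatchingSet G M → M.card ≤ k)
    (hdel : ∀ u v : V, G.Adj u v → ¬ G'.Adj u v →
      5 * k ≤ degW G' w (w s(u, v)) u ∨ 5 * k ≤ degW G' w (w s(u, v)) v) :
    ∀ n (M : Finset (Sym2 V)), IsMatchingSet G M →
      (M.filter (fun e => e ∉ G'.edgeSet)).card = n →
      ∃ M', IsMatchingSet G' M' ∧ ∑ e ∈ M', w e = ∑ e ∈ M, w e := by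
  intro n
  induction n with
  | zero =>
    intro M hM h0
    refine ⟨M, ⟨?_, hM.2⟩, rfl⟩
    intro e he
    by_contra he'
    have : e ∈ M.filter (fun e => e ∉ G'.edgeSet) := Finset.mem_filter.2 ⟨he, he'⟩
    simp [Finset.card_eq_zero.1 h0] at this
  | succ n ih =>
    intro M hM hcard
    -- pick a bad edge e
    have hne : (M.filter (fun e => e ∉ G'.edgeSet)).Nonempty := by
      rw [← Finset.card_pos, hcard]; omega
    obtain ⟨e, he⟩ := hne
    have heM : e ∈ M := (Finset.mem_filter.1 he).1
    have heG' : e ∉ G'.edgeSet := (Finset.mem_filter.1 he).2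
    have heG : e ∈ G.edgeSet := hM.1 heM
    -- covered vertices
    set C : Finset V := M.biUnion (fun f => Finset.univ.filter (fun z => z ∈ f)) with hC
    have hCcard : C.card ≤ 2 * k := by
      refine (covered_card G M hM).trans ?_
      have := hmatch M hM; omega
    -- find a replacement edge
    have main : ∃ e', e' ∈ G'.edgeSet ∧ w e' = w e ∧ ∀ z ∈ e', z ∈ e ∨ z ∉ C := by
      -- sub claim given a vertex x ∈ e with big degree
      have sub : ∀ x, x ∈ e → 5 * k ≤ degW G' w (w e) x →
          ∃ e', e' ∈ G'.edgeSet ∧ w e' = w e ∧ ∀ z ∈ e', z ∈ e ∨ z ∉ C := by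
        intro x hx hdeg
        set F := G'.edgeFinset.filter (fun e' => x ∈ e' ∧ w e' = w e) with hF
        have hFcard : 5 * k ≤ F.card := hdeg
        set g : Sym2 V → V := fun e' => if h : x ∈ e' then Sym2.Mem.other h else x with hg
        have hspec : ∀ e' ∈ F, s(x, g e') = e' := by
          intro e' he'
          have hx' : x ∈ e' := ((Finset.mem_filter.1 he').2).1
          simp only [hg, dif_pos hx']
          exact Sym2.other_spec hx'
        by_contra hno
        push_neg at hno
        have hgC : ∀ e' ∈ F, g e' ∈ C := by
          intro e' he'
          have hmem : e' ∈ G'.edgeSet :=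
            SimpleGraph.mem_edgeFinset.1 (Finset.mem_filter.1 he').1
          have hw' : w e' = w e := ((Finset.mem_filter.1 he').2).2
          obtain ⟨z, hz, hze, hzC⟩ := hno e' hmem hw'
          rw [← hspec e' he'] at hz
          rcases Sym2.mem_iff.1 hz with rfl | rfl
          · exact absurd hx hze
          · exact hzC
        have hinj : Set.InjOn g F := by
          intro e₁ h₁ e₂ h₂ hgeq
          rw [← hspec e₁ h₁, ← hspec e₂ h₂, hgeq]
        have : F.card ≤ C.card := Finset.card_le_card_of_injOn g hgC hinj
        omega
      -- use hdel
      induction e with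
      | h u v =>
        have hadj : G.Adj u v := G.mem_edgeSet.1 heG
        have hnadj : ¬ G'.Adj u v := fun h => heG' (G'.mem_edgeSet.2 h)
        rcases hdel u v hadj hnadj with h | h
        · exact sub u (by simp) h
        · refine sub v (by simp) ?_
          rw [Sym2.eq_swap] at h ⊢; exact h
    obtain ⟨e', he'G, hwe', hze'⟩ := main
    -- e' ∉ M
    have he'ne : e' ≠ e := fun h => heG' (h ▸ he'G)
    have he'M : e' ∉ M := by
      intro h
      -- e' ∈ M, e' ≠ e, so vertices of e' disjoint from e; but some vertex of e' is in e or uncovered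
      induction e' with
      | h a b =>
        have ha : a ∈ s(a,b) := by simp
        rcases hze' a ha with hae | haC
        · exact hM.2 e heM s(a,b) h (fun hh => he'ne hh.symm) a hae ha
        · exact haC (Finset.mem_biUnion.2 ⟨s(a,b), h, by simp⟩)
    set M' := insert e' (M.erase e) with hM'
    have hM'match : IsMatchingSet G M' := by
      constructor
      · intro f hf
        rcases Finset.mem_insert.1 hf with rfl | hf
        · exact SimpleGraph.edgeSet_mono hsub he'G
        · exact hM.1 (Finset.mem_of_mem_erase hf)
      · intro f₁ hf₁ f₂ hf₂ hne12 z hz1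
        rcases Finset.mem_insert.1 hf₁ with rfl | hg₁
        case inl =>
          rcases Finset.mem_insert.1 hf₂ with rfl | hg₂
          case inl => exact absurd rfl hne12
          case inr =>
            intro hz2
            have hf₂M : f₂ ∈ M := Finset.mem_of_mem_erase hg₂
            rcases hze' z hz1 with hze | hzC
            · exact hM.2 e heM f₂ hf₂M (fun h => (Finset.ne_of_mem_erase hg₂) h.symm) z hze hz2
            · exact hzC (Finset.mem_biUnion.2 ⟨f₂, hf₂M, by simp [hz2]⟩)
        case inr =>
          rcases Finset.mem_insert.1 hf₂ with rfl | hg₂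
          case inl =>
            intro hz2
            have hf₁M : f₁ ∈ M := Finset.mem_of_mem_erase hg₁
            rcases hze' z hz2 with hze | hzC
            · exact hM.2 f₁ hf₁M e heM (Finset.ne_of_mem_erase hg₁) z hz1 hze
            · exact hzC (Finset.mem_biUnion.2 ⟨f₁, hf₁M, by simp [hz1]⟩)
          case inr =>
            exact hM.2 f₁ (Finset.mem_of_mem_erase hg₁) f₂ (Finset.mem_of_mem_erase hg₂) hne12 z hz1
    have hM'card : (M'.filter (fun f => f ∉ G'.edgeSet)).card = n := by
      have h1 : M'.filter (fun f => f ∉ G'.edgeSet)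
          = (M.filter (fun f => f ∉ G'.edgeSet)).erase e := by
        ext f
        constructor
        · intro hf
          obtain ⟨hfM', hfG⟩ := Finset.mem_filter.1 hf
          rcases Finset.mem_insert.1 hfM' with rfl | hf2
          · exact absurd he'G hfG
          · exact Finset.mem_erase.2 ⟨(Finset.mem_erase.1 hf2).1,
              Finset.mem_filter.2 ⟨(Finset.mem_erase.1 hf2).2, hfG⟩⟩
        · intro hf
          obtain ⟨hfe, hfF⟩ := Finset.mem_erase.1 hf
          obtain ⟨hfM, hfG⟩ := Finset.mem_filter.1 hfF
          exact Finset.mem_filter.2 ⟨Finset.mem_insert.2 (Or.inr (Finset.mem_erase.2 ⟨hfe, hfM⟩)), hfG⟩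
      rw [h1, Finset.card_erase_of_mem he, hcard]; omega
    obtain ⟨M'', hM''1, hM''2⟩ := ih M' hM'match hM'card
    refine ⟨M'', hM''1, ?_⟩
    rw [hM''2, hM', Finset.sum_insert (fun h => he'M (Finset.mem_of_mem_erase h)),
      Finset.sum_erase_eq_sub heM, hwe']
    ring

theorem stmt_4 {V : Type*} [Fintype V] [DecidableEq V]
    (k : ℕ) (hk : 1 ≤ k)
    (G G' : SimpleGraph V) [DecidableRel G.Adj] [DecidableRel G'.Adj]
    (hsub : G' ≤ G)
    (w : Sym2 V → ℝ) (hw : ∀ e ∈ G.edgeSet, 0 < w e)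
    (hmatch : ∀ M : Finset (Sym2 V), IsMatchingSet G M → M.card ≤ k)
    (hdel : ∀ u v : V, G.Adj u v → ¬ G'.Adj u v →
      5 * k ≤ degW G' w (w s(u, v)) u ∨ 5 * k ≤ degW G' w (w s(u, v)) v) :
    sSup {x : ℝ | ∃ M : Finset (Sym2 V), IsMatchingSet G M ∧ ∑ e ∈ M, w e = x} =
      sSup {x : ℝ | ∃ M : Finset (Sym2 V), IsMatchingSet G' M ∧ ∑ e ∈ M, w e = x} := by
  congr 1
  ext x
  simp only [Set.mem_setOf_eq]
  constructor
  · rintro ⟨M, hM, rfl⟩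
    obtain ⟨M', hM', hsum⟩ := key k hk G G' hsub w hmatch hdel _ M hM rfl
    exact ⟨M', hM', hsum⟩
  · rintro ⟨M, hM, rfl⟩
    exact ⟨M, ⟨fun e he => SimpleGraph.edgeSet_mono hsub (hM.1 he), hM.2⟩, rfl⟩
end

section
/- Let G = (V, E) be a finite simple graph, let W be a vertex cover of G, let xy ∈ E, and let c : V → B be a coloring such that c(x) ≠ c(y) and neither c(x) nor c(y) belongs to the set {c(w) : w ∈ (W ∪ Γ(x) ∪ Γ(y)) ∖ {x, y}}. Then xy is the unique edge e ∈ E whose endpoint color set c(e) equals {c(x), c(y)}. -/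
theorem stmt_5 {V B : Type*} (G : SimpleGraph V) (W : Set V)
    (hW : ∀ ⦃u v : V⦄, G.Adj u v → u ∈ W ∨ v ∈ W)
    (x y : V) (hxy : G.Adj x y) (c : V → B)
    (hcxy : c x ≠ c y)
    (hx : c x ∉ c '' ((W ∪ G.neighborSet x ∪ G.neighborSet y) \ {x, y}))
    (hy : c y ∉ c '' ((W ∪ G.neighborSet x ∪ G.neighborSet y) \ {x, y})) :
    {e | e ∈ G.edgeSet ∧ Sym2.map c e = s(c x, c y)} = {s(x, y)} := by
  have key : ∀ u v, G.Adj u v → c u = c x → c v = c y → u = x ∧ v = y := by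
    intro u v huv hcu hcv
    have hv : v = y := by
      by_cases hvW : v ∈ W
      · by_contra hne
        have hvx : v ≠ x := by
          rintro rfl
          exact hcxy hcv
        exact hy ⟨v, ⟨Or.inl (Or.inl hvW), by simp [hvx, hne]⟩, hcv⟩
      · have huW := (hW huv).resolve_right hvW
        have hu : u = x := by
          by_contra hne
          have huy : u ≠ y := by
            rintro rfl
            exact hcxy hcu.symm
          exact hx ⟨u, ⟨Or.inl (Or.inl huW), by simp [hne, huy]⟩, hcu⟩
        subst hu
        by_contra hne
        have hvx := huv.ne'
        exact hy ⟨v, ⟨Or.inl (Or.inr huv), by simp [hvx, hne]⟩, hcv⟩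
    subst hv
    refine ⟨?_, rfl⟩
    by_contra hne
    have huy := huv.ne
    exact hx ⟨u, ⟨Or.inr huv.symm, by simp [hne, huy]⟩, hcu⟩
  ext e
  induction e using Sym2.ind with
  | _ u v =>
    simp only [Set.mem_setOf_eq, Set.mem_singleton_iff, Sym2.map_pair_eq,
      SimpleGraph.mem_edgeSet]
    constructor
    · rintro ⟨hadj, hmap⟩
      rcases Sym2.eq_iff.mp hmap with ⟨h1, h2⟩ | ⟨h1, h2⟩
      · obtain ⟨rfl, rfl⟩ := key u v hadj h1 h2
        rfl
      · obtain ⟨rfl, rfl⟩ := key v u hadj.symm h2 h1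
        exact Sym2.eq_swap
    · intro h
      rcases Sym2.eq_iff.mp h with ⟨rfl, rfl⟩ | ⟨rfl, rfl⟩
      · exact ⟨hxy, rfl⟩
      · exact ⟨hxy.symm, Sym2.eq_swap⟩
end

section
/- Let G = (V, E) be a finite simple graph, let W be a vertex cover of G, let u ∈ V, and let c : V → B be a coloring such that c(u) ∉ {c(w) : w ∈ W ∖ {u}}. Let γ be a color with γ ≠ c(u), γ ∈ {c(v) : v ∈ Γ(u)}, and γ ∉ {c(w) : w ∈ W}. Then there exists at least one edge e ∈ E with endpoint color set c(e) = {c(u), γ}, and every edge e ∈ E with c(e) = {c(u), γ} is incident to u. -/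
theorem stmt_6 {V B : Type*} (G : SimpleGraph V) (W : Set V)
    (hW : ∀ ⦃v w : V⦄, G.Adj v w → v ∈ W ∨ w ∈ W)
    (u : V) (c : V → B)
    (hu : c u ∉ c '' (W \ {u}))
    (γ : B) (hγu : γ ≠ c u)
    (hγnbr : γ ∈ c '' G.neighborSet u)
    (hγW : γ ∉ c '' W) :
    (∃ e ∈ G.edgeSet, Sym2.map c e = s(c u, γ)) ∧
      ∀ e ∈ G.edgeSet, Sym2.map c e = s(c u, γ) → u ∈ e := by
  obtain ⟨v, hv, hcv⟩ := hγnbr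
  constructor
  · exact ⟨s(u, v), hv, by simp [hcv]⟩
  · intro e he hce
    induction e with
    | h x y =>
      simp only [SimpleGraph.mem_edgeSet] at he
      simp only [Sym2.map_pair_eq, Sym2.eq_iff] at hce
      have key : ∀ a b : V, G.Adj a b → c a = c u → c b = γ → u ∈ s(a, b) := by
        intro a b hab hca hcb
        rcases hW hab with hW' | hW'
        · by_cases h : a = u
          · simp [h]
          · exact absurd ⟨a, ⟨hW', h⟩, hca⟩ hu
        · exact absurd ⟨b, hW', hcb⟩ hγW
      rcases hce with ⟨h1, h2⟩ | ⟨h1, h2⟩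
      · exact key x y he h1 h2
      · have := key y x he.symm h2 h1
        rwa [Sym2.eq_swap]
end

section
/- Let d ≥ 1 and let G = (V, E) be a d-uniform hypergraph. Let C ⊆ D be finite sets of vertices with |C| ≤ d − 1, and let M_{C,D} = {D' \ C : D' ∈ E, D ∩ D' = C}. Then hs(M_{C,D}) ≤ s_G(C) · d. -/
open scoped Classical

/-- The minimum size of a hitting set of the family `F`: a finite set of
vertices intersecting every member of `F`. -/
noncomputable def hsNum {α : Type*} (F : Finset (Finset α)) : ℕ :=
  sInf {n | ∃ H : Finset α, (∀ D ∈ F, ∃ v ∈ H, v ∈ D) ∧ H.card = n}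

/-- `T` is a sunflower with core `C` in the hypergraph with edge set `E`:
a set of edges, each containing `C`, whose pairwise intersections equal `C`. -/
def IsSunflower {α : Type*} [DecidableEq α] (E : Finset (Finset α)) (C : Finset α)
    (T : Finset (Finset α)) : Prop :=
  T ⊆ E ∧ (∀ D ∈ T, C ⊆ D) ∧ ∀ D ∈ T, ∀ D' ∈ T, D ≠ D' → D ∩ D' = C

/-- `sunflowerNum E C` is the maximum number of petals of a sunflower with
core `C` in the hypergraph with edge set `E` (it is `0` if no edge contains `C`). -/
noncomputable def sunflowerNum {α : Type*} [DecidableEq α] (E : Finset (Finset α))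
    (C : Finset α) : ℕ :=
  sSup {n | ∃ T : Finset (Finset α), IsSunflower E C T ∧ T.card = n}

theorem stmt_7 {α : Type*} [DecidableEq α] (d : ℕ) (hd : 1 ≤ d)
    (E : Finset (Finset α)) (huni : ∀ D ∈ E, D.card = d)
    (C D : Finset α) (hCD : C ⊆ D) (hC : C.card ≤ d - 1) :
    hsNum ((E.filter (fun D' => D ∩ D' = C)).image (fun D' => D' \ C)) ≤
      sunflowerNum E C * d := by
  classical
  set E' := E.filter (fun D' => D ∩ D' = C) with hE'
  have hE'E : E' ⊆ E := Finset.filter_subset _ _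
  have hCsub : ∀ D' ∈ E', C ⊆ D' := by
    intro D' hD' x hx
    have h := (Finset.mem_filter.mp hD').2
    exact (Finset.mem_inter.mp (h ▸ hx)).2
  set S : Set (Finset (Finset α)) :=
    {T | T ⊆ E' ∧ ∀ A ∈ T, ∀ B ∈ T, A ≠ B → A ∩ B = C} with hSdef
  have hSfin : S.Finite := by
    apply Set.Finite.subset (E'.powerset : Finset (Finset (Finset α))).finite_toSet
    intro T hT
    simpa [Finset.mem_powerset] using hT.1
  have hS : (∅ : Finset (Finset α)) ∈ S := ⟨Finset.empty_subset _, by simp⟩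
  obtain ⟨T, hTmem, hTmax⟩ :=
    Set.Finite.exists_maximalFor Finset.card S hSfin ⟨∅, hS⟩
  obtain ⟨hTE', hTpair⟩ := hTmem
  set H := T.biUnion (fun D' => D' \ C) with hH
  have hhit : ∀ X ∈ (E'.image (fun D' => D' \ C)), ∃ v ∈ H, v ∈ X := by
    intro X hX
    obtain ⟨D'', hD'', rfl⟩ := Finset.mem_image.mp hX
    have hCd : C.card < D''.card := by
      rw [huni D'' (hE'E hD'')]; omega
    by_cases hT : D'' ∈ T
    · have hne : (D'' \ C).Nonempty := by
        rw [← Finset.card_pos, Finset.card_sdiff_of_subset (hCsub _ hD'')]; omega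
      obtain ⟨v, hv⟩ := hne
      exact ⟨v, Finset.mem_biUnion.mpr ⟨D'', hT, hv⟩, hv⟩
    · have hins : ¬ (∀ A ∈ insert D'' T, ∀ B ∈ insert D'' T, A ≠ B → A ∩ B = C) := by
        intro hpair
        have hmem : insert D'' T ∈ S := ⟨Finset.insert_subset hD'' hTE', hpair⟩
        have hle : T.card ≤ (insert D'' T).card := Finset.card_le_card (Finset.subset_insert _ _)
        have := hTmax hmem hle
        rw [Finset.card_insert_of_notMem hT] at this
        omega
      push_neg at hins
      obtain ⟨A, hA, B, hB, hAB, hABC⟩ := hins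
      have key : ∃ D' ∈ T, D' ∩ D'' ≠ C := by
        rcases Finset.mem_insert.mp hA with rfl | hA'
        · rcases Finset.mem_insert.mp hB with rfl | hB'
          · exact absurd rfl hAB
          · exact ⟨B, hB', by rwa [Finset.inter_comm]⟩
        · rcases Finset.mem_insert.mp hB with rfl | hB'
          · exact ⟨A, hA', hABC⟩
          · exact absurd (hTpair A hA' B hB' hAB) hABC
      obtain ⟨D', hD'T, hD'ne⟩ := key
      have hCss : C ⊂ D' ∩ D'' := by
        refine ⟨Finset.subset_inter (hCsub _ (hTE' hD'T)) (hCsub _ hD''), ?_⟩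
        intro hle
        exact hD'ne (le_antisymm hle (Finset.subset_inter (hCsub _ (hTE' hD'T)) (hCsub _ hD'')) ▸ rfl)
      obtain ⟨v, hv1, hv2⟩ := Finset.exists_of_ssubset hCss
      have hv' := Finset.mem_inter.mp hv1
      refine ⟨v, Finset.mem_biUnion.mpr ⟨D', hD'T, Finset.mem_sdiff.mpr ⟨hv'.1, hv2⟩⟩,
        Finset.mem_sdiff.mpr ⟨hv'.2, hv2⟩⟩
  have hHcard : H.card ≤ T.card * d := by
    calc H.card ≤ ∑ D' ∈ T, (D' \ C).card := Finset.card_biUnion_le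
    _ ≤ ∑ D' ∈ T, d := by
        refine Finset.sum_le_sum fun D' hD' => ?_
        calc (D' \ C).card ≤ D'.card := Finset.card_le_card (Finset.sdiff_subset)
        _ = d := huni D' (hE'E (hTE' hD'))
    _ = T.card * d := by rw [Finset.sum_const, smul_eq_mul]
  have hT_le : T.card ≤ sunflowerNum E C := by
    apply le_csSup
    · exact ⟨E.card, fun n ⟨T', hT', hc⟩ => hc ▸ Finset.card_le_card hT'.1⟩
    · exact ⟨T, ⟨hTE'.trans hE'E, fun D' h => hCsub _ (hTE' h), hTpair⟩, rfl⟩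
  have h1 : hsNum (E'.image (fun D' => D' \ C)) ≤ H.card :=
    Nat.sInf_le ⟨H, hhit, rfl⟩
  calc hsNum (E'.image (fun D' => D' \ C)) ≤ H.card := h1
  _ ≤ T.card * d := hHcard
  _ ≤ sunflowerNum E C * d := Nat.mul_le_mul_right d hT_le
end

section
/- Let d, k, a ≥ 1 be integers and let G = (V, E) be a d-uniform hypergraph with hs(G) ≤ k. Let U = {C ⊆ V : s_G(C) > ak} and let F = {D ∈ E : no C ∈ U satisfies C ⊆ D}. Then |F| ≤ d! · (ak)^d. -/
open scoped Classical

/-- The classical Erdős–Ko sunflower lemma bound. -/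
lemma sunflower_bound {α : Type*} [DecidableEq α] :
    ∀ (d s : ℕ) (F : Finset (Finset α)), 1 ≤ s →
    (∀ D ∈ F, D.card = d) →
    (∀ C T, IsSunflower F C T → T.card ≤ s) →
    F.card ≤ Nat.factorial d * s ^ d := by
  intro d
  induction d with
  | zero =>
    intro s F _ huni _
    simp only [Nat.factorial_zero, pow_zero, mul_one]
    have hsub : F ⊆ {∅} := by
      intro D hD
      simp [Finset.card_eq_zero.mp (huni D hD)]
    calc F.card ≤ ({∅} : Finset (Finset α)).card := Finset.card_le_card hsub
      _ = 1 := rfl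
  | succ d ih =>
    intro s F hs huni hsun
    -- take a maximum-size pairwise disjoint subfamily M
    set S : Finset (Finset (Finset α)) :=
      F.powerset.filter (fun M => ∀ A ∈ M, ∀ B ∈ M, A ≠ B → A ∩ B = ∅) with hS
    have hSne : S.Nonempty := ⟨∅, by simp [hS]⟩
    obtain ⟨M, hMS, hMmax⟩ := Finset.exists_max_image S Finset.card hSne
    have hMF : M ⊆ F := Finset.mem_powerset.mp (Finset.mem_filter.mp hMS).1
    have hMdisj : ∀ A ∈ M, ∀ B ∈ M, A ≠ B → A ∩ B = ∅ :=
      (Finset.mem_filter.mp hMS).2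
    have hMcard : M.card ≤ s :=
      hsun ∅ M ⟨hMF, fun D _ => Finset.empty_subset D, hMdisj⟩
    set Y : Finset α := M.biUnion id with hY
    have hYcard : Y.card ≤ s * (d + 1) := by
      calc Y.card ≤ ∑ A ∈ M, (id A).card := Finset.card_biUnion_le
        _ = ∑ A ∈ M, (d + 1) := by
            apply Finset.sum_congr rfl
            intro A hA; exact huni A (hMF hA)
        _ = M.card * (d + 1) := by rw [Finset.sum_const, smul_eq_mul]
        _ ≤ s * (d + 1) := Nat.mul_le_mul_right _ hMcard
    -- every edge meets Y
    have hcover : ∀ D ∈ F, ∃ y ∈ Y, y ∈ D := by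
      intro D hD
      by_contra hcon
      push_neg at hcon
      have hDY : ∀ x ∈ D, x ∉ Y := fun x hx hxY => hcon x hxY hx
      have hDne : D.Nonempty := by
        rw [← Finset.card_pos, huni D hD]; omega
      have hDM : D ∉ M := by
        intro hDM
        obtain ⟨x, hx⟩ := hDne
        exact hDY x hx (Finset.mem_biUnion.mpr ⟨D, hDM, hx⟩)
      have hins : insert D M ∈ S := by
        rw [hS, Finset.mem_filter, Finset.mem_powerset]
        constructor
        · exact Finset.insert_subset hD hMF
        · intro A hA B hB hAB
          rcases Finset.mem_insert.mp hA with rfl | hA'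
          · rcases Finset.mem_insert.mp hB with rfl | hB'
            · exact absurd rfl hAB
            · apply Finset.eq_empty_of_forall_notMem
              intro x hx
              have hxA := Finset.mem_inter.mp hx
              exact hDY x hxA.1 (Finset.mem_biUnion.mpr ⟨B, hB', hxA.2⟩)
          · rcases Finset.mem_insert.mp hB with rfl | hB'
            · apply Finset.eq_empty_of_forall_notMem
              intro x hx
              have hxA := Finset.mem_inter.mp hx
              exact hDY x hxA.2 (Finset.mem_biUnion.mpr ⟨A, hA', hxA.1⟩)
            · exact hMdisj A hA' B hB' hAB
      have := hMmax _ hins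
      rw [Finset.card_insert_of_notMem hDM] at this
      omega
    -- the link at y
    have hlink : ∀ y, (F.filter (fun D => y ∈ D)).card ≤ Nat.factorial d * s ^ d := by
      intro y
      set Fy := F.filter (fun D => y ∈ D) with hFy
      set L := Fy.image (fun D => D.erase y) with hL
      have hinj : Set.InjOn (fun D : Finset α => D.erase y) (↑Fy : Set (Finset α)) := by
        intro A hA B hB hAB
        have hyA : y ∈ A := (Finset.mem_filter.mp (Finset.mem_coe.mp hA)).2
        have hyB : y ∈ B := (Finset.mem_filter.mp (Finset.mem_coe.mp hB)).2
        have := congrArg (insert y) hAB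
        simpa [Finset.insert_erase hyA, Finset.insert_erase hyB] using this
      have hcardeq : Fy.card = L.card := (Finset.card_image_of_injOn hinj).symm
      have hLuni : ∀ D' ∈ L, D'.card = d := by
        intro D' hD'
        obtain ⟨D, hD, rfl⟩ := Finset.mem_image.mp hD'
        have hDF := Finset.mem_filter.mp hD
        rw [Finset.card_erase_of_mem hDF.2, huni D hDF.1]
        omega
      have hLsun : ∀ C T, IsSunflower L C T → T.card ≤ s := by
        intro C T ⟨hTL, hTC, hTint⟩
        have hyT : ∀ D' ∈ T, y ∉ D' := by
          intro D' hD'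
          obtain ⟨D, _, rfl⟩ := Finset.mem_image.mp (hTL hD')
          exact Finset.notMem_erase y D
        have hinsT : ∀ D' ∈ T, insert y D' ∈ F := by
          intro D' hD'
          obtain ⟨D, hD, rfl⟩ := Finset.mem_image.mp (hTL hD')
          have hDF := Finset.mem_filter.mp hD
          rw [Finset.insert_erase hDF.2]; exact hDF.1
        set T' := T.image (insert y) with hT'
        have hinjT : Set.InjOn (insert y) (↑T : Set (Finset α)) := by
          intro A hA B hB hAB
          have hyA : y ∉ A := hyT A (Finset.mem_coe.mp hA)
          have hyB : y ∉ B := hyT B (Finset.mem_coe.mp hB)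
          have := congrArg (fun s => Finset.erase s y) hAB
          simpa [Finset.erase_insert hyA, Finset.erase_insert hyB] using this
        have hTcard : T.card = T'.card := (Finset.card_image_of_injOn hinjT).symm
        have hsunT' : IsSunflower F (insert y C) T' := by
          refine ⟨?_, ?_, ?_⟩
          · intro D hD
            obtain ⟨D', hD', rfl⟩ := Finset.mem_image.mp hD
            exact hinsT D' hD'
          · intro D hD
            obtain ⟨D', hD', rfl⟩ := Finset.mem_image.mp hD
            exact Finset.insert_subset_insert y (hTC D' hD')
          · intro A hA B hB hAB
            obtain ⟨A', hA', rfl⟩ := Finset.mem_image.mp hA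
            obtain ⟨B', hB', rfl⟩ := Finset.mem_image.mp hB
            have hA'B' : A' ≠ B' := fun h => hAB (by rw [h])
            have := hTint A' hA' B' hB' hA'B'
            ext x
            simp only [Finset.mem_inter, Finset.mem_insert]
            constructor
            · rintro ⟨h1 | h1, h2 | h2⟩
              · left; exact h1
              · left; exact h1
              · left; exact h2
              · right; rw [← this]; exact Finset.mem_inter.mpr ⟨h1, h2⟩
            · rintro (rfl | hx)
              · exact ⟨Or.inl rfl, Or.inl rfl⟩
              · rw [← this] at hx
                have hx' := Finset.mem_inter.mp hx
                exact ⟨Or.inr hx'.1, Or.inr hx'.2⟩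
        rw [hTcard]
        exact hsun (insert y C) T' hsunT'
      rw [hcardeq]
      exact ih s L hs hLuni hLsun
    -- combine
    have hFsub : F ⊆ Y.biUnion (fun y => F.filter (fun D => y ∈ D)) := by
      intro D hD
      obtain ⟨y, hyY, hyD⟩ := hcover D hD
      exact Finset.mem_biUnion.mpr ⟨y, hyY, Finset.mem_filter.mpr ⟨hD, hyD⟩⟩
    calc F.card ≤ (Y.biUnion (fun y => F.filter (fun D => y ∈ D))).card :=
          Finset.card_le_card hFsub
      _ ≤ ∑ y ∈ Y, (F.filter (fun D => y ∈ D)).card := Finset.card_biUnion_le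
      _ ≤ ∑ y ∈ Y, Nat.factorial d * s ^ d :=
          Finset.sum_le_sum (fun y _ => hlink y)
      _ = Y.card * (Nat.factorial d * s ^ d) := by
          rw [Finset.sum_const, smul_eq_mul]
      _ ≤ (s * (d + 1)) * (Nat.factorial d * s ^ d) :=
          Nat.mul_le_mul_right _ hYcard
      _ = Nat.factorial (d + 1) * s ^ (d + 1) := by
          rw [Nat.factorial_succ, pow_succ]; ring

theorem stmt_8 {α : Type*} [DecidableEq α] (d k a : ℕ)
    (hd : 1 ≤ d) (hk : 1 ≤ k) (ha : 1 ≤ a)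
    (E : Finset (Finset α)) (huni : ∀ D ∈ E, D.card = d)
    (hhs : hsNum E ≤ k) :
    (E.filter (fun D => ∀ C ⊆ D, sunflowerNum E C ≤ a * k)).card ≤
      Nat.factorial d * (a * k) ^ d := by
  set F := E.filter (fun D => ∀ C ⊆ D, sunflowerNum E C ≤ a * k) with hF
  have hak : 1 ≤ a * k := Nat.one_le_iff_ne_zero.mpr (by positivity)
  have hFuni : ∀ D ∈ F, D.card = d := fun D hD => huni D (Finset.mem_filter.mp hD).1
  have hFsun : ∀ C T, IsSunflower F C T → T.card ≤ a * k := by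
    intro C T ⟨hTF, hTC, hTint⟩
    rcases T.eq_empty_or_nonempty with rfl | ⟨D0, hD0⟩
    · simpa using hak
    · have hD0F := Finset.mem_filter.mp (hTF hD0)
      have hCD0 : C ⊆ D0 := hTC D0 hD0
      have hbound : sunflowerNum E C ≤ a * k := hD0F.2 C hCD0
      have hTE : IsSunflower E C T :=
        ⟨fun D hD => (Finset.mem_filter.mp (hTF hD)).1, hTC, hTint⟩
      have hbdd : BddAbove {n | ∃ T : Finset (Finset α), IsSunflower E C T ∧ T.card = n} := by
        refine ⟨E.card, ?_⟩
        rintro n ⟨T', ⟨hT'E, _, _⟩, rfl⟩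
        exact Finset.card_le_card hT'E
      have : T.card ≤ sunflowerNum E C := le_csSup hbdd ⟨T, hTE, rfl⟩
      omega
  exact sunflower_bound d (a * k) F hak hFuni hFsun
end

section
/- Let d, k ≥ 1 be integers. There exists a constant a₀ depending only on d such that the following holds for every integer a ≥ a₀: for every d-uniform hypergraph G = (V, E) with hs(G) ≤ k, letting U = {C ⊆ V : s_G(C) > ak} and U' = {C ∈ U : s_G(C') ≤ k for every proper subset C' ⊊ C}, one has |U'| ≤ (d−1)! · k^{d−1}. -/
open scoped Classical

universe u

variable {α : Type u} [DecidableEq α]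

lemma exists_max_sf (E : Finset (Finset α)) (C : Finset α) :
    ∃ T : Finset (Finset α), IsSunflower E C T ∧ T.card = sunflowerNum E C ∧
      ∀ T' : Finset (Finset α), IsSunflower E C T' → T'.card ≤ T.card := by
  have hbdd : BddAbove {n | ∃ T : Finset (Finset α), IsSunflower E C T ∧ T.card = n} :=
    ⟨E.card, fun n hn => by obtain ⟨T, hT, hc⟩ := hn; exact hc ▸ Finset.card_le_card hT.1⟩
  have hne : {n | ∃ T : Finset (Finset α), IsSunflower E C T ∧ T.card = n}.Nonempty :=
    ⟨0, ∅, ⟨Finset.empty_subset _, fun D hD => absurd hD (Finset.notMem_empty D),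
      fun D hD => absurd hD (Finset.notMem_empty D)⟩, Finset.card_empty⟩
  obtain ⟨T, hT, hc⟩ := Nat.sSup_mem hne hbdd
  refine ⟨T, hT, hc, fun T' hT' => ?_⟩
  rw [hc]
  exact le_csSup hbdd ⟨T', hT', rfl⟩

lemma size_lt {d k a : ℕ} (hk : 1 ≤ k) (ha : 2 ≤ a) {E : Finset (Finset α)}
    (hE : ∀ D ∈ E, D.card = d) {C : Finset α} (hbig : a * k < sunflowerNum E C) :
    C.card < d := by
  obtain ⟨T, hT, hc, -⟩ := exists_max_sf E C
  have h2 : 1 < T.card := by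
    have : 2 ≤ a * k := le_trans (by omega) (Nat.mul_le_mul_left a hk)
    omega
  obtain ⟨P, hP, Q, hQ, hne⟩ := Finset.one_lt_card.mp h2
  have hPd := hE P (hT.1 hP)
  have hQd := hE Q (hT.1 hQ)
  by_contra h
  push_neg at h
  have hCP : C = P := Finset.eq_of_subset_of_card_le (hT.2.1 P hP) (by omega)
  have hCQ : C = Q := Finset.eq_of_subset_of_card_le (hT.2.1 Q hQ) (by omega)
  exact hne (hCP ▸ hCQ)

lemma exists_meet {E : Finset (Finset α)} {C'' : Finset α} {T'' : Finset (Finset α)}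
    (hT'' : IsSunflower E C'' T'')
    (hmax : ∀ T : Finset (Finset α), IsSunflower E C'' T → T.card ≤ T''.card)
    {D : Finset α} (hD : D ∈ E) (hss : C'' ⊂ D) :
    ∃ v, v ∈ D ∧ v ∉ C'' ∧ ∃ Q ∈ T'', v ∈ Q := by
  by_cases hDT : D ∈ T''
  · obtain ⟨v, hv1, hv2⟩ := Finset.exists_of_ssubset hss
    exact ⟨v, hv1, hv2, D, hDT, hv1⟩
  · by_contra hcon
    push_neg at hcon
    have hnew : IsSunflower E C'' (insert D T'') := by
      refine ⟨Finset.insert_subset hD hT''.1, ?_, ?_⟩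
      · intro P hP
        rcases Finset.mem_insert.mp hP with rfl | h
        · exact hss.subset
        · exact hT''.2.1 P h
      · intro P hP Q hQ hne
        have key : ∀ R ∈ T'', D ∩ R = C'' := by
          intro R hR
          refine Finset.Subset.antisymm ?_ (Finset.subset_inter hss.subset (hT''.2.1 R hR))
          intro v hv
          rw [Finset.mem_inter] at hv
          by_contra hvC
          exact hcon v hv.1 hvC R hR hv.2
        rcases Finset.mem_insert.mp hP with rfl | hP'
        · rcases Finset.mem_insert.mp hQ with rfl | hQ'
          · exact absurd rfl hne
          · exact key Q hQ'
        · rcases Finset.mem_insert.mp hQ with rfl | hQ'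
          · rw [Finset.inter_comm]; exact key P hP'
          · exact hT''.2.2 P hP' Q hQ' hne
    have := hmax _ hnew
    rw [Finset.card_insert_of_notMem hDT] at this
    omega

lemma meets_hit {k a : ℕ} (hk : 1 ≤ k) (ha : 1 ≤ a) {E : Finset (Finset α)}
    {H : Finset α} (hH : ∀ D ∈ E, ∃ v ∈ H, v ∈ D) (hHk : H.card ≤ k)
    {C : Finset α} (hbig : a * k < sunflowerNum E C) : ∃ v ∈ H, v ∈ C := by
  by_contra hcon
  push_neg at hcon
  obtain ⟨T, hT, hc, -⟩ := exists_max_sf E C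
  have hTbig : H.card < T.card := by
    have h1 : k ≤ a * k := le_trans (by omega) (Nat.mul_le_mul_right k ha)
    omega
  have hTne : T.Nonempty := Finset.card_pos.mp (by omega)
  obtain ⟨P₀, hP₀⟩ := hTne
  obtain ⟨v₀, hv₀H, -⟩ := hH P₀ (hT.1 hP₀)
  set f : Finset α → α := fun P => if h : ∃ v, v ∈ H ∧ v ∈ P then h.choose else v₀ with hf
  have hfspec : ∀ P ∈ T, f P ∈ H ∧ f P ∈ P := by
    intro P hP
    obtain ⟨v, hv1, hv2⟩ := hH P (hT.1 hP)
    have hex : ∃ v, v ∈ H ∧ v ∈ P := ⟨v, hv1, hv2⟩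
    simp only [hf, dif_pos hex]
    exact hex.choose_spec
  obtain ⟨P, hP, Q, hQ, hne, heq⟩ :=
    Finset.exists_ne_map_eq_of_card_lt_of_maps_to hTbig (fun P hP => (hfspec P hP).1)
  have hvC : f P ∈ C := by
    have := hT.2.2 P hP Q hQ hne
    rw [← this, Finset.mem_inter]
    exact ⟨(hfspec P hP).2, heq ▸ (hfspec Q hQ).2⟩
  exact hcon (f P) (hfspec P hP).1 hvC

lemma key_step {d k a : ℕ} (hk : 1 ≤ k) (ha : d + 1 ≤ a) {E : Finset (Finset α)}
    (hE : ∀ D ∈ E, D.card = d) {C'' C : Finset α} {T'' : Finset (Finset α)}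
    (hT'' : IsSunflower E C'' T'')
    (hmax : ∀ T : Finset (Finset α), IsSunflower E C'' T → T.card ≤ T''.card)
    (hT''k : T''.card ≤ k)
    (hbig : a * k < sunflowerNum E C) (hss : C'' ⊂ C) :
    ∃ v, v ∈ C ∧ v ∉ C'' ∧ v ∈ T''.biUnion (fun P => P \ C'') := by
  set W : Finset α := T''.biUnion (fun P => P \ C'') with hWdef
  have hW : W.card ≤ k * d := by
    calc W.card ≤ ∑ P ∈ T'', (P \ C'').card := Finset.card_biUnion_le
    _ ≤ T''.card * d := by
        refine Finset.sum_le_card_nsmul _ _ d ?_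
        intro P hP
        calc (P \ C'').card ≤ P.card := Finset.card_le_card (Finset.sdiff_subset)
        _ = d := hE P (hT''.1 hP)
    _ ≤ k * d := Nat.mul_le_mul_right d hT''k
  obtain ⟨T, hT, hc, -⟩ := exists_max_sf E C
  have hTbig : W.card < T.card := by
    have h1 : k * d < a * k := by
      calc k * d < k * d + k := by omega
      _ = k * (d + 1) := by ring
      _ ≤ k * a := Nat.mul_le_mul_left k ha
      _ = a * k := Nat.mul_comm k a
    omega
  obtain ⟨v₀, hv₀C, hv₀n⟩ := Finset.exists_of_ssubset hss
  set f : Finset α → α := fun P => if h : ∃ v, v ∈ P ∧ v ∉ C'' ∧ v ∈ W then h.choose else v₀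
    with hf
  have hfspec : ∀ P ∈ T, f P ∈ P ∧ f P ∉ C'' ∧ f P ∈ W := by
    intro P hP
    have hCP : C ⊆ P := hT.2.1 P hP
    have hssP : C'' ⊂ P := lt_of_lt_of_le hss hCP
    obtain ⟨v, hv1, hv2, Q, hQ, hvQ⟩ := exists_meet hT'' hmax (hT.1 hP) hssP
    have hex : ∃ v, v ∈ P ∧ v ∉ C'' ∧ v ∈ W := by
      exact ⟨v, hv1, hv2, Finset.mem_biUnion.mpr ⟨Q, hQ, Finset.mem_sdiff.mpr ⟨hvQ, hv2⟩⟩⟩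
    simp only [hf, dif_pos hex]
    exact hex.choose_spec
  obtain ⟨P, hP, Q, hQ, hne, heq⟩ :=
    Finset.exists_ne_map_eq_of_card_lt_of_maps_to hTbig (fun P hP => (hfspec P hP).2.2)
  have hvC : f P ∈ C := by
    have := hT.2.2 P hP Q hQ hne
    rw [← this, Finset.mem_inter]
    exact ⟨(hfspec P hP).1, heq ▸ (hfspec Q hQ).1⟩
  exact ⟨f P, hvC, (hfspec P hP).2.1, (hfspec P hP).2.2⟩

def bfun (k : ℕ) : ℕ → ℕ
  | 0 => 0
  | m + 1 => k * (m + 2) * max 1 (bfun k m)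

lemma bfun_le (k : ℕ) (hk : 1 ≤ k) : ∀ m : ℕ, max 1 (bfun k m) ≤ (m + 1).factorial * k ^ m := by
  intro m
  induction m with
  | zero => simp [bfun]
  | succ m ih =>
    have h1 : 1 ≤ (m + 2).factorial * k ^ (m + 1) :=
      Nat.one_le_iff_ne_zero.mpr (by positivity)
    refine max_le h1 ?_
    calc bfun k (m + 1) = k * (m + 2) * max 1 (bfun k m) := rfl
    _ ≤ k * (m + 2) * ((m + 1).factorial * k ^ m) := Nat.mul_le_mul_left _ ih
    _ = (m + 2).factorial * k ^ (m + 1) := by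
        rw [show (m + 2).factorial = (m + 2) * (m + 1).factorial from Nat.factorial_succ (m + 1), pow_succ]; ring

lemma rec2 {d k a : ℕ} (hd : 1 ≤ d) (hk : 1 ≤ k) (ha : d + 1 ≤ a) {E : Finset (Finset α)}
    (hE : ∀ D ∈ E, D.card = d) :
    ∀ m : ℕ, ∀ C'' : Finset α, d ≤ C''.card + m + 1 →
      ∃ S : Finset (Finset α), S.card ≤ max 1 (bfun k m) ∧
        ∀ C : Finset α, a * k < sunflowerNum E C →
          (∀ X ⊂ C, sunflowerNum E X ≤ k) → C'' ⊆ C → C ∈ S := by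
  intro m
  induction m with
  | zero =>
    intro C'' hcard
    refine ⟨{C''}, by simp [bfun], ?_⟩
    intro C hbig hmin hsub
    have hlt : C.card < d := size_lt hk (by omega) hE hbig
    have : C = C'' := (Finset.eq_of_subset_of_card_le hsub (by omega)).symm
    simp [this]
  | succ m ih =>
    intro C'' hcard
    have hkak : k ≤ a * k := by
      calc k = 1 * k := (one_mul k).symm
      _ ≤ a * k := Nat.mul_le_mul_right k (by omega)
    by_cases hk'' : sunflowerNum E C'' ≤ k
    · obtain ⟨T'', hT'', hc'', hmax''⟩ := exists_max_sf E C''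
      set W : Finset α := T''.biUnion (fun P => P \ C'') with hWdef
      have hWnotin : ∀ v ∈ W, v ∉ C'' := by
        intro v hv
        obtain ⟨P, -, hP⟩ := Finset.mem_biUnion.mp hv
        exact (Finset.mem_sdiff.mp hP).2
      have hWcard : W.card ≤ k * (m + 2) := by
        calc W.card ≤ ∑ P ∈ T'', (P \ C'').card := Finset.card_biUnion_le
        _ ≤ T''.card * (m + 2) := by
            refine Finset.sum_le_card_nsmul _ _ (m + 2) ?_
            intro P hP
            have hsub : C'' ⊆ P := hT''.2.1 P hP
            rw [Finset.card_sdiff_of_subset hsub, hE P (hT''.1 hP)]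
            omega
        _ ≤ k * (m + 2) := by
            have h1 : T''.card ≤ k := by omega
            exact Nat.mul_le_mul_right (m + 2) h1
      have hch : ∀ v : α, v ∈ W → ∃ Sv : Finset (Finset α),
          Sv.card ≤ max 1 (bfun k m) ∧
          ∀ C : Finset α, a * k < sunflowerNum E C →
            (∀ X ⊂ C, sunflowerNum E X ≤ k) → insert v C'' ⊆ C → C ∈ Sv := by
        intro v hv
        by_cases h1 : sunflowerNum E (insert v C'') ≤ k
        · exact ih (insert v C'')
            (by rw [Finset.card_insert_of_notMem (hWnotin v hv)]; omega)
        · refine ⟨{insert v C''}, by simp, ?_⟩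
          intro C hbig hmin hsub
          have : C = insert v C'' := by
            by_contra hne
            exact h1 (hmin _ (lt_of_le_of_ne hsub (Ne.symm hne)))
          simp [this]
      refine ⟨W.attach.biUnion (fun v => (hch v.1 v.2).choose), ?_, ?_⟩
      · calc (W.attach.biUnion (fun v => (hch v.1 v.2).choose)).card
            ≤ ∑ v ∈ W.attach, (hch v.1 v.2).choose.card := Finset.card_biUnion_le
        _ ≤ W.attach.card * max 1 (bfun k m) :=
            Finset.sum_le_card_nsmul _ _ _ (fun v _ => (hch v.1 v.2).choose_spec.1)
        _ ≤ (k * (m + 2)) * max 1 (bfun k m) := by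
            rw [Finset.card_attach]
            exact Nat.mul_le_mul_right _ hWcard
        _ ≤ max 1 (bfun k (m + 1)) := le_max_right _ _
      · intro C hbig hmin hsub
        have hss : C'' ⊂ C := by
          refine lt_of_le_of_ne hsub ?_
          intro h
          rw [h] at hk''
          omega
        obtain ⟨v, hvC, hvn, hvW⟩ :=
          key_step hk ha hE hT'' hmax'' (hc'' ▸ hk'') hbig hss
        refine Finset.mem_biUnion.mpr ⟨⟨v, hvW⟩, Finset.mem_attach _ _, ?_⟩
        exact (hch v hvW).choose_spec.2 C hbig hmin (Finset.insert_subset hvC hsub)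
    · refine ⟨{C''}, by simp, ?_⟩
      intro C hbig hmin hsub
      have : C = C'' := by
        by_contra hne
        exact hk'' (hmin _ (lt_of_le_of_ne hsub (Ne.symm hne)))
      simp [this]

theorem stmt_9 (d : ℕ) (hd : 1 ≤ d) :
    ∃ a₀ : ℕ, ∀ k : ℕ, 1 ≤ k → ∀ a : ℕ, a₀ ≤ a →
      ∀ (α : Type u) [DecidableEq α] (E : Finset (Finset α)),
        (∀ D ∈ E, D.card = d) → hsNum E ≤ k →
        {C : Finset α | a * k < sunflowerNum E C ∧
            ∀ C' ⊂ C, sunflowerNum E C' ≤ k}.Finite ∧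
        {C : Finset α | a * k < sunflowerNum E C ∧
            ∀ C' ⊂ C, sunflowerNum E C' ≤ k}.ncard ≤
          Nat.factorial (d - 1) * k ^ (d - 1) := by
  refine ⟨d + 1, ?_⟩
  intro k hk a ha α _ E hE hhs
  have hne : {n | ∃ H : Finset α, (∀ D ∈ E, ∃ v ∈ H, v ∈ D) ∧ H.card = n}.Nonempty := by
    refine ⟨(E.sup id).card, E.sup id, ?_, rfl⟩
    intro D hD
    have hDne : D.Nonempty := Finset.card_pos.mp (by rw [hE D hD]; omega)
    obtain ⟨v, hv⟩ := hDne
    exact ⟨v, (Finset.le_sup (f := id) hD) hv, hv⟩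
  obtain ⟨H, hH, hHcard⟩ := Nat.sInf_mem hne
  have hHk : H.card ≤ k := by rw [hHcard]; exact hhs
  rcases Nat.lt_or_ge d 2 with hd1 | hd2
  · have hempty : {C : Finset α | a * k < sunflowerNum E C ∧
        ∀ C' ⊂ C, sunflowerNum E C' ≤ k} = ∅ := by
      ext C
      simp only [Set.mem_setOf_eq, Set.mem_empty_iff_false, iff_false, not_and]
      intro h1 h2
      have hlt : C.card < d := size_lt hk (by omega) hE h1
      obtain ⟨v, -, hv⟩ := meets_hit hk (by omega) hH hHk h1
      have := Finset.card_pos.mpr ⟨v, hv⟩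
      omega
    rw [hempty]
    exact ⟨Set.finite_empty, by simp⟩
  · have hcov : ∀ v : α, ∃ Sv : Finset (Finset α), Sv.card ≤ max 1 (bfun k (d - 2)) ∧
        ∀ C : Finset α, a * k < sunflowerNum E C →
          (∀ X ⊂ C, sunflowerNum E X ≤ k) → {v} ⊆ C → C ∈ Sv := by
      intro v
      exact rec2 (by omega) hk ha hE (d - 2) {v} (by simp; omega)
    set S₀ : Finset (Finset α) := H.biUnion (fun v => (hcov v).choose) with hS₀
    have hsub : {C : Finset α | a * k < sunflowerNum E C ∧
        ∀ C' ⊂ C, sunflowerNum E C' ≤ k} ⊆ ↑S₀ := by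
      rintro C ⟨h1, h2⟩
      obtain ⟨v, hvH, hvC⟩ := meets_hit hk (by omega) hH hHk h1
      have hmem := (hcov v).choose_spec.2 C h1 h2 (Finset.singleton_subset_iff.mpr hvC)
      exact Finset.mem_coe.mpr (Finset.mem_biUnion.mpr ⟨v, hvH, hmem⟩)
    have hcard : S₀.card ≤ Nat.factorial (d - 1) * k ^ (d - 1) := by
      have e1 : d - 2 + 1 = d - 1 := by omega
      calc S₀.card ≤ ∑ v ∈ H, (hcov v).choose.card := Finset.card_biUnion_le
      _ ≤ H.card * max 1 (bfun k (d - 2)) :=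
          Finset.sum_le_card_nsmul _ _ _ (fun v _ => (hcov v).choose_spec.1)
      _ ≤ k * ((d - 2 + 1).factorial * k ^ (d - 2)) :=
          Nat.mul_le_mul hHk (bfun_le k hk (d - 2))
      _ = Nat.factorial (d - 1) * k ^ (d - 1) := by
          rw [e1, show k ^ (d - 1) = k ^ (d - 2) * k from by rw [← pow_succ, e1]]
          ring
    refine ⟨Set.Finite.subset S₀.finite_toSet hsub, ?_⟩
    have hle := Set.ncard_le_ncard hsub S₀.finite_toSet
    rw [Set.ncard_coe_finset] at hle
    exact le_trans hle hcard
end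

section
/- Let d, k, a ≥ 1 be integers, let G = (V, E) be a d-uniform hypergraph, and let W be a hitting set of G with |W| ≤ k. Let D ∈ E be an edge such that s_G(C) ≤ ak for every subset C ⊆ D. Then there exists a set A ⊆ V with A ∩ D = ∅ and |A| ≤ k + 2^d · a · k · d such that D is the unique edge of E disjoint from A. -/
open scoped Classical

theorem stmt_10 {α : Type*} [DecidableEq α] (d k a : ℕ)
    (hd : 1 ≤ d) (hk : 1 ≤ k) (ha : 1 ≤ a)
    (E : Finset (Finset α)) (huni : ∀ D' ∈ E, D'.card = d)
    (W : Finset α) (hW : ∀ D' ∈ E, ∃ v ∈ W, v ∈ D') (hWcard : W.card ≤ k)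
    (D : Finset α) (hD : D ∈ E)
    (hsmall : ∀ C ⊆ D, sunflowerNum E C ≤ a * k) :
    ∃ A : Finset α, Disjoint A D ∧ A.card ≤ k + 2 ^ d * a * k * d ∧
      ∀ D' ∈ E, Disjoint A D' → D' = D := by
  classical
  have hbdd : ∀ C : Finset α,
      BddAbove {n | ∃ T : Finset (Finset α), IsSunflower E C T ∧ T.card = n} := by
    intro C
    refine ⟨E.card, fun n hn => ?_⟩
    obtain ⟨T, hT, rfl⟩ := hn
    exact Finset.card_le_card hT.1
  have hT : ∀ C : Finset α, ∃ T : Finset (Finset α),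
      IsSunflower E C T ∧ T.card = sunflowerNum E C := by
    intro C
    have hne : {n | ∃ T : Finset (Finset α), IsSunflower E C T ∧ T.card = n}.Nonempty := by
      refine ⟨0, ∅, ⟨Finset.empty_subset _, ?_, ?_⟩, rfl⟩ <;> simp
    obtain ⟨T, hTs, hcard⟩ := Nat.sSup_mem hne (hbdd C)
    exact ⟨T, hTs, hcard⟩
  choose T hTs hTc using hT
  set A : Finset α :=
    D.powerset.biUnion (fun C => (T C).biUnion (fun D'' => D'' \ D)) with hA
  have hAD : Disjoint A D := by
    rw [Finset.disjoint_left]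
    intro x hx hxD
    simp only [hA, Finset.mem_biUnion, Finset.mem_sdiff] at hx
    obtain ⟨C, -, D'', -, -, hxnD⟩ := hx
    exact hxnD hxD
  refine ⟨A, hAD, ?_, ?_⟩
  · -- cardinality bound
    calc A.card ≤ ∑ C ∈ D.powerset, ((T C).biUnion (fun D'' => D'' \ D)).card :=
          Finset.card_biUnion_le
      _ ≤ ∑ C ∈ D.powerset, (a * k * d) := by
          refine Finset.sum_le_sum fun C hC => ?_
          calc ((T C).biUnion (fun D'' => D'' \ D)).card
              ≤ ∑ D'' ∈ T C, (D'' \ D).card := Finset.card_biUnion_le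
            _ ≤ ∑ D'' ∈ T C, d := by
                refine Finset.sum_le_sum fun D'' hD'' => ?_
                calc (D'' \ D).card ≤ D''.card := Finset.card_le_card (Finset.sdiff_subset)
                  _ = d := huni D'' ((hTs C).1 hD'')
            _ = (T C).card * d := by rw [Finset.sum_const, smul_eq_mul]
            _ ≤ a * k * d := by
                have := hsmall C (Finset.mem_powerset.mp hC)
                exact Nat.mul_le_mul_right d (hTc C ▸ this)
      _ = 2 ^ D.card * (a * k * d) := by
          rw [Finset.sum_const, smul_eq_mul, Finset.card_powerset]
      _ ≤ k + 2 ^ d * a * k * d := by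
          rw [huni D hD]; ring_nf; omega
  · -- uniqueness
    intro D' hD' hdisj
    set C : Finset α := D' ∩ D with hC
    have hCD : C ⊆ D := Finset.inter_subset_right
    have hCD' : C ⊆ D' := Finset.inter_subset_left
    by_cases hmem : D' ∈ T C
    · -- D' \ D ⊆ A, and D' is disjoint from A, so D' ⊆ D
      have hsub : D' ⊆ D := by
        intro x hx
        by_contra hxD
        have hxA : x ∈ A := by
          simp only [hA, Finset.mem_biUnion, Finset.mem_powerset, Finset.mem_sdiff]
          exact ⟨C, hCD, D', hmem, hx, hxD⟩
        exact (Finset.disjoint_left.mp hdisj hxA) hx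
      exact Finset.eq_of_subset_of_card_le hsub
        (le_of_eq ((huni D hD).trans (huni D' hD').symm))
    · -- insert D' (T C) is a bigger sunflower: contradiction
      exfalso
      have hint : ∀ Y ∈ T C, D' ∩ Y = C := by
        intro Y hY
        apply Finset.Subset.antisymm
        · intro x hx
          rw [Finset.mem_inter] at hx
          by_cases hxD : x ∈ D
          · exact Finset.mem_inter.mpr ⟨hx.1, hxD⟩
          · exfalso
            have hxA : x ∈ A := by
              simp only [hA, Finset.mem_biUnion, Finset.mem_powerset, Finset.mem_sdiff]
              exact ⟨C, hCD, Y, hY, hx.2, hxD⟩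
            exact (Finset.disjoint_left.mp hdisj hxA) hx.1
        · exact Finset.subset_inter hCD' ((hTs C).2.1 Y hY)
      have hsun : IsSunflower E C (insert D' (T C)) := by
        refine ⟨Finset.insert_subset hD' (hTs C).1, ?_, ?_⟩
        · intro X hX
          rcases Finset.mem_insert.mp hX with rfl | hX
          · exact hCD'
          · exact (hTs C).2.1 X hX
        · intro X hX Y hY hXY
          rcases Finset.mem_insert.mp hX with rfl | hX
          · rcases Finset.mem_insert.mp hY with rfl | hY
            · exact absurd rfl hXY
            · exact hint Y hY
          · rcases Finset.mem_insert.mp hY with rfl | hY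
            · rw [Finset.inter_comm]; exact hint X hX
            · exact (hTs C).2.2 X hX Y hY hXY
      have hle : (insert D' (T C)).card ≤ sunflowerNum E C :=
        le_csSup (hbdd C) ⟨insert D' (T C), hsun, rfl⟩
      rw [Finset.card_insert_of_notMem hmem, hTc C] at hle
      omega
end

section
/- Let d, k ≥ 1 be integers, let G = (V, E) be a d-uniform hypergraph, and let W be a hitting set of G with |W| ≤ k. Let C ⊆ V with |C| ≤ d − 1 be such that s_G(C') ≤ k for every proper subset C' ⊊ C. Then there exists a set A ⊆ V with A ∩ C = ∅ and |A| ≤ k + 2^d · d · k such that every edge of E that is disjoint from A contains C. -/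
open scoped Classical

theorem stmt_11 {α : Type*} [DecidableEq α] (d k : ℕ)
    (hd : 1 ≤ d) (hk : 1 ≤ k)
    (E : Finset (Finset α)) (huni : ∀ D ∈ E, D.card = d)
    (W : Finset α) (hW : ∀ D ∈ E, ∃ v ∈ W, v ∈ D) (hWcard : W.card ≤ k)
    (C : Finset α) (hC : C.card ≤ d - 1)
    (hsub : ∀ C' ⊂ C, sunflowerNum E C' ≤ k) :
    ∃ A : Finset α, Disjoint A C ∧ A.card ≤ k + 2 ^ d * d * k ∧
      ∀ D ∈ E, Disjoint A D → C ⊆ D := by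
  have hbdd : ∀ C' : Finset α,
      BddAbove {n | ∃ T : Finset (Finset α), IsSunflower E C' T ∧ T.card = n} := by
    intro C'
    refine ⟨E.card, ?_⟩
    rintro n ⟨T, ⟨hTE, -, -⟩, rfl⟩
    exact Finset.card_le_card hTE
  have hex : ∀ C' : Finset α, ∃ T : Finset (Finset α),
      IsSunflower E C' T ∧ T.card = sunflowerNum E C' := by
    intro C'
    have hne : {n | ∃ T : Finset (Finset α), IsSunflower E C' T ∧ T.card = n}.Nonempty :=
      ⟨0, ∅, ⟨Finset.empty_subset _, by simp, by simp⟩, rfl⟩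
    exact Nat.sSup_mem hne (hbdd C')
  choose T hT hTcard using hex
  set A : Finset α :=
    (C.powerset.erase C).biUnion (fun C' => (T C').biUnion (fun P => P \ C)) with hA
  have hssC : ∀ C' ∈ C.powerset.erase C, C' ⊂ C := by
    intro C' hC'
    obtain ⟨hne, hsubC⟩ := Finset.mem_erase.mp hC'
    exact lt_of_le_of_ne (Finset.mem_powerset.mp hsubC) hne
  refine ⟨A, ?_, ?_, ?_⟩
  · rw [Finset.disjoint_left]
    intro a ha haC
    obtain ⟨C', -, hmem⟩ := Finset.mem_biUnion.mp ha
    obtain ⟨P, -, haP⟩ := Finset.mem_biUnion.mp hmem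
    exact (Finset.mem_sdiff.mp haP).2 haC
  · calc A.card ≤ ∑ C' ∈ C.powerset.erase C, ((T C').biUnion (fun P => P \ C)).card :=
          Finset.card_biUnion_le
      _ ≤ ∑ C' ∈ C.powerset.erase C, (d * k) := by
          apply Finset.sum_le_sum
          intro C' hC'
          calc ((T C').biUnion (fun P => P \ C)).card
              ≤ ∑ P ∈ T C', (P \ C).card := Finset.card_biUnion_le
            _ ≤ ∑ P ∈ T C', d := by
                apply Finset.sum_le_sum
                intro P hP
                calc (P \ C).card ≤ P.card := Finset.card_le_card Finset.sdiff_subset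
                  _ = d := huni P ((hT C').1 hP)
            _ = (T C').card * d := by rw [Finset.sum_const, smul_eq_mul]
            _ ≤ k * d := by
                apply Nat.mul_le_mul_right
                rw [hTcard]
                exact hsub C' (hssC C' hC')
            _ = d * k := Nat.mul_comm _ _
      _ = (C.powerset.erase C).card * (d * k) := by rw [Finset.sum_const, smul_eq_mul]
      _ ≤ 2 ^ d * (d * k) := by
          apply Nat.mul_le_mul_right
          calc (C.powerset.erase C).card ≤ C.powerset.card :=
                Finset.card_le_card (Finset.erase_subset _ _)
            _ = 2 ^ C.card := Finset.card_powerset C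
            _ ≤ 2 ^ d := Nat.pow_le_pow_right (by norm_num) (le_trans hC (Nat.sub_le d 1))
      _ ≤ k + 2 ^ d * d * k := by rw [← mul_assoc]; exact Nat.le_add_left _ k
  · intro D hD hdisj
    by_contra hCD
    set C' := D ∩ C with hC'def
    have hss : C' ⊂ C := by
      refine ⟨Finset.inter_subset_right, fun h => hCD ?_⟩
      exact fun x hx => (Finset.mem_inter.mp (h hx)).1
    have hC'mem : C' ∈ C.powerset.erase C :=
      Finset.mem_erase.mpr ⟨hss.ne, Finset.mem_powerset.mpr hss.subset⟩
    have hDnot : D ∉ T C' := by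
      intro hDT
      have hsub2 : D \ C ⊆ A := fun x hx =>
        Finset.mem_biUnion.mpr ⟨C', hC'mem, Finset.mem_biUnion.mpr ⟨D, hDT, hx⟩⟩
      have hDC : D ⊆ C := by
        intro x hx
        by_contra hxC
        exact (Finset.disjoint_left.mp hdisj (hsub2 (Finset.mem_sdiff.mpr ⟨hx, hxC⟩))) hx
      have := Finset.card_le_card hDC
      rw [huni D hD] at this
      omega
    obtain ⟨h1, h2, h3⟩ := hT C'
    have key : ∀ P ∈ T C', D ∩ P = C' := by
      intro P hP
      apply Finset.Subset.antisymm
      · intro x hx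
        obtain ⟨hxD, hxP⟩ := Finset.mem_inter.mp hx
        have hxC : x ∈ C := by
          by_contra hxC
          have hxA : x ∈ A := Finset.mem_biUnion.mpr
            ⟨C', hC'mem, Finset.mem_biUnion.mpr ⟨P, hP, Finset.mem_sdiff.mpr ⟨hxP, hxC⟩⟩⟩
          exact (Finset.disjoint_left.mp hdisj hxA) hxD
        exact Finset.mem_inter.mpr ⟨hxD, hxC⟩
      · intro x hx
        exact Finset.mem_inter.mpr ⟨(Finset.mem_inter.mp hx).1, h2 P hP hx⟩
    have hSun : IsSunflower E C' (insert D (T C')) := by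
      refine ⟨?_, ?_, ?_⟩
      · intro X hX
        rcases Finset.mem_insert.mp hX with rfl | hX
        · exact hD
        · exact h1 hX
      · intro X hX
        rcases Finset.mem_insert.mp hX with rfl | hX
        · exact Finset.inter_subset_left
        · exact h2 X hX
      · intro X hX Y hY hne
        rcases Finset.mem_insert.mp hX with rfl | hX <;>
          rcases Finset.mem_insert.mp hY with rfl | hY
        · exact absurd rfl hne
        · exact key Y hY
        · rw [Finset.inter_comm]; exact key X hX
        · exact h3 X hX Y hY hne
    have hle : (insert D (T C')).card ≤ sunflowerNum E C' :=
      le_csSup (hbdd C') ⟨_, hSun, rfl⟩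
    rw [Finset.card_insert_of_notMem hDnot, hTcard] at hle
    omega
end

section
/- Let ν ≥ 1 be an integer and let G = (V, E) be a finite simple graph on n vertices. Call a vertex heavy if its degree is at least 2ν + 3, and call an edge shallow if neither of its endpoints is heavy; let h be the number of heavy vertices and s the number of shallow edges. Let 0 < ε ≤ 1 and set p = 8ε^{−2}n^{−1/5}; assume p ≤ 1, (2ν + 3)·p ≤ 1, and that n is large enough that exp(−8n^{1/5}/3) ≤ 1/10. Include each vertex of V in a random set Z independently with probability p, let h_Z be the number of heavy vertices in Z, and let s_Z be the number of shallow edges both of whose endpoints lie in Z. Then with probability at least 4/5, |max{h_Z/p, s_Z/p²} − max{s, h}| ≤ ε · max{n^{2/5}, s, h}. -/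
open MeasureTheory Finset
open scoped ENNReal Classical

-- key expectation lemma
lemma key_sum {V : Type*} [Fintype V] [DecidableEq V] (p : ℝ) (T : Finset V) :
    ∑ ω : V → Bool, (∏ v, if ω v then p else 1 - p) *
      (if ∀ v ∈ T, ω v = true then (1:ℝ) else 0) = p ^ T.card := by
  have h1 : ∀ ω : V → Bool, (if ∀ v ∈ T, ω v = true then (1:ℝ) else 0)
      = ∏ v ∈ T, if ω v = true then (1:ℝ) else 0 := by
    intro ω; rw [Finset.prod_boole]; congr 1
  have h2 : ∀ ω : V → Bool, ∏ v ∈ T, (if ω v = true then (1:ℝ) else 0)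
      = ∏ v, if v ∈ T then (if ω v = true then (1:ℝ) else 0) else 1 := by
    intro ω
    rw [Finset.prod_ite_mem, Finset.univ_inter]
  calc ∑ ω : V → Bool, (∏ v, if ω v then p else 1 - p) *
        (if ∀ v ∈ T, ω v = true then (1:ℝ) else 0)
      = ∑ ω : V → Bool, ∏ v, ((if ω v then p else 1 - p) *
          (if v ∈ T then (if ω v = true then (1:ℝ) else 0) else 1)) := by
        refine Finset.sum_congr rfl fun ω _ => ?_
        rw [h1, h2, Finset.prod_mul_distrib]
    _ = ∏ v : V, ∑ b : Bool, ((if b then p else 1 - p) *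
          (if v ∈ T then (if b = true then (1:ℝ) else 0) else 1)) := by
        rw [Finset.prod_univ_sum]
        rw [Fintype.piFinset_univ]
    _ = ∏ v : V, (if v ∈ T then p else 1) := by
        refine Finset.prod_congr rfl fun v _ => ?_
        by_cases hv : v ∈ T <;> simp [hv]
    _ = p ^ T.card := by
        rw [Finset.prod_ite_mem, Finset.univ_inter, Finset.prod_const]

section Moments
variable {V : Type*} [Fintype V] [DecidableEq V] {ι : Type*}

noncomputable def qw (p : ℝ) (ω : V → Bool) : ℝ := ∏ v, if ω v then p else 1 - p

noncomputable def indT (T : Finset V) (ω : V → Bool) : ℝ :=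
  if ∀ v ∈ T, ω v = true then 1 else 0

lemma qw_nonneg {p : ℝ} (hp0 : 0 ≤ p) (hp1 : p ≤ 1) (ω : V → Bool) : 0 ≤ qw p ω :=
  Finset.prod_nonneg fun v _ => by by_cases h : ω v <;> simp [h, hp0, hp1] <;> linarith

lemma indT_mul (T T' : Finset V) (ω : V → Bool) :
    indT T ω * indT T' ω = indT (T ∪ T') ω := by
  unfold indT
  by_cases h : ∀ v ∈ T, ω v = true <;> by_cases h' : ∀ v ∈ T', ω v = true
  · rw [if_pos h, if_pos h', if_pos (Finset.forall_mem_union.mpr ⟨h, h'⟩), one_mul]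
  · rw [if_neg h', if_neg (fun hu => h' (Finset.forall_mem_union.mp hu).2), mul_zero]
  · rw [if_neg h, if_neg (fun hu => h (Finset.forall_mem_union.mp hu).1), zero_mul]
  · rw [if_neg h, if_neg (fun hu => h (Finset.forall_mem_union.mp hu).1), zero_mul]

lemma sum_qw_indT (p : ℝ) (T : Finset V) :
    ∑ ω : V → Bool, qw p ω * indT T ω = p ^ T.card := key_sum p T

lemma sum_qw (p : ℝ) : ∑ ω : V → Bool, qw p ω = 1 := by
  have := sum_qw_indT (V := V) p ∅
  simpa [indT] using this

lemma first_moment (p : ℝ) (A : Finset ι) (T : ι → Finset V) :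
    ∑ ω : V → Bool, qw p ω * (∑ i ∈ A, indT (T i) ω) = ∑ i ∈ A, p ^ (T i).card := by
  calc ∑ ω : V → Bool, qw p ω * (∑ i ∈ A, indT (T i) ω)
      = ∑ ω : V → Bool, ∑ i ∈ A, qw p ω * indT (T i) ω := by
        simp [Finset.mul_sum]
    _ = ∑ i ∈ A, ∑ ω : V → Bool, qw p ω * indT (T i) ω := Finset.sum_comm
    _ = ∑ i ∈ A, p ^ (T i).card := by
        exact Finset.sum_congr rfl fun i _ => sum_qw_indT p (T i)

lemma second_moment (p : ℝ) (A : Finset ι) (T : ι → Finset V) :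
    ∑ ω : V → Bool, qw p ω * (∑ i ∈ A, indT (T i) ω) ^ 2
      = ∑ i ∈ A, ∑ j ∈ A, p ^ ((T i ∪ T j).card) := by
  calc ∑ ω : V → Bool, qw p ω * (∑ i ∈ A, indT (T i) ω) ^ 2
      = ∑ ω : V → Bool, ∑ i ∈ A, ∑ j ∈ A, qw p ω * indT (T i ∪ T j) ω := by
        refine Finset.sum_congr rfl fun ω _ => ?_
        simp only [← indT_mul, sq, Finset.sum_mul_sum, Finset.mul_sum, Finset.sum_mul]
        rw [Finset.sum_comm]
    _ = ∑ i ∈ A, ∑ j ∈ A, ∑ ω : V → Bool, qw p ω * indT (T i ∪ T j) ω := by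
        rw [Finset.sum_comm]
        exact Finset.sum_congr rfl fun i _ => Finset.sum_comm
    _ = _ := Finset.sum_congr rfl fun i _ => Finset.sum_congr rfl fun j _ =>
          sum_qw_indT p _

lemma variance_identity (p : ℝ) (A : Finset ι) (T : ι → Finset V) :
    ∑ ω : V → Bool, qw p ω * ((∑ i ∈ A, indT (T i) ω) - (∑ i ∈ A, p ^ (T i).card)) ^ 2
      = (∑ i ∈ A, ∑ j ∈ A, p ^ ((T i ∪ T j).card)) - (∑ i ∈ A, p ^ (T i).card) ^ 2 := by
  set m := ∑ i ∈ A, p ^ (T i).card with hm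
  have e1 : ∀ ω : V → Bool, qw p ω * ((∑ i ∈ A, indT (T i) ω) - m) ^ 2
      = qw p ω * (∑ i ∈ A, indT (T i) ω) ^ 2
        - 2 * m * (qw p ω * (∑ i ∈ A, indT (T i) ω)) + m ^ 2 * qw p ω := by
    intro ω; ring
  rw [Finset.sum_congr rfl fun ω _ => e1 ω, Finset.sum_add_distrib, Finset.sum_sub_distrib,
    ← Finset.mul_sum, ← Finset.mul_sum, second_moment, first_moment, sum_qw]
  ring

lemma chebyshev {Ω : Type*} [Fintype Ω] (q f : Ω → ℝ) (hq : ∀ ω, 0 ≤ q ω)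
    (m t : ℝ) (ht : 0 < t) :
    ∑ ω ∈ Finset.univ.filter (fun ω => t < |f ω - m|), q ω
      ≤ (∑ ω : Ω, q ω * (f ω - m) ^ 2) / t ^ 2 := by
  rw [le_div_iff₀ (by positivity)]
  calc (∑ ω ∈ Finset.univ.filter (fun ω => t < |f ω - m|), q ω) * t ^ 2
      = ∑ ω ∈ Finset.univ.filter (fun ω => t < |f ω - m|), q ω * t ^ 2 := by
        rw [Finset.sum_mul]
    _ ≤ ∑ ω ∈ Finset.univ.filter (fun ω => t < |f ω - m|), q ω * (f ω - m) ^ 2 := by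
        refine Finset.sum_le_sum fun ω hω => ?_
        rw [Finset.mem_filter] at hω
        refine mul_le_mul_of_nonneg_left ?_ (hq ω)
        have h1 : t ≤ |f ω - m| := le_of_lt hω.2
        calc t ^ 2 ≤ |f ω - m| ^ 2 := by
              exact pow_le_pow_left₀ (le_of_lt ht) h1 2
          _ = (f ω - m) ^ 2 := sq_abs _
    _ ≤ ∑ ω : Ω, q ω * (f ω - m) ^ 2 := by
        refine Finset.sum_le_sum_of_subset_of_nonneg (Finset.subset_univ _)
          fun ω _ _ => mul_nonneg (hq ω) (sq_nonneg _)

end Moments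

section Var
variable {V : Type*} [Fintype V] [DecidableEq V] {ι : Type*} [DecidableEq ι]

lemma varX_bound (p : ℝ) (hp0 : 0 ≤ p) (hp1 : p ≤ 1) (H : Finset V) :
    ∑ ω : V → Bool, qw p ω * ((∑ v ∈ H, indT {v} ω) - H.card * p) ^ 2
      ≤ H.card * p := by
  have hm : ∑ v ∈ H, p ^ ({v} : Finset V).card = H.card * p := by
    simp [Finset.sum_const, mul_comm]
  have hvar := variance_identity p H (fun v => ({v} : Finset V))
  rw [hm] at hvar
  rw [hvar]
  have hcard : ∀ u v : V, (({u} : Finset V) ∪ {v}).card = if u = v then 1 else 2 := by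
    intro u v
    by_cases h : u = v
    · simp [h]
    · rw [if_neg h]
      rw [Finset.card_union_of_disjoint (by simp [eq_comm, h])]
      simp
  have hsum : ∑ u ∈ H, ∑ v ∈ H, p ^ (({u} : Finset V) ∪ {v}).card
      = (H.card : ℝ) ^ 2 * p ^ 2 + H.card * (p - p ^ 2) := by
    have : ∀ u ∈ H, ∑ v ∈ H, p ^ (({u} : Finset V) ∪ {v}).card
        = H.card * p ^ 2 + (p - p ^ 2) := by
      intro u hu
      have : ∀ v ∈ H, p ^ (({u} : Finset V) ∪ {v}).card
          = p ^ 2 + (if u = v then p - p ^ 2 else 0) := by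
        intro v _
        rw [hcard]
        by_cases h : u = v <;> simp [h] <;> ring
      rw [Finset.sum_congr rfl this, Finset.sum_add_distrib, Finset.sum_const,
        Finset.sum_ite_eq H u (fun _ => p - p ^ 2), if_pos hu]
      push_cast; ring
    rw [Finset.sum_congr rfl this, Finset.sum_const]
    push_cast; ring
  rw [hsum]
  have : (0:ℝ) ≤ H.card * p ^ 2 := by positivity
  nlinarith [this]

lemma varY_bound (p : ℝ) (hp0 : 0 ≤ p) (hp1 : p ≤ 1) (A : Finset ι) (T : ι → Finset V)
    (K : ℕ)
    (hcard2 : ∀ i ∈ A, (T i).card = 2)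
    (hinj : ∀ i ∈ A, ∀ j ∈ A, T i = T j → i = j)
    (hdeg : ∀ i ∈ A, ((A.erase i).filter (fun j => ¬ Disjoint (T i) (T j))).card ≤ K) :
    ∑ ω : V → Bool, qw p ω * ((∑ i ∈ A, indT (T i) ω) - A.card * p ^ 2) ^ 2
      ≤ A.card * p ^ 2 + A.card * K * p ^ 3 := by
  have hm : ∑ i ∈ A, p ^ (T i).card = A.card * p ^ 2 := by
    rw [Finset.sum_congr rfl (fun i hi => by rw [hcard2 i hi]), Finset.sum_const]
    push_cast; ring
  have hvar := variance_identity p A T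
  rw [hm] at hvar
  rw [hvar]
  have key : ∀ i ∈ A, ∑ j ∈ A, (p ^ ((T i ∪ T j).card) - p ^ 4)
      ≤ p ^ 2 + K * p ^ 3 := by
    intro i hi
    rw [← Finset.add_sum_erase A _ hi]
    have h1 : p ^ ((T i ∪ T i).card) - p ^ 4 ≤ p ^ 2 := by
      rw [Finset.union_self, hcard2 i hi]
      nlinarith [pow_nonneg hp0 4]
    have h2 : ∑ j ∈ A.erase i, (p ^ ((T i ∪ T j).card) - p ^ 4) ≤ K * p ^ 3 := by
      calc ∑ j ∈ A.erase i, (p ^ ((T i ∪ T j).card) - p ^ 4)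
          ≤ ∑ j ∈ A.erase i, (if ¬ Disjoint (T i) (T j) then p ^ 3 else 0) := by
            refine Finset.sum_le_sum fun j hj => ?_
            have hjA : j ∈ A := Finset.mem_of_mem_erase hj
            have hji : j ≠ i := Finset.ne_of_mem_erase hj
            by_cases hd : Disjoint (T i) (T j)
            · rw [if_neg (not_not_intro hd)]
              have : (T i ∪ T j).card = 4 := by
                rw [Finset.card_union_of_disjoint hd, hcard2 i hi, hcard2 j hjA]
              rw [this]; linarith
            · rw [if_pos hd]
              have hne : T i ≠ T j := fun h => hji (hinj j hjA i hi h.symm)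
              have hge : 3 ≤ (T i ∪ T j).card := by
                by_contra hlt
                push_neg at hlt
                have hsub : T i ⊆ T i ∪ T j := Finset.subset_union_left
                have hsub' : T j ⊆ T i ∪ T j := Finset.subset_union_right
                have hle : (T i ∪ T j).card ≤ 2 := by omega
                have e1 : T i = T i ∪ T j :=
                  Finset.eq_of_subset_of_card_le hsub (by rw [hcard2 i hi]; omega)
                have e2 : T j = T i ∪ T j :=
                  Finset.eq_of_subset_of_card_le hsub' (by rw [hcard2 j hjA]; omega)
                exact hne (e1.trans e2.symm)
              have : p ^ ((T i ∪ T j).card) ≤ p ^ 3 :=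
                pow_le_pow_of_le_one hp0 hp1 hge
              nlinarith [pow_nonneg hp0 4]
        _ = ((A.erase i).filter (fun j => ¬ Disjoint (T i) (T j))).card * p ^ 3 := by
            rw [Finset.sum_ite, Finset.sum_const, Finset.sum_const_zero]
            simp [mul_comm]
        _ ≤ K * p ^ 3 := by
            have := hdeg i hi
            have hp3 : (0:ℝ) ≤ p ^ 3 := by positivity
            exact mul_le_mul_of_nonneg_right (by exact_mod_cast this) hp3
    linarith
  calc (∑ i ∈ A, ∑ j ∈ A, p ^ ((T i ∪ T j).card)) - (A.card * p ^ 2) ^ 2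
      = ∑ i ∈ A, ∑ j ∈ A, (p ^ ((T i ∪ T j).card) - p ^ 4) := by
        rw [Finset.sum_congr rfl (fun i _ => Finset.sum_sub_distrib _ _),
          Finset.sum_sub_distrib]
        simp [Finset.sum_const]
        ring
    _ ≤ ∑ i ∈ A, (p ^ 2 + K * p ^ 3) := Finset.sum_le_sum key
    _ = A.card * p ^ 2 + A.card * K * p ^ 3 := by
        rw [Finset.sum_const]; push_cast; ring

end Var

section Bridge
open MeasureTheory
variable {V : Type*} [Fintype V] [DecidableEq V]

lemma measure_bridge (p : ℝ) (hp0 : 0 ≤ p) (hp1 : p ≤ 1) (S : Set (V → Bool)) :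
    Measure.pi (fun _ : V => (PMF.bernoulli (Real.toNNReal p)
        (Real.toNNReal_le_one.mpr hp1)).toMeasure) S
      = ENNReal.ofReal (∑ ω ∈ Finset.univ.filter (· ∈ S), qw p ω) := by
  set μ := Measure.pi (fun _ : V => (PMF.bernoulli (Real.toNNReal p)
        (Real.toNNReal_le_one.mpr hp1)).toMeasure) with hμ
  have hsingle : ∀ ω : V → Bool, μ {ω} = ENNReal.ofReal (qw p ω) := by
    intro ω
    have h1 : ({ω} : Set (V → Bool)) = Set.univ.pi (fun v => {ω v}) := by
      rw [Set.univ_pi_singleton]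
    rw [h1, hμ, MeasureTheory.Measure.pi_pi]
    have h2 : ∀ v : V, (PMF.bernoulli (Real.toNNReal p)
        (Real.toNNReal_le_one.mpr hp1)).toMeasure {ω v}
        = ENNReal.ofReal (if ω v then p else 1 - p) := by
      intro v
      rw [PMF.toMeasure_apply_singleton _ _ (measurableSet_singleton _),
        PMF.bernoulli_apply]
      cases hb : ω v
      · simp only [Bool.cond_false, Bool.false_eq_true, if_false]
        rw [ENNReal.ofReal_sub _ hp0, ENNReal.ofReal_one]
        rw [ENNReal.coe_sub, ENNReal.coe_one]; rfl
      · simp only [Bool.cond_true, if_true]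
        rfl
    rw [Finset.prod_congr rfl (fun v _ => h2 v), qw,
      ENNReal.ofReal_prod_of_nonneg]
    intro v _
    by_cases hb : ω v <;> simp [hb, hp0] <;> linarith
  have hS : S = ⋃ ω ∈ Finset.univ.filter (· ∈ S), ({ω} : Set (V → Bool)) := by
    ext x; simp
  conv_lhs => rw [hS]
  rw [measure_biUnion_finset (fun x _ y _ hxy => by simp [Set.disjoint_singleton, hxy])
    (fun b _ => measurableSet_singleton b)]
  rw [Finset.sum_congr rfl (fun ω _ => hsingle ω),
    ENNReal.ofReal_sum_of_nonneg (fun ω _ => qw_nonneg hp0 hp1 ω)]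

lemma card_Te (G : SimpleGraph V) [DecidableRel G.Adj] (e : Sym2 V)
    (he : e ∈ G.edgeFinset) : (Finset.univ.filter (· ∈ e)).card = 2 := by
  induction e with
  | _ a b =>
    have hadj : G.Adj a b := by rwa [SimpleGraph.mem_edgeFinset, SimpleGraph.mem_edgeSet] at he
    have hne : a ≠ b := hadj.ne
    have : Finset.univ.filter (· ∈ s(a, b)) = {a, b} := by
      ext v; simp [Sym2.mem_iff]
    rw [this, Finset.card_pair hne]

lemma Te_inj (G : SimpleGraph V) [DecidableRel G.Adj] (e f : Sym2 V)
    (he : e ∈ G.edgeFinset) (hf : f ∈ G.edgeFinset)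
    (heq : Finset.univ.filter (· ∈ e) = Finset.univ.filter (· ∈ f)) : e = f := by
  have hmem : ∀ v : V, v ∈ e ↔ v ∈ f := by
    intro v
    have := Finset.ext_iff.mp heq v
    simpa using this
  induction e with
  | _ a b =>
    induction f with
    | _ c d =>
      have hab : G.Adj a b := by rwa [SimpleGraph.mem_edgeFinset, SimpleGraph.mem_edgeSet] at he
      have hcd : G.Adj c d := by rwa [SimpleGraph.mem_edgeFinset, SimpleGraph.mem_edgeSet] at hf
      have h1 := (hmem a).mp (by simp)
      have h2 := (hmem b).mp (by simp)
      rw [Sym2.mem_iff] at h1 h2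
      have hne : a ≠ b := hab.ne
      rw [Sym2.eq_iff]
      rcases h1 with h1 | h1 <;> rcases h2 with h2 | h2
      · exact absurd (h1.trans h2.symm) hne
      · exact Or.inl ⟨h1, h2⟩
      · exact Or.inr ⟨h1, h2⟩
      · exact absurd (h1.trans h2.symm) hne

end Bridge

section Count
variable {V : Type*} [Fintype V] [DecidableEq V]

lemma shallow_adj_count (G : SimpleGraph V) [DecidableRel G.Adj] (ν : ℕ)
    (e : Sym2 V)
    (he : e ∈ G.edgeFinset.filter (fun e => ∀ v ∈ e, G.degree v < 2 * ν + 3)) :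
    (((G.edgeFinset.filter (fun e => ∀ v ∈ e, G.degree v < 2 * ν + 3)).erase e).filter
      (fun f => ¬ Disjoint (Finset.univ.filter (· ∈ e)) (Finset.univ.filter (· ∈ f)))).card
      ≤ 4 * ν + 4 := by
  classical
  set Sh := G.edgeFinset.filter (fun e => ∀ v ∈ e, G.degree v < 2 * ν + 3) with hSh
  have heE : e ∈ G.edgeFinset := (Finset.mem_filter.mp he).1
  have heS : ∀ v ∈ e, G.degree v < 2 * ν + 3 := (Finset.mem_filter.mp he).2
  have hsub : ((Sh.erase e).filter
      (fun f => ¬ Disjoint (Finset.univ.filter (· ∈ e)) (Finset.univ.filter (· ∈ f))))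
      ⊆ (Finset.univ.filter (· ∈ e)).biUnion (fun v => G.incidenceFinset v) := by
    intro f hf
    rw [Finset.mem_filter] at hf
    obtain ⟨hf1, hf2⟩ := hf
    obtain ⟨v, hv1, hv2⟩ := Finset.not_disjoint_iff.mp hf2
    refine Finset.mem_biUnion.mpr ⟨v, hv1, ?_⟩
    rw [SimpleGraph.mem_incidenceFinset]
    have hfE : f ∈ G.edgeFinset := (Finset.mem_filter.mp (Finset.mem_of_mem_erase hf1)).1
    exact ⟨SimpleGraph.mem_edgeFinset.mp hfE, (Finset.mem_filter.mp hv2).2⟩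
  calc (((Sh.erase e)).filter
      (fun f => ¬ Disjoint (Finset.univ.filter (· ∈ e)) (Finset.univ.filter (· ∈ f)))).card
      ≤ ((Finset.univ.filter (· ∈ e)).biUnion (fun v => G.incidenceFinset v)).card :=
        Finset.card_le_card hsub
    _ ≤ ∑ v ∈ Finset.univ.filter (· ∈ e), (G.incidenceFinset v).card :=
        Finset.card_biUnion_le
    _ ≤ ∑ v ∈ Finset.univ.filter (· ∈ e), (2 * ν + 2) := by
        refine Finset.sum_le_sum fun v hv => ?_
        rw [SimpleGraph.card_incidenceFinset_eq_degree]
        have := heS v (Finset.mem_filter.mp hv).2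
        omega
    _ = 2 * (2 * ν + 2) := by
        rw [Finset.sum_const, card_Te G e heE]
        simp [mul_comm]
    _ ≤ 4 * ν + 4 := by omega

end Count


set_option maxHeartbeats 1000000 in
theorem stmt_14 {V : Type*} [Fintype V] [DecidableEq V]
    (ν : ℕ) (hν : 1 ≤ ν)
    (G : SimpleGraph V) [DecidableRel G.Adj]
    (ε p : ℝ) (hε0 : 0 < ε) (hε1 : ε ≤ 1)
    (hpdef : p = 8 * ε⁻¹ ^ 2 * (Fintype.card V : ℝ) ^ (-(1 : ℝ) / 5))
    (hp1 : p ≤ 1)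
    (hνp : (2 * (ν : ℝ) + 3) * p ≤ 1)
    (hn : Real.exp (-(8 * (Fintype.card V : ℝ) ^ ((1 : ℝ) / 5)) / 3) ≤ 1 / 10) :
    let n : ℕ := Fintype.card V
    let h : ℕ := (Finset.univ.filter (fun v : V => 2 * ν + 3 ≤ G.degree v)).card
    let s : ℕ := (G.edgeFinset.filter (fun e => ∀ v ∈ e, G.degree v < 2 * ν + 3)).card
    let μ : Measure (V → Bool) :=
      Measure.pi (fun _ => (PMF.bernoulli (Real.toNNReal p)
        (Real.toNNReal_le_one.mpr hp1)).toMeasure)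
    (4 / 5 : ℝ≥0∞) ≤ μ {ω : V → Bool |
      |max (((Finset.univ.filter
              (fun v : V => 2 * ν + 3 ≤ G.degree v ∧ ω v = true)).card : ℝ) / p)
           (((G.edgeFinset.filter
              (fun e => (∀ v ∈ e, G.degree v < 2 * ν + 3) ∧
                ∀ v ∈ e, ω v = true)).card : ℝ) / p ^ 2)
        - max (s : ℝ) (h : ℝ)| ≤
      ε * max ((n : ℝ) ^ ((2 : ℝ) / 5)) (max (s : ℝ) (h : ℝ))} := by
  classical
  intro n h s μ
  -- basic numerics
  set N : ℝ := (Fintype.card V : ℝ) with hN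
  have hn1 : (1 : ℕ) ≤ Fintype.card V := by
    rcases Nat.eq_zero_or_pos (Fintype.card V) with hc | hc
    · exfalso
      have hN0 : N = 0 := by rw [hN, hc]; norm_num
      rw [hN0, Real.zero_rpow (by norm_num : ((1:ℝ)/5) ≠ 0)] at hn
      norm_num [Real.exp_zero] at hn
    · exact hc
  have hN1 : (1 : ℝ) ≤ N := by rw [hN]; exact_mod_cast hn1
  have hN0 : (0 : ℝ) < N := by linarith
  set a : ℝ := N ^ ((1 : ℝ) / 5) with ha
  have ha0 : 0 < a := Real.rpow_pos_of_pos hN0 _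
  have hNa : N ^ (-(1 : ℝ) / 5) = a⁻¹ := by
    rw [show (-(1 : ℝ) / 5) = -((1:ℝ)/5) by norm_num, Real.rpow_neg (le_of_lt hN0)]
  have hεinv : (1 : ℝ) ≤ ε⁻¹ ^ 2 := by
    have h1 : (1 : ℝ) ≤ ε⁻¹ := (one_le_inv_iff₀.mpr ⟨hε0, hε1⟩ : _)
    calc (1:ℝ) = 1 ^ 2 := by norm_num
      _ ≤ ε⁻¹ ^ 2 := by gcongr
  have hp0 : 0 < p := by
    rw [hpdef, hNa]
    positivity
  have ha8 : 8 ≤ a := by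
    have h1 : 8 * a⁻¹ ≤ 8 * ε⁻¹ ^ 2 * a⁻¹ :=
      mul_le_mul_of_nonneg_right (by linarith only [hεinv]) (inv_nonneg.mpr ha0.le)
    rw [hpdef, hNa] at hp1
    have h2 : 8 * a⁻¹ ≤ 1 := le_trans h1 hp1
    have h3 : a⁻¹ * a = 1 := inv_mul_cancel₀ (ne_of_gt ha0)
    calc (8:ℝ) = 8 * a⁻¹ * a := by rw [mul_assoc, h3, mul_one]
      _ ≤ 1 * a := mul_le_mul_of_nonneg_right h2 ha0.le
      _ = a := one_mul a
  have ha2 : (N : ℝ) ^ ((2 : ℝ) / 5) = a ^ 2 := by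
    rw [show ((2:ℝ)/5) = (1/5) * (2:ℕ) by norm_num, Real.rpow_mul (le_of_lt hN0),
      Real.rpow_natCast]
    -- finsets and random variables
  set H : Finset V := Finset.univ.filter (fun v : V => 2 * ν + 3 ≤ G.degree v) with hH
  set Sh : Finset (Sym2 V) :=
    G.edgeFinset.filter (fun e => ∀ v ∈ e, G.degree v < 2 * ν + 3) with hSh
  have hhH : h = H.card := rfl
  have hsS : s = Sh.card := rfl
  set Te : Sym2 V → Finset V := fun e => Finset.univ.filter (· ∈ e) with hTe
  set X : (V → Bool) → ℝ := fun ω => ∑ v ∈ H, indT {v} ω with hX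
  set Y : (V → Bool) → ℝ := fun ω => ∑ e ∈ Sh, indT (Te e) ω with hY
  set M : ℝ := max ((n : ℝ) ^ ((2 : ℝ) / 5)) (max (s : ℝ) (h : ℝ)) with hM
  have hnN : (n : ℝ) = N := rfl
  have hMa : a ^ 2 ≤ M := by
    rw [hM, ← ha2, hnN]; exact le_max_left _ _
  have hMh : (H.card : ℝ) ≤ M := by
    rw [hM, ← hhH]
    exact le_trans (le_max_right _ _) (le_max_right _ _)
  have hMs : (Sh.card : ℝ) ≤ M := by
    rw [hM, ← hsS]
    exact le_trans (le_max_left _ _) (le_max_right _ _)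
  have hM0 : 0 < M := lt_of_lt_of_le (by positivity) hMa
  clear_value M a N
  -- counting identities
  have hXcard : ∀ ω : V → Bool,
      ((Finset.univ.filter (fun v : V => 2 * ν + 3 ≤ G.degree v ∧ ω v = true)).card : ℝ)
        = X ω := by
    intro ω
    have h1 : Finset.univ.filter (fun v : V => 2 * ν + 3 ≤ G.degree v ∧ ω v = true)
        = H.filter (fun v => ω v = true) := by
      rw [hH, Finset.filter_filter]
    rw [h1, Finset.card_filter, hX]
    push_cast
    refine Finset.sum_congr rfl fun v _ => ?_
    simp [indT]
  have hYcard : ∀ ω : V → Bool,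
      ((G.edgeFinset.filter (fun e => (∀ v ∈ e, G.degree v < 2 * ν + 3) ∧
          ∀ v ∈ e, ω v = true)).card : ℝ) = Y ω := by
    intro ω
    have h1 : G.edgeFinset.filter (fun e => (∀ v ∈ e, G.degree v < 2 * ν + 3) ∧
          ∀ v ∈ e, ω v = true)
        = Sh.filter (fun e => ∀ v ∈ Te e, ω v = true) := by
      rw [hSh, Finset.filter_filter]
      refine Finset.filter_congr fun e _ => ?_
      simp [hTe]
    rw [h1, Finset.card_filter, hY]
    push_cast
    refine Finset.sum_congr rfl fun e _ => ?_
    simp [indT]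
  -- variance bounds
  have hp0' : (0:ℝ) ≤ p := le_of_lt hp0
  have hvarX := varX_bound p hp0' hp1 H
  have hvarY := varY_bound p hp0' hp1 Sh Te (4 * ν + 4)
    (fun e he => card_Te G e (Finset.mem_filter.mp he).1)
    (fun e he f hf heq =>
      Te_inj G e f (Finset.mem_filter.mp he).1 (Finset.mem_filter.mp hf).1 heq)
    (fun e he => shallow_adj_count G ν e he)
  have hvarY' : ∑ ω : V → Bool, qw p ω * (Y ω - Sh.card * p ^ 2) ^ 2
      ≤ 3 * Sh.card * p ^ 2 := by
    have hK : ((4 * ν + 4 : ℕ) : ℝ) * p ≤ 2 := by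
      push_cast
      linarith only [hνp, hp0']
    have hcs : (0:ℝ) ≤ (Sh.card : ℝ) := Nat.cast_nonneg _
    refine le_trans hvarY ?_
    have : (Sh.card : ℝ) * (4 * ν + 4 : ℕ) * p ^ 3 ≤ 2 * Sh.card * p ^ 2 := by
      have hpp : (0:ℝ) ≤ p ^ 2 := sq_nonneg p
      calc (Sh.card : ℝ) * (4 * ν + 4 : ℕ) * p ^ 3
          = (((4 * ν + 4 : ℕ) : ℝ) * p) * (Sh.card * p ^ 2) := by ring
        _ ≤ 2 * (Sh.card * p ^ 2) := by
            refine mul_le_mul_of_nonneg_right hK (by positivity)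
        _ = 2 * Sh.card * p ^ 2 := by ring
    linarith
  -- numeric key facts
  have hεε : ε * ε⁻¹ = 1 := mul_inv_cancel₀ (ne_of_gt hε0)
  have haa : a⁻¹ * a = 1 := inv_mul_cancel₀ (ne_of_gt ha0)
  have hεp : ε ^ 2 * p = 8 * a⁻¹ := by
    rw [hpdef, hNa]
    calc ε ^ 2 * (8 * ε⁻¹ ^ 2 * a⁻¹) = 8 * a⁻¹ * (ε * ε⁻¹) ^ 2 := by ring
      _ = 8 * a⁻¹ := by rw [hεε]; ring
  have h64 : 64 ≤ ε ^ 2 * p * M := by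
    have e1 : ε ^ 2 * p * M = 8 * a⁻¹ * M := by rw [hεp]
    have e2 : 8 * a⁻¹ * a ^ 2 = 8 * a := by
      calc 8 * a⁻¹ * a ^ 2 = 8 * a * (a⁻¹ * a) := by ring
        _ = 8 * a := by rw [haa]; ring
    have e3 : 8 * a⁻¹ * a ^ 2 ≤ 8 * a⁻¹ * M :=
      mul_le_mul_of_nonneg_left hMa
        (mul_nonneg (by norm_num) (inv_nonneg.mpr ha0.le))
    linarith
  have hεp2 : ε ^ 2 * p ^ 2 * M = 64 * ε⁻¹ ^ 2 * (a⁻¹ ^ 2 * M) := by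
    rw [hpdef, hNa]
    calc ε ^ 2 * (8 * ε⁻¹ ^ 2 * a⁻¹) ^ 2 * M
        = 64 * ε⁻¹ ^ 2 * (a⁻¹ ^ 2 * M) * ((ε * ε⁻¹) ^ 2) := by ring
      _ = 64 * ε⁻¹ ^ 2 * (a⁻¹ ^ 2 * M) := by rw [hεε]; ring
  have t1 : (1:ℝ) ≤ a⁻¹ ^ 2 * M := by
    have e4 : a⁻¹ ^ 2 * a ^ 2 = 1 := by
      calc a⁻¹ ^ 2 * a ^ 2 = (a⁻¹ * a) ^ 2 := by ring
        _ = 1 := by rw [haa]; ring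
    have e5 : a⁻¹ ^ 2 * a ^ 2 ≤ a⁻¹ ^ 2 * M :=
      mul_le_mul_of_nonneg_left hMa (by positivity)
    linarith
  have h64' : (64:ℝ) ≤ ε ^ 2 * p ^ 2 * M := by
    have t2 : (1:ℝ) ≤ ε⁻¹ ^ 2 * (a⁻¹ ^ 2 * M) := by
      calc (1:ℝ) = 1 * 1 := by ring
        _ ≤ ε⁻¹ ^ 2 * (a⁻¹ ^ 2 * M) :=
            mul_le_mul hεinv t1 zero_le_one (le_trans zero_le_one hεinv)
    calc (64:ℝ) = 64 * 1 := by ring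
      _ ≤ 64 * (ε⁻¹ ^ 2 * (a⁻¹ ^ 2 * M)) := mul_le_mul_of_nonneg_left t2 (by norm_num)
      _ = ε ^ 2 * p ^ 2 * M := by rw [hεp2]; ring
  -- Chebyshev for X
  have hchebX := chebyshev (qw p) (fun ω => X ω / p) (qw_nonneg hp0' hp1)
      ((h : ℕ) : ℝ) (ε * M) (mul_pos hε0 hM0)
  have hXsum : ∑ ω : V → Bool, qw p ω * ((fun ω => X ω / p) ω - ((h:ℕ) : ℝ)) ^ 2
      = (∑ ω : V → Bool, qw p ω * (X ω - H.card * p) ^ 2) / p ^ 2 := by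
    rw [Finset.sum_div]
    refine Finset.sum_congr rfl fun ω _ => ?_
    have : (fun ω => X ω / p) ω - ((h:ℕ) : ℝ) = (X ω - H.card * p) / p := by
      rw [hhH, sub_div, mul_div_cancel_right₀ _ (ne_of_gt hp0)]
    rw [this, div_pow, mul_div_assoc]
  have hB1 : ∑ ω ∈ Finset.univ.filter (fun ω => ε * M < |(fun ω => X ω / p) ω - ((h:ℕ):ℝ)|),
      qw p ω ≤ 1 / 10 := by
    refine le_trans hchebX ?_
    rw [hXsum]
    have step1 : (∑ ω : V → Bool, qw p ω * (X ω - H.card * p) ^ 2) / p ^ 2 / (ε * M) ^ 2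
        ≤ (H.card * p) / p ^ 2 / (ε * M) ^ 2 := by
      gcongr
    refine le_trans step1 ?_
    have heq : ((H.card : ℝ) * p) / p ^ 2 / (ε * M) ^ 2
        = (H.card : ℝ) / (p * ε ^ 2 * M ^ 2) := by
      rw [div_div, show p ^ 2 * (ε * M) ^ 2 = p * (p * ε ^ 2 * M ^ 2) by ring,
        show (H.card : ℝ) * p = p * (H.card : ℝ) by ring]
      exact mul_div_mul_left _ _ (ne_of_gt hp0)
    rw [heq, div_le_div_iff₀
      (mul_pos (mul_pos hp0 (pow_pos hε0 2)) (pow_pos hM0 2)) (by norm_num)]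
    have hmul := mul_le_mul_of_nonneg_right h64 (le_of_lt hM0)
    linarith only [hmul, hMh, hM0]
  -- Chebyshev for Y
  have hchebY := chebyshev (qw p) (fun ω => Y ω / p ^ 2) (qw_nonneg hp0' hp1)
      ((s : ℕ) : ℝ) (ε * M) (mul_pos hε0 hM0)
  have hYsum : ∑ ω : V → Bool, qw p ω * ((fun ω => Y ω / p ^ 2) ω - ((s:ℕ) : ℝ)) ^ 2
      = (∑ ω : V → Bool, qw p ω * (Y ω - Sh.card * p ^ 2) ^ 2) / (p ^ 2) ^ 2 := by
    rw [Finset.sum_div]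
    refine Finset.sum_congr rfl fun ω _ => ?_
    have : (fun ω => Y ω / p ^ 2) ω - ((s:ℕ) : ℝ) = (Y ω - Sh.card * p ^ 2) / p ^ 2 := by
      rw [hsS, sub_div, mul_div_cancel_right₀ _ (ne_of_gt (pow_pos hp0 2))]
    rw [this, div_pow, mul_div_assoc]
  have hB2 : ∑ ω ∈ Finset.univ.filter
      (fun ω => ε * M < |(fun ω => Y ω / p ^ 2) ω - ((s:ℕ):ℝ)|),
      qw p ω ≤ 1 / 10 := by
    refine le_trans hchebY ?_
    rw [hYsum]
    have step1 : (∑ ω : V → Bool, qw p ω * (Y ω - Sh.card * p ^ 2) ^ 2) / (p ^ 2) ^ 2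
          / (ε * M) ^ 2
        ≤ (3 * Sh.card * p ^ 2) / (p ^ 2) ^ 2 / (ε * M) ^ 2 := by
      gcongr
    refine le_trans step1 ?_
    have heq : (3 * (Sh.card : ℝ) * p ^ 2) / (p ^ 2) ^ 2 / (ε * M) ^ 2
        = 3 * (Sh.card : ℝ) / (p ^ 2 * ε ^ 2 * M ^ 2) := by
      rw [div_div, show (p ^ 2) ^ 2 * (ε * M) ^ 2 = p ^ 2 * (p ^ 2 * ε ^ 2 * M ^ 2) by ring,
        show 3 * (Sh.card : ℝ) * p ^ 2 = p ^ 2 * (3 * (Sh.card : ℝ)) by ring]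
      exact mul_div_mul_left _ _ (ne_of_gt (pow_pos hp0 2))
    rw [heq, div_le_div_iff₀
      (mul_pos (mul_pos (pow_pos hp0 2) (pow_pos hε0 2)) (pow_pos hM0 2)) (by norm_num)]
    have hmul := mul_le_mul_of_nonneg_right h64' (le_of_lt hM0)
    linarith only [hmul, hMs, hM0]
  -- assembling
  set Bad1 : Finset (V → Bool) :=
    Finset.univ.filter (fun ω => ε * M < |(fun ω => X ω / p) ω - ((h:ℕ):ℝ)|) with hBad1
  set Bad2 : Finset (V → Bool) :=
    Finset.univ.filter (fun ω => ε * M < |(fun ω => Y ω / p ^ 2) ω - ((s:ℕ):ℝ)|) with hBad2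
  have key : ∀ (S : Set (V → Bool)),
      (∀ ω : V → Bool, ω ∉ Bad1 → ω ∉ Bad2 → ω ∈ S) → (4 / 5 : ℝ≥0∞) ≤ μ S := by
    intro S hS
    have hsub : Finset.univ \ (Bad1 ∪ Bad2) ⊆ Finset.univ.filter (· ∈ S) := by
      intro ω hω
      rw [Finset.mem_sdiff, Finset.mem_union] at hω
      push_neg at hω
      exact Finset.mem_filter.mpr ⟨Finset.mem_univ _, hS ω hω.2.1 hω.2.2⟩
    have htot := sum_qw (V := V) p
    have hunion : ∑ ω ∈ Bad1 ∪ Bad2, qw p ω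
        ≤ (∑ ω ∈ Bad1, qw p ω) + (∑ ω ∈ Bad2, qw p ω) := by
      have hui := Finset.sum_union_inter (s₁ := Bad1) (s₂ := Bad2) (f := qw p)
      have hnn : 0 ≤ ∑ ω ∈ Bad1 ∩ Bad2, qw p ω :=
        Finset.sum_nonneg fun ω _ => qw_nonneg hp0' hp1 ω
      linarith
    have hsdiff : ∑ ω ∈ Finset.univ \ (Bad1 ∪ Bad2), qw p ω
        = 1 - ∑ ω ∈ Bad1 ∪ Bad2, qw p ω := by
      rw [Finset.sum_sdiff_eq_sub (Finset.subset_univ _), htot]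
    have hgoodsum : (4 / 5 : ℝ) ≤ ∑ ω ∈ Finset.univ.filter (· ∈ S), qw p ω := by
      have hle := Finset.sum_le_sum_of_subset_of_nonneg hsub
        (fun ω _ _ => qw_nonneg hp0' hp1 ω)
      rw [hsdiff] at hle
      linarith
    calc (4 / 5 : ℝ≥0∞) = ENNReal.ofReal ((4:ℝ) / 5) := by
          rw [ENNReal.ofReal_div_of_pos (by norm_num)]
          norm_num
      _ ≤ ENNReal.ofReal (∑ ω ∈ Finset.univ.filter (· ∈ S), qw p ω) :=
          ENNReal.ofReal_le_ofReal hgoodsum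
      _ = μ S := (measure_bridge p hp0' hp1 S).symm
  refine key _ ?_
  intro ω hω1 hω2
  rw [hBad1, Finset.mem_filter] at hω1
  rw [hBad2, Finset.mem_filter] at hω2
  push_neg at hω1 hω2
  have h1 : |X ω / p - ((h:ℕ):ℝ)| ≤ ε * M := hω1 (Finset.mem_univ ω)
  have h2 : |Y ω / p ^ 2 - ((s:ℕ):ℝ)| ≤ ε * M := hω2 (Finset.mem_univ ω)
  simp only [Set.mem_setOf_eq]
  rw [hXcard ω, hYcard ω]
  calc |max (X ω / p) (Y ω / p ^ 2) - max ((s:ℕ):ℝ) ((h:ℕ):ℝ)|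
      = |max (X ω / p) (Y ω / p ^ 2) - max ((h:ℕ):ℝ) ((s:ℕ):ℝ)| := by rw [max_comm ((s:ℕ):ℝ)]
    _ ≤ max |X ω / p - ((h:ℕ):ℝ)| |Y ω / p ^ 2 - ((s:ℕ):ℝ)| :=
        abs_max_sub_max_le_max _ _ _ _
    _ ≤ ε * M := max_le h1 h2
end

section
/- Let n ≥ 1 and let S, T ⊆ [n]. Let G be the simple graph on the 4n distinct vertices {a_i, b_i, c_i, d_i : i ∈ [n]} whose edge set is {a_i b_i : i ∈ [n]} ∪ {a_i c_i : i ∈ S} ∪ {b_i d_i : i ∈ T}. Then G contains an induced subgraph isomorphic to the path on 4 vertices if and only if S ∩ T ≠ ∅. -/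
set_option maxRecDepth 100000 in
set_option synthInstance.maxSize 4000 in
set_option synthInstance.maxHeartbeats 1000000 in
lemma aux_stmt17 : ∀ (s t : Bool) (v : Fin 4 → Fin 4), (∀ a b, v a = v b → a = b) →
    ((v 0 = 0 ∧ v 1 = 1) ∨ (v 0 = 1 ∧ v 1 = 0) ∨
      (s = true ∧ ((v 0 = 0 ∧ v 1 = 2) ∨ (v 0 = 2 ∧ v 1 = 0))) ∨
      (t = true ∧ ((v 0 = 1 ∧ v 1 = 3) ∨ (v 0 = 3 ∧ v 1 = 1)))) →
    ((v 1 = 0 ∧ v 2 = 1) ∨ (v 1 = 1 ∧ v 2 = 0) ∨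
      (s = true ∧ ((v 1 = 0 ∧ v 2 = 2) ∨ (v 1 = 2 ∧ v 2 = 0))) ∨
      (t = true ∧ ((v 1 = 1 ∧ v 2 = 3) ∨ (v 1 = 3 ∧ v 2 = 1)))) →
    ((v 2 = 0 ∧ v 3 = 1) ∨ (v 2 = 1 ∧ v 3 = 0) ∨
      (s = true ∧ ((v 2 = 0 ∧ v 3 = 2) ∨ (v 2 = 2 ∧ v 3 = 0))) ∨
      (t = true ∧ ((v 2 = 1 ∧ v 3 = 3) ∨ (v 2 = 3 ∧ v 3 = 1)))) →
    s = true ∧ t = true := by decide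

theorem stmt_17 (n : ℕ) (hn : 1 ≤ n) (S T : Finset (Fin n)) :
    let G : SimpleGraph (Fin n × Fin 4) :=
      SimpleGraph.fromEdgeSet
        ({e | ∃ i : Fin n, e = s((i, 0), (i, 1))} ∪
          {e | ∃ i ∈ S, e = s((i, 0), (i, 2))} ∪
          {e | ∃ i ∈ T, e = s((i, 1), (i, 3))})
    Nonempty (SimpleGraph.pathGraph 4 ↪g G) ↔ (S ∩ T).Nonempty := by
  intro G
  have hadj : ∀ x y : Fin n × Fin 4, G.Adj x y ↔
      x.1 = y.1 ∧ ((x.2 = 0 ∧ y.2 = 1) ∨ (x.2 = 1 ∧ y.2 = 0) ∨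
        (x.1 ∈ S ∧ ((x.2 = 0 ∧ y.2 = 2) ∨ (x.2 = 2 ∧ y.2 = 0))) ∨
        (x.1 ∈ T ∧ ((x.2 = 1 ∧ y.2 = 3) ∨ (x.2 = 3 ∧ y.2 = 1)))) := by
    intro ⟨x1, x2⟩ ⟨y1, y2⟩
    simp only [G, SimpleGraph.fromEdgeSet_adj, Set.mem_union, Set.mem_setOf_eq,
      Sym2.eq, Sym2.rel_iff', Prod.mk.injEq, Prod.swap_prod_mk, ne_eq, not_and]
    constructor
    · rintro ⟨(⟨i, h⟩ | ⟨i, hi, h⟩ | ⟨i, hi, h⟩), hne⟩ <;> aesop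
    · rintro ⟨rfl, h⟩
      rcases h with ⟨rfl, rfl⟩ | ⟨rfl, rfl⟩ | ⟨hi, ⟨rfl, rfl⟩ | ⟨rfl, rfl⟩⟩ | ⟨hi, ⟨rfl, rfl⟩ | ⟨rfl, rfl⟩⟩ <;>
        aesop
  constructor
  · rintro ⟨f⟩
    have hmap : ∀ u v : Fin 4, G.Adj (f u) (f v) ↔ (SimpleGraph.pathGraph 4).Adj u v :=
      fun u v => f.map_adj_iff
    have h01 := (hmap 0 1).mpr (by rw [SimpleGraph.pathGraph_adj]; decide)
    have h12 := (hmap 1 2).mpr (by rw [SimpleGraph.pathGraph_adj]; decide)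
    have h23 := (hmap 2 3).mpr (by rw [SimpleGraph.pathGraph_adj]; decide)
    rw [hadj] at h01 h12 h23
    have e01 : (f 0).1 = (f 1).1 := h01.1
    have e12 : (f 1).1 = (f 2).1 := h12.1
    have hfst : ∀ k : Fin 4, (f k).1 = (f 0).1 := by
      intro k
      fin_cases k
      · rfl
      · exact e01.symm
      · exact (e01.trans e12).symm
      · exact (e01.trans (e12.trans h23.1)).symm
    have hv : Function.Injective (fun k : Fin 4 => (f k).2) := by
      intro a b hab
      apply f.injective
      exact Prod.ext (by rw [hfst a, hfst b]) hab
    rw [show (f 1).1 = (f 0).1 from hfst 1] at h12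
    rw [show (f 2).1 = (f 0).1 from hfst 2] at h23
    have key := aux_stmt17 (decide ((f 0).1 ∈ S)) (decide ((f 0).1 ∈ T))
      (fun k => (f k).2) (fun a b h => hv h)
      (by simpa [decide_eq_true_eq] using h01.2)
      (by simpa [decide_eq_true_eq] using h12.2)
      (by simpa [decide_eq_true_eq] using h23.2)
    simp only [decide_eq_true_eq] at key
    exact ⟨(f 0).1, Finset.mem_inter.mpr key⟩
  · rintro ⟨i, hi⟩
    rw [Finset.mem_inter] at hi
    refine ⟨⟨⟨![(i, 2), (i, 0), (i, 1), (i, 3)], ?_⟩, ?_⟩⟩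
    · intro u v huv
      fin_cases u <;> fin_cases v <;> simp_all
    · intro u v
      change G.Adj (![(i, 2), (i, 0), (i, 1), (i, 3)] u) (![(i, 2), (i, 0), (i, 1), (i, 3)] v) ↔ _
      fin_cases u <;> fin_cases v <;>
        simp [hadj, SimpleGraph.pathGraph_adj, hi.1, hi.2] <;> decide
end

section
/- Let ν ≥ 1 be an integer and let G = (V, E) be a finite simple graph whose arboricity is at most ν, i.e., whose edge set can be partitioned into at most ν forests. Call a vertex heavy if its degree is at least 2ν + 3, and call an edge shallow if neither of its endpoints is heavy; let h be the number of heavy vertices and s the number of shallow edges. Then max{h, s}/(2.5ν + 4.5) ≤ matching(G) ≤ 2·max{h, s}. -/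
set_option linter.unusedSectionVars false
set_option linter.unusedVariables false
set_option maxHeartbeats 1600000


open scoped Classical

namespace MatchAux

variable {V : Type*} [Fintype V] [DecidableEq V]

/-- matching as involution -/
def InvM (K : SimpleGraph V) (g : Equiv.Perm V) : Prop :=
  (∀ x, g (g x) = x) ∧ ∀ x, g x ≠ x → K.Adj x (g x)

noncomputable def isupp (g : Equiv.Perm V) : Finset V :=
  Finset.univ.filter (fun x => g x ≠ x)



lemma matchset_subset_edgeFinset {G : SimpleGraph V} [DecidableRel G.Adj] {M : Finset (Sym2 V)}
    (h : IsMatchingSet G M) : M ⊆ G.edgeFinset := by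
  intro e he
  rw [SimpleGraph.mem_edgeFinset]
  exact h.1 he

lemma matchNum_bddAbove (G : SimpleGraph V) :
    BddAbove {n | ∃ M : Finset (Sym2 V), IsMatchingSet G M ∧ M.card = n} := by
  refine ⟨Fintype.card (Sym2 V), ?_⟩
  rintro n ⟨M, hM, rfl⟩
  exact Finset.card_le_univ M

lemma matchNum_spec (G : SimpleGraph V) :
    ∃ M : Finset (Sym2 V), IsMatchingSet G M ∧ M.card = matchNum G := by
  have hne : {n | ∃ M : Finset (Sym2 V), IsMatchingSet G M ∧ M.card = n}.Nonempty :=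
    ⟨0, ∅, ⟨by simp, by simp⟩, rfl⟩
  have := Nat.sSup_mem hne (matchNum_bddAbove G)
  exact this

lemma le_matchNum {G : SimpleGraph V} {M : Finset (Sym2 V)}
    (h : IsMatchingSet G M) : M.card ≤ matchNum G :=
  le_csSup (matchNum_bddAbove G) ⟨M, h, rfl⟩






lemma upper_bound {G : SimpleGraph V} [DecidableRel G.Adj] (ν : ℕ) {M : Finset (Sym2 V)}
    (hM : IsMatchingSet G M) :
    M.card ≤ (Finset.univ.filter (fun v : V => 2 * ν + 3 ≤ G.degree v)).card
      + (G.edgeFinset.filter (fun e => ∀ v ∈ e, G.degree v < 2 * ν + 3)).card := by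
  classical
  have hsplit := Finset.card_filter_add_card_filter_not
    (s := M) (p := fun e => ∀ v ∈ e, G.degree v < 2 * ν + 3)
  have h1 : (M.filter (fun e => ∀ v ∈ e, G.degree v < 2 * ν + 3)).card ≤
      (G.edgeFinset.filter (fun e => ∀ v ∈ e, G.degree v < 2 * ν + 3)).card := by
    apply Finset.card_le_card
    intro e he
    rw [Finset.mem_filter] at he ⊢
    exact ⟨(matchset_subset_edgeFinset hM) he.1, he.2⟩
  have h2 : (M.filter (fun e => ¬ ∀ v ∈ e, G.degree v < 2 * ν + 3)).card ≤
      (Finset.univ.filter (fun v : V => 2 * ν + 3 ≤ G.degree v)).card := by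
    rcases Finset.eq_empty_or_nonempty
      (M.filter (fun e => ¬ ∀ v ∈ e, G.degree v < 2 * ν + 3)) with hemp | hne
    · rw [hemp]; simp
    · obtain ⟨e0, he0⟩ := hne
      have : Nonempty V := ⟨e0.out.1⟩
      have htot : ∀ e : Sym2 V, ∃ v : V,
          (∃ w, w ∈ e ∧ 2 * ν + 3 ≤ G.degree w) → (v ∈ e ∧ 2 * ν + 3 ≤ G.degree v) := by
        intro e
        by_cases h : ∃ w, w ∈ e ∧ 2 * ν + 3 ≤ G.degree w
        · exact ⟨h.choose, fun _ => h.choose_spec⟩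
        · exact ⟨Classical.arbitrary V, fun hh => absurd hh h⟩
      choose f hf using htot
      have hfspec : ∀ e ∈ M.filter (fun e => ¬ ∀ v ∈ e, G.degree v < 2 * ν + 3),
          f e ∈ e ∧ 2 * ν + 3 ≤ G.degree (f e) := by
        intro e he
        rw [Finset.mem_filter] at he
        apply hf
        have := he.2
        push_neg at this
        obtain ⟨v, hv, hd⟩ := this
        exact ⟨v, hv, hd⟩
      apply Finset.card_le_card_of_injOn f
      · intro e he
        simp only [Finset.mem_coe, Finset.mem_filter, Finset.mem_univ, true_and]
        exact (hfspec e he).2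
      · intro e he e' he' hfe
        by_contra hne'
        have hemem : e ∈ M := (Finset.mem_filter.mp he).1
        have he'mem : e' ∈ M := (Finset.mem_filter.mp he').1
        exact hM.2 e hemem e' he'mem hne' (f e) (hfspec e he).1 (hfe ▸ (hfspec e' he').1)
  omega





open SimpleGraph Walk

lemma exists_path_of_min_degree_two (A : SimpleGraph V) (t : Finset V) (ht : t.Nonempty)
    (hdeg : ∀ v ∈ t, 2 ≤ (t ∩ A.neighborFinset v).card) (hA : A.IsAcyclic) :
    ∀ n : ℕ, ∃ (u v : V) (p : A.Walk u v), p.IsPath ∧ (∀ x ∈ p.support, x ∈ t) ∧ p.length = n := by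
  intro n
  induction n with
  | zero =>
    obtain ⟨v0, hv0⟩ := ht
    exact ⟨v0, v0, Walk.nil, by simp, by simp [hv0], rfl⟩
  | succ n ih =>
    obtain ⟨u, v, p, hp, hsup, hlen⟩ := ih
    have hut : u ∈ t := hsup u p.start_mem_support
    by_cases hout : ∃ y ∈ t ∩ A.neighborFinset u, y ∉ p.support
    · obtain ⟨y, hyN, hyns⟩ := hout
      rw [Finset.mem_inter, SimpleGraph.mem_neighborFinset] at hyN
      refine ⟨y, v, Walk.cons hyN.2.symm p, ?_, ?_, ?_⟩
      · rw [Walk.cons_isPath_iff]; exact ⟨hp, hyns⟩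
      · intro x hx
        rw [Walk.support_cons, List.mem_cons] at hx
        rcases hx with rfl | hx
        · exact hyN.1
        · exact hsup x hx
      · simp [hlen]
    · exfalso
      push_neg at hout
      cases p with
      | nil =>
        have h2 := hdeg u hut
        obtain ⟨y, hy⟩ := Finset.card_pos.mp (by omega : 0 < (t ∩ A.neighborFinset u).card)
        have hys := hout y hy
        simp only [Walk.support_nil, List.mem_singleton] at hys
        rw [Finset.mem_inter, SimpleGraph.mem_neighborFinset] at hy
        exact A.irrefl (hys ▸ hy.2)
      | @cons _ w _ hadj q =>
        have h2 := hdeg u hut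
        obtain ⟨y1, hy1, y2, hy2, hne⟩ := Finset.one_lt_card.mp
          (lt_of_lt_of_le one_lt_two h2)
        have hkey : ∃ y ∈ t ∩ A.neighborFinset u, y ≠ w := by
          by_cases h1 : y1 = w
          · exact ⟨y2, hy2, by rw [← h1]; exact fun h => hne h.symm⟩
          · exact ⟨y1, hy1, h1⟩
        obtain ⟨y, hyN, hyw⟩ := hkey
        rw [Finset.mem_inter, SimpleGraph.mem_neighborFinset] at hyN
        have hadjuy : A.Adj u y := hyN.2
        have hys := hout y (by rw [Finset.mem_inter, SimpleGraph.mem_neighborFinset]; exact hyN)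
        rw [Walk.cons_isPath_iff] at hp
        have hyq : y ∈ q.support := by
          rw [Walk.support_cons, List.mem_cons] at hys
          rcases hys with rfl | h
          · exact absurd hadjuy (A.irrefl)
          · exact h
        -- build the cycle
        set r : A.Walk w y := q.takeUntil y hyq with hr
        have hrpath : r.IsPath := hp.1.takeUntil hyq
        have hcpath : (Walk.cons hadj r).IsPath := by
          rw [Walk.cons_isPath_iff]
          exact ⟨hrpath, fun hus => hp.2 (q.support_takeUntil_subset hyq hus)⟩
        have hcyc : ((Walk.cons hadj r).reverse.cons hadjuy).IsCycle := by
          rw [Walk.cons_isCycle_iff]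
          refine ⟨hcpath.reverse, ?_⟩
          rw [Walk.edges_reverse, List.mem_reverse]
          intro hmem
          rw [Walk.edges_cons, List.mem_cons] at hmem
          rcases hmem with heq | hmem
          · rw [Sym2.eq_iff] at heq
            rcases heq with ⟨-, h2⟩ | ⟨h1, -⟩
            · exact hyw h2
            · exact A.irrefl (h1 ▸ hadj)
          · exact hp.2 (q.support_takeUntil_subset hyq (r.fst_mem_support_of_mem_edges hmem))
        exact hA _ hcyc
      
lemma acyclic_inner_card (A : SimpleGraph V) (hA : A.IsAcyclic) :
    ∀ (t : Finset V), t.Nonempty →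
      ((A.edgeFinset.filter (fun e => ∀ x ∈ e, x ∈ t)).card + 1 ≤ t.card) := by
  have key : ∀ (n : ℕ) (t : Finset V), t.card = n → t.Nonempty →
      ((A.edgeFinset.filter (fun e => ∀ x ∈ e, x ∈ t)).card + 1 ≤ t.card) := by
    intro n
    induction n using Nat.strong_induction_on with
    | _ n IH =>
      intro t htn ht
      -- find a low degree vertex
      have hlow : ∃ v ∈ t, ((t.erase v) ∩ A.neighborFinset v).card ≤ 1 := by
        by_contra hcon
        push_neg at hcon
        have hdeg : ∀ v ∈ t, 2 ≤ (t ∩ A.neighborFinset v).card := by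
          intro v hv
          have := hcon v hv
          calc 2 ≤ ((t.erase v) ∩ A.neighborFinset v).card := this
          _ ≤ (t ∩ A.neighborFinset v).card :=
            Finset.card_le_card (Finset.inter_subset_inter (Finset.erase_subset v t) le_rfl)
        obtain ⟨u, v, p, hp, hsup, hlen⟩ :=
          exists_path_of_min_degree_two A t ht hdeg hA t.card
        have h1 : p.support.toFinset ⊆ t := fun x hx => hsup x (List.mem_toFinset.mp hx)
        have h2 : p.support.toFinset.card = p.length + 1 := by
          rw [List.toFinset_card_of_nodup hp.support_nodup, Walk.length_support]
        have := Finset.card_le_card h1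
        omega
      obtain ⟨v, hvt, hvdeg⟩ := hlow
      by_cases hsing : t.card ≤ 1
      · -- t = {v}; no edges inside
        have : (A.edgeFinset.filter (fun e => ∀ x ∈ e, x ∈ t)).card = 0 := by
          rw [Finset.card_eq_zero, Finset.filter_eq_empty_iff]
          rintro e he hall
          rw [SimpleGraph.mem_edgeFinset] at he
          revert he hall
          induction e using Sym2.ind with | _ a b => ?_
          intro he hall
          have ha := hall a (Sym2.mem_mk_left a b)
          have hb := hall b (Sym2.mem_mk_right a b)
          have hab : a ≠ b := (A.mem_edgeSet.mp he).ne
          have : 2 ≤ t.card := Finset.one_lt_card.mpr ⟨a, ha, b, hb, hab⟩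
          omega
        have := Finset.card_pos.mpr ht
        omega
      · push_neg at hsing
        set t' := t.erase v with ht'
        have ht'card : t'.card = t.card - 1 := Finset.card_erase_of_mem hvt
        have ht'ne : t'.Nonempty := by
          rw [← Finset.card_pos]; omega
        have hIH := IH (t.card - 1) (by omega) t' (by omega) ht'ne
        -- edges inside t ⊆ edges inside t' ∪ edges at v
        have hsub : A.edgeFinset.filter (fun e => ∀ x ∈ e, x ∈ t) ⊆
            (A.edgeFinset.filter (fun e => ∀ x ∈ e, x ∈ t')) ∪
              ((t' ∩ A.neighborFinset v).image (fun y => s(v, y))) := by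
          intro e he
          rw [Finset.mem_filter] at he
          rw [Finset.mem_union]
          by_cases hv : v ∈ e
          · right
            rw [Finset.mem_image]
            have hspec := Sym2.other_spec hv
            have hadj : A.Adj v (Sym2.Mem.other hv) := by
              rw [← SimpleGraph.mem_edgeSet, hspec]
              exact SimpleGraph.mem_edgeFinset.mp he.1
            refine ⟨Sym2.Mem.other hv, ?_, hspec⟩
            rw [Finset.mem_inter, Finset.mem_erase, SimpleGraph.mem_neighborFinset]
            exact ⟨⟨hadj.ne', he.2 _ (Sym2.other_mem hv)⟩, hadj⟩
          · left
            rw [Finset.mem_filter]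
            refine ⟨he.1, fun x hx => Finset.mem_erase.mpr ⟨fun hxv => hv (hxv ▸ hx), he.2 x hx⟩⟩
        have hcard := Finset.card_le_card hsub
        have hcard2 := Finset.card_union_le
          (A.edgeFinset.filter (fun e => ∀ x ∈ e, x ∈ t'))
          ((t' ∩ A.neighborFinset v).image (fun y => s(v, y)))
        have hcard3 : ((t' ∩ A.neighborFinset v).image (fun y => s(v, y))).card ≤ 1 :=
          le_trans (Finset.card_image_le) hvdeg
        omega
  intro t ht
  exact key t.card t rfl ht






lemma acyclic_inner_card' (A : SimpleGraph V) (hA : A.IsAcyclic)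
    (t : Finset V) (ht : t.Nonempty) (s' : Finset (Sym2 V))
    (hs' : ∀ e ∈ s', e ∈ A.edgeSet ∧ ∀ x ∈ e, x ∈ t) :
    s'.card + 1 ≤ t.card := by
  have hsub : s' ⊆ A.edgeFinset.filter (fun e => ∀ x ∈ e, x ∈ t) := by
    intro e he
    rw [Finset.mem_filter, SimpleGraph.mem_edgeFinset]
    exact hs' e he
  have := acyclic_inner_card A hA t ht
  have hle := Finset.card_le_card hsub
  omega

/-- Local arboricity bound. -/
lemma arb_inner_card (G : SimpleGraph V) (ν : ℕ)
    (harb : ∃ f : Sym2 V → Fin ν, ∀ i : Fin ν,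
      (SimpleGraph.fromEdgeSet {e | e ∈ G.edgeSet ∧ f e = i}).IsAcyclic)
    (t : Finset V) (ht : t.Nonempty) (s' : Finset (Sym2 V))
    (hs' : ∀ e ∈ s', e ∈ G.edgeSet ∧ ∀ x ∈ e, x ∈ t) :
    s'.card ≤ ν * (t.card - 1) := by
  obtain ⟨f, hf⟩ := harb
  have hpart := Finset.card_eq_sum_card_fiberwise
    (f := f) (s := s') (t := Finset.univ) (fun e _ => Finset.mem_univ _)
  rw [hpart]
  have hbound : ∀ i : Fin ν, (s'.filter (fun e => f e = i)).card ≤ t.card - 1 := by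
    intro i
    have := acyclic_inner_card' (SimpleGraph.fromEdgeSet {e | e ∈ G.edgeSet ∧ f e = i})
      (hf i) t ht (s'.filter (fun e => f e = i)) ?_
    · omega
    · intro e he
      rw [Finset.mem_filter] at he
      obtain ⟨heG, hfi⟩ := he
      obtain ⟨heG', hin⟩ := hs' e heG
      refine ⟨?_, hin⟩
      rw [SimpleGraph.edgeSet_fromEdgeSet]
      exact ⟨⟨heG', hfi⟩, SimpleGraph.not_isDiag_of_mem_edgeSet G heG'⟩
  calc ∑ i : Fin ν, (s'.filter (fun e => f e = i)).card
      ≤ ∑ _i : Fin ν, (t.card - 1) := Finset.sum_le_sum (fun i _ => hbound i)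
    _ = ν * (t.card - 1) := by simp [Finset.sum_const, mul_comm]





/-- matching as involution -/


lemma two_mul_card_of_pairing (M : Finset (Sym2 V)) (hedges : ∀ e ∈ M, ¬ e.IsDiag)
    (huniq : ∀ (x : V) (e e' : Sym2 V), e ∈ M → e' ∈ M → x ∈ e → x ∈ e' → e = e') :
    (Finset.univ.filter (fun x : V => ∃ e, e ∈ M ∧ x ∈ e)).card = 2 * M.card := by
  classical
  set cov := Finset.univ.filter (fun x : V => ∃ e, e ∈ M ∧ x ∈ e) with hcov
  have hφtot : ∀ x : V, ∃ e : Sym2 V, (∃ e', e' ∈ M ∧ x ∈ e') → (e ∈ M ∧ x ∈ e) := by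
    intro x
    by_cases h : ∃ e', e' ∈ M ∧ x ∈ e'
    · exact ⟨h.choose, fun _ => h.choose_spec⟩
    · exact ⟨Sym2.diag x, fun hh => absurd hh h⟩
  choose φ hφ using hφtot
  have hmap : ∀ x ∈ cov, φ x ∈ M := by
    intro x hx
    rw [hcov, Finset.mem_filter] at hx
    exact (hφ x hx.2).1
  have := Finset.card_eq_sum_card_fiberwise hmap
  rw [this]
  rw [Finset.sum_congr rfl (g := fun _ => 2)]
  · rw [Finset.sum_const, smul_eq_mul, mul_comm]
  · intro e he
    -- fiber over e is exactly the two endpoints of e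
    have hfiber : cov.filter (fun x => φ x = e) = Finset.univ.filter (fun x => x ∈ e) := by
      ext x
      simp only [Finset.mem_filter, Finset.mem_univ, true_and, hcov]
      constructor
      · rintro ⟨hxcov, hφx⟩
        exact hφx ▸ (hφ x hxcov).2
      · intro hxe
        have hex : ∃ e', e' ∈ M ∧ x ∈ e' := ⟨e, he, hxe⟩
        refine ⟨hex, ?_⟩
        exact huniq x (φ x) e (hφ x hex).1 he (hφ x hex).2 hxe
    rw [hfiber]
    -- count the two endpoints
    revert he
    induction e using Sym2.ind with | _ a b => ?_
    intro he
    have hab : a ≠ b := fun h => (hedges _ he) (h ▸ Sym2.mk_isDiag_iff.mpr rfl)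
    have : (Finset.univ.filter (fun x => x ∈ s(a, b))) = {a, b} := by
      ext x
      simp [Sym2.mem_iff]
    rw [this, Finset.card_insert_of_notMem (by simp [hab]), Finset.card_singleton]

lemma exists_inv_of_matchset {K : SimpleGraph V} {M : Finset (Sym2 V)}
    (hM : IsMatchingSet K M) :
    ∃ g : Equiv.Perm V, InvM K g ∧ (isupp g).card = 2 * M.card ∧
      (∀ x : V, g x = x ↔ ¬ ∃ e, e ∈ M ∧ x ∈ e) := by
  classical
  have huniq : ∀ (x : V) (e e' : Sym2 V), e ∈ M → e' ∈ M → x ∈ e → x ∈ e' → e = e' := by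
    intro x e e' he he' hxe hxe'
    by_contra hne
    exact hM.2 e he e' he' hne x hxe hxe'
  have hedges : ∀ e ∈ M, ¬ e.IsDiag := fun e he =>
    SimpleGraph.not_isDiag_of_mem_edgeSet K (hM.1 he)
  set f : V → V := fun x =>
    if h : ∃ e, e ∈ M ∧ x ∈ e then Sym2.Mem.other h.choose_spec.2 else x with hf
  have hcovspec : ∀ (x : V) (h : ∃ e, e ∈ M ∧ x ∈ e),
      f x ∈ h.choose ∧ s(x, f x) = h.choose ∧ f x ≠ x := by
    intro x h
    have h1 : f x = Sym2.Mem.other h.choose_spec.2 := by rw [hf]; exact dif_pos h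
    refine ⟨h1 ▸ Sym2.other_mem _, h1 ▸ Sym2.other_spec _, ?_⟩
    rw [h1]
    exact Sym2.other_ne (hedges _ h.choose_spec.1) _
  have hunc : ∀ x : V, ¬ (∃ e, e ∈ M ∧ x ∈ e) → f x = x := by
    intro x h; rw [hf]; exact dif_neg h
  have hinv : Function.Involutive f := by
    intro x
    by_cases h : ∃ e, e ∈ M ∧ x ∈ e
    · obtain ⟨hmem, hspec, hne⟩ := hcovspec x h
      have hy : ∃ e, e ∈ M ∧ f x ∈ e := ⟨h.choose, h.choose_spec.1, hmem⟩
      obtain ⟨hmem2, hspec2, hne2⟩ := hcovspec (f x) hy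
      have : hy.choose = h.choose :=
        huniq (f x) _ _ hy.choose_spec.1 h.choose_spec.1 hy.choose_spec.2 hmem
      rw [this, ← hspec] at hspec2
      rw [Sym2.eq_iff] at hspec2
      rcases hspec2 with ⟨h1, _⟩ | ⟨_, h2⟩
      · exact absurd h1 hne
      · exact h2
    · rw [hunc x h, hunc x h]
  refine ⟨hinv.toPerm f, ⟨fun x => hinv x, ?_⟩, ?_, ?_⟩
  · intro x hx
    simp only [Function.Involutive.coe_toPerm] at hx ⊢
    by_cases h : ∃ e, e ∈ M ∧ x ∈ e
    · obtain ⟨hmem, hspec, hne⟩ := hcovspec x h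
      rw [← SimpleGraph.mem_edgeSet, hspec]
      exact hM.1 h.choose_spec.1
    · exact absurd (hunc x h) hx
  · have : isupp (hinv.toPerm f) = Finset.univ.filter (fun x : V => ∃ e, e ∈ M ∧ x ∈ e) := by
      ext x
      rw [isupp, Finset.mem_filter]
      simp only [isupp, Finset.mem_filter, Finset.mem_univ, true_and,
        Function.Involutive.coe_toPerm]
      constructor
      · intro hne
        by_contra h
        exact hne (hunc x h)
      · intro h
        exact (hcovspec x h).2.2
    rw [this]
    exact two_mul_card_of_pairing M hedges huniq
  · intro x
    simp only [Function.Involutive.coe_toPerm]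
    constructor
    · intro hfx h
      exact (hcovspec x h).2.2 hfx
    · exact hunc x

lemma exists_matchset_of_inv {K : SimpleGraph V} {g : Equiv.Perm V} (hg : InvM K g) :
    ∃ M : Finset (Sym2 V), IsMatchingSet K M ∧ 2 * M.card = (isupp g).card := by
  classical
  set M : Finset (Sym2 V) := (isupp g).image (fun x => s(x, g x)) with hMdef
  have hedge : ∀ x : V, g x ≠ x → s(x, g x) ∈ K.edgeSet := by
    intro x hx
    rw [SimpleGraph.mem_edgeSet]
    exact hg.2 x hx
  have hkey : ∀ (v : V) (e : Sym2 V), e ∈ M → v ∈ e → (g v ≠ v ∧ e = s(v, g v)) := by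
    intro v e he hv
    rw [hMdef, Finset.mem_image] at he
    obtain ⟨x, hx, rfl⟩ := he
    rw [isupp, Finset.mem_filter] at hx
    rcases Sym2.mem_iff.mp hv with rfl | rfl
    · exact ⟨hx.2, rfl⟩
    · refine ⟨?_, ?_⟩
      · rw [hg.1 x]; exact fun h => hx.2 h.symm
      · rw [hg.1 x]; exact Sym2.eq_swap
  have hMmatch : IsMatchingSet K M := by
    constructor
    · intro e he
      rw [hMdef] at he
      simp only [Finset.coe_image, Set.mem_image, Finset.mem_coe] at he
      obtain ⟨x, hx, rfl⟩ := he
      rw [isupp, Finset.mem_filter] at hx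
      exact hedge x hx.2
    · intro e he e' he' hne v hv hv'
      obtain ⟨_, h1⟩ := hkey v e he hv
      obtain ⟨_, h2⟩ := hkey v e' he' hv'
      exact hne (h1.trans h2.symm)
  refine ⟨M, hMmatch, ?_⟩
  have huniq : ∀ (x : V) (e e' : Sym2 V), e ∈ M → e' ∈ M → x ∈ e → x ∈ e' → e = e' := by
    intro x e e' he he' hxe hxe'
    obtain ⟨_, h1⟩ := hkey x e he hxe
    obtain ⟨_, h2⟩ := hkey x e' he' hxe'
    exact h1.trans h2.symm
  have hedges : ∀ e ∈ M, ¬ e.IsDiag := fun e he =>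
    SimpleGraph.not_isDiag_of_mem_edgeSet K (hMmatch.1 he)
  have := two_mul_card_of_pairing M hedges huniq
  rw [← this]
  congr 1
  ext x
  simp only [isupp, Finset.mem_filter, Finset.mem_univ, true_and]
  constructor
  · rintro ⟨e, he, hxe⟩
    exact (hkey x e he hxe).1
  · intro hx
    exact ⟨s(x, g x), Finset.mem_image_of_mem _ (by rw [isupp, Finset.mem_filter]; exact ⟨Finset.mem_univ x, hx⟩), Sym2.mem_mk_left _ _⟩







lemma inv_card_le {K : SimpleGraph V} {g : Equiv.Perm V} (hg : InvM K g) :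
    (isupp g).card ≤ 2 * matchNum K := by
  obtain ⟨M, hM, hcard⟩ := exists_matchset_of_inv hg
  rw [← hcard]
  exact Nat.mul_le_mul_left 2 (le_matchNum hM)

section Orbit

variable (g g' : Equiv.Perm V)

/-- augmenting along a single edge whose endpoints are both unmatched -/
lemma augment {K : SimpleGraph V} {g : Equiv.Perm V} (hg : InvM K g) {u w : V}
    (hadj : K.Adj u w) (hu : g u = u) (hw : g w = w) :
    ∃ g2 : Equiv.Perm V, InvM K g2 ∧ (isupp g2).card = (isupp g).card + 2 := by
  classical
  have huw : u ≠ w := hadj.ne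
  set f : V → V := fun x => if x = u then w else if x = w then u else g x with hf
  have hfu : f u = w := by simp [hf]
  have hfw : f w = u := by simp [hf, huw.symm]
  have hfx : ∀ x, x ≠ u → x ≠ w → f x = g x := by
    intro x h1 h2; simp [hf, h1, h2]
  have hgne : ∀ x, x ≠ u → x ≠ w → (g x ≠ u ∧ g x ≠ w) := by
    intro x h1 h2
    constructor
    · intro h; apply h1; rw [← hg.1 x, h, hu]
    · intro h; apply h2; rw [← hg.1 x, h, hw]
  have hinv : Function.Involutive f := by
    intro x
    by_cases h1 : x = u
    · rw [h1, hfu, hfw]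
    · by_cases h2 : x = w
      · rw [h2, hfw, hfu]
      · rw [hfx x h1 h2, hfx (g x) (hgne x h1 h2).1 (hgne x h1 h2).2, hg.1]
  refine ⟨hinv.toPerm f, ⟨fun x => hinv x, ?_⟩, ?_⟩
  · intro x hx
    simp only [Function.Involutive.coe_toPerm] at hx ⊢
    by_cases h1 : x = u
    · rw [h1, hfu]; exact h1 ▸ hadj
    · by_cases h2 : x = w
      · rw [h2, hfw]; exact h2 ▸ hadj.symm
      · rw [hfx x h1 h2] at hx ⊢
        exact hg.2 x hx
  · have hsupp : isupp (hinv.toPerm f) = insert u (insert w (isupp g)) := by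
      ext x
      rw [isupp, Finset.mem_filter]
      simp only [isupp, Finset.mem_filter, Finset.mem_univ, true_and, Finset.mem_insert,
        Function.Involutive.coe_toPerm]
      by_cases h1 : x = u
      · subst h1
        rw [hfu]
        constructor
        · intro _; exact Or.inl rfl
        · intro _; exact huw.symm
      · by_cases h2 : x = w
        · subst h2
          rw [hfw]
          constructor
          · intro _; exact Or.inr (Or.inl rfl)
          · intro _; exact huw
        · rw [hfx x h1 h2]
          constructor
          · intro h; exact Or.inr (Or.inr h)
          · rintro (rfl | rfl | h)
            · exact absurd rfl h1
            · exact absurd rfl h2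
            · exact h
    rw [hsupp]
    have hu' : u ∉ insert w (isupp g) := by
      simp only [Finset.mem_insert, isupp, Finset.mem_filter, Finset.mem_univ, true_and]
      push_neg
      exact ⟨huw, hu⟩
    have hw' : w ∉ isupp g := by
      simp only [isupp, Finset.mem_filter, Finset.mem_univ, true_and]
      rw [hw]; exact fun h => h rfl
    rw [Finset.card_insert_of_notMem hu', Finset.card_insert_of_notMem hw']

/-- the piecewise swap of two matchings along a closed set -/
lemma swap_exists {K : SimpleGraph V} {g g' : Equiv.Perm V} (hg : InvM K g) (hg' : InvM K g')
    (S : Finset V) (hSg : ∀ x ∈ S, g x ∈ S) (hSg' : ∀ x ∈ S, g' x ∈ S) :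
    ∃ h : Equiv.Perm V, InvM K h ∧ (∀ x ∈ S, h x = g' x) ∧ (∀ x ∉ S, h x = g x) ∧
      (isupp h).card + (S.filter (fun x => g' x = x)).card
        = (isupp g).card + (S.filter (fun x => g x = x)).card := by
  classical
  set f : V → V := fun x => if x ∈ S then g' x else g x with hf
  have hfin : ∀ x ∈ S, f x = g' x := by intro x hx; simp [hf, hx]
  have hfout : ∀ x ∉ S, f x = g x := by intro x hx; simp [hf, hx]
  have hinv : Function.Involutive f := by
    intro x
    by_cases hx : x ∈ S
    · rw [hfin x hx, hfin _ (hSg' x hx), hg'.1]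
    · have : g x ∉ S := by
        intro hc
        exact hx (by rw [← hg.1 x]; exact hSg _ hc)
      rw [hfout x hx, hfout _ this, hg.1]
  refine ⟨hinv.toPerm f, ⟨fun x => hinv x, ?_⟩, ?_, ?_, ?_⟩
  · intro x hx
    simp only [Function.Involutive.coe_toPerm] at hx ⊢
    by_cases h1 : x ∈ S
    · rw [hfin x h1] at hx ⊢; exact hg'.2 x hx
    · rw [hfout x h1] at hx ⊢; exact hg.2 x hx
  · intro x hx; simp only [Function.Involutive.coe_toPerm]; exact hfin x hx
  · intro x hx; simp only [Function.Involutive.coe_toPerm]; exact hfout x hx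
  · -- cardinality bookkeeping
    have key : ∀ (a b : Equiv.Perm V) (F : V → V), (∀ x ∈ S, F x = a x) →
        (∀ x ∉ S, F x = b x) →
        (Finset.univ.filter (fun x => F x ≠ x)).card + (S.filter (fun x => a x = x)).card
          = S.card + ((Finset.univ \ S).filter (fun x => b x ≠ x)).card := by
      intro a b F hFa hFb
      have hsplit : Finset.univ.filter (fun x => F x ≠ x) =
          (S.filter (fun x => a x ≠ x)) ∪ ((Finset.univ \ S).filter (fun x => b x ≠ x)) := by
        ext x
        simp only [Finset.mem_filter, Finset.mem_univ, true_and, Finset.mem_union,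
          Finset.mem_sdiff]
        by_cases hx : x ∈ S
        · rw [hFa x hx]
          constructor
          · intro h; exact Or.inl ⟨hx, h⟩
          · rintro (⟨-, h⟩ | ⟨hc, -⟩)
            · exact h
            · exact absurd hx hc
        · rw [hFb x hx]
          constructor
          · intro h; exact Or.inr ⟨hx, h⟩
          · rintro (⟨hc, -⟩ | ⟨-, h⟩)
            · exact absurd hc hx
            · exact h
      have hdisj : Disjoint (S.filter (fun x => a x ≠ x))
          ((Finset.univ \ S).filter (fun x => b x ≠ x)) := by
        rw [Finset.disjoint_left]
        intro x hx1 hx2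
        rw [Finset.mem_filter] at hx1 hx2
        rw [Finset.mem_sdiff] at hx2
        exact hx2.1.2 hx1.1
      rw [hsplit, Finset.card_union_of_disjoint hdisj]
      have hnn : (S.filter (fun x => ¬ a x ≠ x)).card = (S.filter (fun x => a x = x)).card := by
        congr 1
        ext x
        simp [not_not]
      have := Finset.card_filter_add_card_filter_not
        (s := S) (p := fun x => a x ≠ x)
      omega
    have h1 := key g' g (⇑(hinv.toPerm f)) (fun x hx => hfin x hx) (fun x hx => hfout x hx)
    have h2 := key g g (⇑g) (fun _ _ => rfl) (fun _ _ => rfl)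
    simp only [isupp]
    omega

end Orbit










/-- Gallai-type lemma: if every vertex is avoidable, then no two distinct vertices missed by a
maximum matching are joined by a walk. -/
lemma gallai_aux (K : SimpleGraph V)
    (hav : ∀ w : V, ∃ gw : Equiv.Perm V, InvM K gw ∧ (isupp gw).card = 2 * matchNum K ∧ gw w = w) :
    ∀ n : ℕ, ∀ g : Equiv.Perm V, InvM K g → (isupp g).card = 2 * matchNum K →
      ∀ u v : V, g u = u → g v = v → u ≠ v → ∀ p : K.Walk u v, p.length ≤ n → False := by
  intro n
  induction n with
  | zero =>
    intro g hg hgc u v hu hv huv p hp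
    exact huv (SimpleGraph.Walk.eq_of_length_eq_zero (Nat.le_zero.mp hp))
  | succ n IH =>
    intro g hg hgc u v hu hv huv p hp
    cases p with
    | nil => exact huv rfl
    | @cons _ w _ hadj q =>
      by_cases hgw : g w = w
      · obtain ⟨g2, hg2, hg2c⟩ := augment hg hadj hu hgw
        have := inv_card_le hg2
        omega
      have hwv : w ≠ v := fun h => hgw (h ▸ hv)
      have hqlen : q.length ≤ n := by
        have : (SimpleGraph.Walk.cons hadj q).length = q.length + 1 :=
          SimpleGraph.Walk.length_cons _ _
        omega
      have hn1 : 1 ≤ n := by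
        rcases Nat.eq_zero_or_pos q.length with h0 | h1
        · exact absurd (SimpleGraph.Walk.eq_of_length_eq_zero h0) hwv
        · omega
      -- pick g' among maximum matchings fixing w, maximizing agreement with g
      set 𝒢 : Finset (Equiv.Perm V) := Finset.univ.filter
        (fun g' => InvM K g' ∧ (isupp g').card = 2 * matchNum K ∧ g' w = w) with h𝒢
      have h𝒢ne : 𝒢.Nonempty := by
        obtain ⟨gw, h1, h2, h3⟩ := hav w
        exact ⟨gw, by rw [h𝒢, Finset.mem_filter]; exact ⟨Finset.mem_univ _, h1, h2, h3⟩⟩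
      obtain ⟨g', hg'mem, hg'max⟩ := Finset.exists_max_image 𝒢
        (fun g' => (Finset.univ.filter (fun x => g' x = g x)).card) h𝒢ne
      have hg'mem' := hg'mem
      rw [h𝒢, Finset.mem_filter] at hg'mem'
      obtain ⟨-, hg', hg'c, hg'w⟩ := hg'mem'
      by_cases hg'u : g' u = u
      · exact IH g' hg' hg'c u w hg'u hg'w hadj.ne
          (SimpleGraph.Walk.cons hadj SimpleGraph.Walk.nil) (by simp [hn1])
      by_cases hg'v : g' v = v
      · exact IH g' hg' hg'c w v hg'w hg'v hwv q hqlen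
      -- the alternating orbit of u
      set σ : Equiv.Perm V := g * g' with hσdef
      have hσap : ∀ x : V, σ x = g (g' x) := fun x => rfl
      have hper : u ∈ Function.periodicPts ⇑σ := by
        refine ⟨orderOf σ, orderOf_pos σ, ?_⟩
        show (⇑σ)^[orderOf σ] u = u
        rw [← Equiv.Perm.coe_pow, pow_orderOf_eq_one]
        rfl
      set n₀ := Function.minimalPeriod ⇑σ u with hn₀
      have hn0 : 0 < n₀ := Function.minimalPeriod_pos_of_mem_periodicPts hper
      have hσpow : ∀ k : ℕ, ((σ ^ k) u) = (⇑σ)^[k] u := fun k => by rw [Equiv.Perm.coe_pow]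
      have hσn : (σ ^ n₀) u = u := by rw [hσpow]; exact Function.iterate_minimalPeriod
      have hinj : ∀ k < n₀, ∀ j < n₀, (σ ^ k) u = (σ ^ j) u → k = j := by
        intro k hk j hj h
        refine Function.iterate_injOn_Iio_minimalPeriod (f := ⇑σ) (x := u) hk hj ?_
        show (⇑σ)^[k] u = (⇑σ)^[j] u
        rw [← hσpow, ← hσpow]; exact h
      have hgσ : ∀ x : V, g (σ x) = g' x := by
        intro x; rw [hσap, hg.1]
      have hσgσ : ∀ x : V, σ (g (σ x)) = g x := by
        intro x; rw [hgσ, hσap, hg'.1]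
      have hC1 : ∀ (k : ℕ) (x : V), (σ ^ k) (g ((σ ^ k) x)) = g x := by
        intro k
        induction k with
        | zero => intro x; simp
        | succ k ih =>
          intro x
          have key : ((σ ^ (k+1)) x) = (σ ^ k) (σ x) := by
            rw [← Equiv.Perm.mul_apply, ← pow_succ]
          have key2 : ∀ y : V, (σ ^ (k+1)) y = σ ((σ ^ k) y) := by
            intro y
            rw [← Equiv.Perm.mul_apply, ← pow_succ']
          calc (σ ^ (k+1)) (g ((σ ^ (k+1)) x))
              = σ ((σ ^ k) (g ((σ ^ k) (σ x)))) := by rw [key, key2]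
            _ = σ (g (σ x)) := by rw [ih (σ x)]
            _ = g x := hσgσ x
      have hF1 : ∀ k ≤ n₀, g ((σ ^ k) u) = (σ ^ (n₀ - k)) u := by
        intro k hk
        apply (σ ^ k).injective
        rw [hC1 k u, hu]
        have h2 : (σ ^ k) ((σ ^ (n₀ - k)) u) = (σ ^ n₀) u := by
          rw [← Equiv.Perm.mul_apply, ← pow_add]
          congr 2
          omega
        rw [h2, hσn]
      have hF2 : ∀ k : ℕ, g' ((σ ^ k) u) = g ((σ ^ (k+1)) u) := by
        intro k
        rw [← hgσ ((σ ^ k) u)]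
        congr 1
        rw [← Equiv.Perm.mul_apply, ← pow_succ']
      have hmod : ∀ k : ℕ, (σ ^ (k % n₀)) u = (σ ^ k) u := by
        intro k; rw [hσpow, hσpow]; exact Function.iterate_mod_minimalPeriod_eq
      set S : Finset V := (Finset.range n₀).image (fun k => (σ ^ k) u) with hS
      have huS : u ∈ S := by
        rw [hS, Finset.mem_image]
        exact ⟨0, Finset.mem_range.mpr hn0, by simp⟩
      have hmemS : ∀ k : ℕ, (σ ^ k) u ∈ S := by
        intro k
        rw [hS, Finset.mem_image]
        exact ⟨k % n₀, Finset.mem_range.mpr (Nat.mod_lt k hn0), hmod k⟩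
      have hSmem : ∀ x ∈ S, ∃ k, k < n₀ ∧ (σ ^ k) u = x := by
        intro x hx
        rw [hS, Finset.mem_image] at hx
        obtain ⟨k, hk, hkx⟩ := hx
        exact ⟨k, Finset.mem_range.mp hk, hkx⟩
      have hSg : ∀ x ∈ S, g x ∈ S := by
        intro x hx
        obtain ⟨k, hk, rfl⟩ := hSmem x hx
        rw [hF1 k (le_of_lt hk)]
        exact hmemS _
      have hSg' : ∀ x ∈ S, g' x ∈ S := by
        intro x hx
        obtain ⟨k, hk, rfl⟩ := hSmem x hx
        rw [hF2 k, ← hmod (k+1), hF1 _ (le_of_lt (Nat.mod_lt _ hn0))]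
        exact hmemS _
      have hgfix : ∀ k, k < n₀ → g ((σ ^ k) u) = (σ ^ k) u → (k = 0 ∨ n₀ = 2 * k) := by
        intro k hk h
        rw [hF1 k (le_of_lt hk)] at h
        by_cases h0 : k = 0
        · exact Or.inl h0
        · right
          have h1 : n₀ - k < n₀ := by omega
          have := hinj _ h1 _ hk h
          omega
      have hg'fix : ∀ k, k < n₀ → g' ((σ ^ k) u) = (σ ^ k) u → n₀ = 2 * k + 1 := by
        intro k hk h
        rw [hF2 k] at h
        by_cases hk1 : k + 1 < n₀
        · rw [hF1 (k+1) (le_of_lt hk1)] at h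
          have h1 : n₀ - (k+1) < n₀ := by omega
          have := hinj _ h1 _ hk h
          omega
        · have hk1' : k + 1 = n₀ := by omega
          rw [hk1', hσn, hu] at h
          have h0 : (σ ^ (0:ℕ)) u = (σ ^ k) u := by simpa using h
          have := hinj 0 hn0 k hk h0
          omega
      -- swap h₁ : g' inside S, g outside S
      obtain ⟨h₁, hh₁, hh₁in, hh₁out, hh₁card⟩ := swap_exists hg hg' S hSg hSg'
      have hle₁ := inv_card_le hh₁
      have hFg_pos : 0 < (S.filter (fun x => g x = x)).card :=
        Finset.card_pos.mpr ⟨u, Finset.mem_filter.mpr ⟨huS, hu⟩⟩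
      have hFg'_pos : 0 < (S.filter (fun x => g' x = x)).card := by omega
      obtain ⟨xs, hxs⟩ := Finset.card_pos.mp hFg'_pos
      rw [Finset.mem_filter] at hxs
      obtain ⟨hxsS, hxsfix⟩ := hxs
      obtain ⟨ks, hks, hxs_eq⟩ := hSmem xs hxsS
      have hodd : n₀ = 2 * ks + 1 := hg'fix ks hks (by rw [hxs_eq]; exact hxsfix)
      have hgfix_unique : ∀ x ∈ S, g x = x → x = u := by
        intro x hx hfix
        obtain ⟨k, hk, rfl⟩ := hSmem x hx
        rcases hgfix k hk hfix with rfl | heven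
        · simp
        · omega
      have hg'fix_unique : ∀ x ∈ S, g' x = x → x = xs := by
        intro x hx hfix
        obtain ⟨k, hk, rfl⟩ := hSmem x hx
        have h2 := hg'fix k hk hfix
        have h3 : k = ks := by omega
        rw [h3, hxs_eq]
      have hFgS1 : (S.filter (fun x => g x = x)).card = 1 := by
        rw [Finset.card_eq_one]
        refine ⟨u, ?_⟩
        ext x
        rw [Finset.mem_filter, Finset.mem_singleton]
        constructor
        · rintro ⟨h1, h2⟩; exact hgfix_unique x h1 h2
        · rintro rfl; exact ⟨huS, hu⟩
      have hFg'S1 : (S.filter (fun x => g' x = x)).card = 1 := by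
        rw [Finset.card_eq_one]
        refine ⟨xs, ?_⟩
        ext x
        rw [Finset.mem_filter, Finset.mem_singleton]
        constructor
        · rintro ⟨h1, h2⟩; exact hg'fix_unique x h1 h2
        · rintro rfl; exact ⟨hxsS, hxsfix⟩
      have hvS : v ∉ S := fun hvs => huv (hgfix_unique v hvs hv).symm
      by_cases hxw : xs = w
      · have hh₁c : (isupp h₁).card = 2 * matchNum K := by omega
        have hh₁w : h₁ w = w := by
          rw [hh₁in w (hxw ▸ hxsS)]
          exact hg'w
        have hh₁v : h₁ v = v := by rw [hh₁out v hvS]; exact hv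
        exact IH h₁ hh₁ hh₁c w v hh₁w hh₁v hwv q hqlen
      · have hwS : w ∉ S := fun hws => hxw ((hg'fix_unique w hws hg'w).symm)
        obtain ⟨h₂, hh₂, hh₂in, hh₂out, hh₂card⟩ := swap_exists hg' hg S hSg' hSg
        have hh₂c : (isupp h₂).card = 2 * matchNum K := by omega
        have hh₂w : h₂ w = w := by rw [hh₂out w hwS]; exact hg'w
        have hmem2 : h₂ ∈ 𝒢 := by
          rw [h𝒢, Finset.mem_filter]
          exact ⟨Finset.mem_univ _, hh₂, hh₂c, hh₂w⟩
        have hagg := hg'max h₂ hmem2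
        have hstrict : (Finset.univ.filter (fun x => g' x = g x)).card <
            (Finset.univ.filter (fun x => h₂ x = g x)).card := by
          apply Finset.card_lt_card
          rw [Finset.ssubset_iff_of_subset]
          · exact ⟨u, Finset.mem_filter.mpr ⟨Finset.mem_univ _, by rw [hh₂in u huS, hu]⟩,
              fun hc => hg'u (by
                have := (Finset.mem_filter.mp hc).2
                rw [this, hu])⟩
          · intro x hx
            rw [Finset.mem_filter] at hx ⊢
            refine ⟨Finset.mem_univ _, ?_⟩
            by_cases hxS : x ∈ S
            · rw [hh₂in x hxS]
            · rw [hh₂out x hxS]; exact hx.2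
        omega







lemma count_bound (K' : SimpleGraph V) (ν : ℕ)
    (harb' : ∀ t : Finset V, t.Nonempty → ∀ s' : Finset (Sym2 V),
      (∀ e ∈ s', e ∈ K'.edgeSet ∧ ∀ x ∈ e, x ∈ t) → s'.card ≤ ν * (t.card - 1))
    (g : Equiv.Perm V) (hg : InvM K' g)
    (hgal : ∀ u v : V, g u = u → g v = v → u ≠ v → ¬ K'.Reachable u v) :
    K'.edgeFinset.card ≤ ν * (isupp g).card := by
  classical
  set f : V → V := fun v => (K'.connectedComponentMk v).out with hfdef
  have hf1 : ∀ v : V, K'.Reachable v (f v) := by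
    intro v
    have h : K'.connectedComponentMk ((K'.connectedComponentMk v).out) =
        K'.connectedComponentMk v := (K'.connectedComponentMk v).out_eq
    exact (SimpleGraph.ConnectedComponent.eq.mp h).symm
  have hf2 : ∀ v w : V, K'.Reachable v w → f v = f w := by
    intro v w hr
    show (K'.connectedComponentMk v).out = (K'.connectedComponentMk w).out
    congr 1
    exact SimpleGraph.ConnectedComponent.sound hr
  have hf2' : ∀ v w : V, f v = f w → K'.Reachable v w := by
    intro v w hfvw
    exact (hf1 v).trans (hfvw ▸ (hf1 w).symm)
  have hcomp : ∀ e ∈ K'.edgeFinset, ∀ x ∈ e, ∀ y ∈ e, K'.Reachable x y := by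
    intro e
    induction e using Sym2.ind with | _ a b => ?_
    intro he x hx y hy
    rw [SimpleGraph.mem_edgeFinset, SimpleGraph.mem_edgeSet] at he
    rcases Sym2.mem_iff.mp hx with rfl | rfl <;> rcases Sym2.mem_iff.mp hy with rfl | rfl
    · exact SimpleGraph.Reachable.refl _
    · exact he.reachable
    · exact he.symm.reachable
    · exact SimpleGraph.Reachable.refl _
  set ψ : Sym2 V → V := fun e => f e.out.1 with hψdef
  have hψ : ∀ e ∈ K'.edgeFinset, ∀ x ∈ e, f x = ψ e :=
    fun e he x hx => hf2 x e.out.1 (hcomp e he x hx e.out.1 (Sym2.out_fst_mem e))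
  set R : Finset V := K'.edgeFinset.image ψ with hR
  have hsum := Finset.card_eq_sum_card_image ψ K'.edgeFinset
  -- the vertex set of components represented in R
  set W : Finset V := Finset.univ.filter (fun v => f v ∈ R) with hW
  -- each fiber of edges is inside the component vertex set
  have hfiber_bound : ∀ r ∈ R, (K'.edgeFinset.filter (fun e => ψ e = r)).card ≤
      ν * ((Finset.univ.filter (fun v : V => f v = r)).card - 1) := by
    intro r hr
    have hrfix : f r = r := by
      rw [hR, Finset.mem_image] at hr
      obtain ⟨e, he, rfl⟩ := hr
      show f (f e.out.1) = f e.out.1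
      exact hf2 _ _ (hf1 e.out.1).symm
    refine harb' (Finset.univ.filter (fun v : V => f v = r))
      ⟨r, Finset.mem_filter.mpr ⟨Finset.mem_univ r, hrfix⟩⟩ _ ?_
    intro e he
    rw [Finset.mem_filter] at he
    obtain ⟨heE, heψ⟩ := he
    refine ⟨SimpleGraph.mem_edgeFinset.mp heE, fun x hx => ?_⟩
    rw [Finset.mem_filter]
    exact ⟨Finset.mem_univ x, by rw [hψ e heE x hx, heψ]⟩
  -- vertex counting
  have hWsum : W.card = ∑ r ∈ R, (Finset.univ.filter (fun v : V => f v = r)).card := by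
    have := Finset.card_eq_sum_card_fiberwise
      (f := f) (s := W) (t := R) (fun v hv => (Finset.mem_filter.mp hv).2)
    rw [this]
    apply Finset.sum_congr rfl
    intro r hr
    congr 1
    ext v
    simp only [hW, Finset.mem_filter, Finset.mem_univ, true_and]
    constructor
    · rintro ⟨-, h2⟩; exact h2
    · intro h; exact ⟨h ▸ hr, h⟩
  have hWbound : W.card ≤ (isupp g).card + R.card := by
    have hsplit := Finset.card_filter_add_card_filter_not
      (s := W) (p := fun v => g v = v)
    have h1 : (W.filter (fun v => ¬ g v = v)).card ≤ (isupp g).card := by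
      apply Finset.card_le_card
      intro v hv
      rw [Finset.mem_filter] at hv
      rw [isupp, Finset.mem_filter]
      exact ⟨Finset.mem_univ v, hv.2⟩
    have h2 : (W.filter (fun v => g v = v)).card ≤ R.card := by
      apply Finset.card_le_card_of_injOn f
      · intro v hv
        rw [Finset.mem_coe, Finset.mem_filter] at hv
        exact (Finset.mem_filter.mp hv.1).2
      · intro a ha b hb hab
        by_contra hne
        have ha' := Finset.mem_filter.mp (Finset.mem_coe.mp ha)
        have hb' := Finset.mem_filter.mp (Finset.mem_coe.mp hb)
        exact hgal a b ha'.2 hb'.2 hne (hf2' a b hab)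
    omega
  -- components are nonempty, so sum of (t_r - 1) works out
  have hnem : ∀ r ∈ R, 0 < (Finset.univ.filter (fun v : V => f v = r)).card := by
    intro r hr
    rw [hR, Finset.mem_image] at hr
    obtain ⟨e, he, rfl⟩ := hr
    refine Finset.card_pos.mpr ⟨f e.out.1, ?_⟩
    rw [Finset.mem_filter]
    exact ⟨Finset.mem_univ _, hf2 _ _ (hf1 e.out.1).symm⟩
  have hsum3 : ∑ r ∈ R, (((Finset.univ.filter (fun v : V => f v = r)).card - 1) + 1)
      = ∑ r ∈ R, (Finset.univ.filter (fun v : V => f v = r)).card := by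
    apply Finset.sum_congr rfl
    intro r hr
    have := hnem r hr
    omega
  rw [Finset.sum_add_distrib, Finset.sum_const, smul_eq_mul, mul_one] at hsum3
  have hmain : K'.edgeFinset.card ≤
      ν * ∑ r ∈ R, ((Finset.univ.filter (fun v : V => f v = r)).card - 1) := by
    rw [hsum, Finset.mul_sum]
    exact Finset.sum_le_sum hfiber_bound
  have hfinal : ∑ r ∈ R, ((Finset.univ.filter (fun v : V => f v = r)).card - 1)
      ≤ (isupp g).card := by omega
  calc K'.edgeFinset.card ≤ _ := hmain
    _ ≤ ν * (isupp g).card := Nat.mul_le_mul_left ν hfinal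








/-- induced subgraph on a finset, as a graph on the same vertex type -/
def IndG (K : SimpleGraph V) (s : Finset V) : SimpleGraph V where
  Adj a b := K.Adj a b ∧ a ∈ s ∧ b ∈ s
  symm := by
    constructor
    intro a b h
    exact ⟨h.1.symm, h.2.2, h.2.1⟩
  loopless := ⟨fun a h => K.loopless.irrefl a h.1⟩

lemma IndG_le (K : SimpleGraph V) (s : Finset V) : IndG K s ≤ K := fun _ _ h => h.1

lemma IndG_mono (K : SimpleGraph V) {s t : Finset V} (h : s ⊆ t) : IndG K s ≤ IndG K t :=
  fun _ _ ha => ⟨ha.1, h ha.2.1, h ha.2.2⟩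

lemma IndG_univ (K : SimpleGraph V) : IndG K (Finset.univ : Finset V) = K := by
  ext a b
  simp [IndG]

lemma matchset_mono {K K' : SimpleGraph V} (h : K ≤ K') {M : Finset (Sym2 V)}
    (hM : IsMatchingSet K M) : IsMatchingSet K' M :=
  ⟨fun e he => SimpleGraph.edgeSet_mono h (hM.1 he), hM.2⟩

lemma matchNum_mono' {K K' : SimpleGraph V} (h : K ≤ K') : matchNum K ≤ matchNum K' := by
  obtain ⟨M, hM, hc⟩ := matchNum_spec K
  rw [← hc]
  exact le_matchNum (matchset_mono h hM)

lemma IndG_edge_mem {K : SimpleGraph V} {s : Finset V} {e : Sym2 V}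
    (he : e ∈ (IndG K s).edgeSet) : e ∈ K.edgeSet ∧ ∀ x ∈ e, x ∈ s := by
  revert he
  induction e using Sym2.ind with | _ a b => ?_
  intro he
  rw [SimpleGraph.mem_edgeSet] at he
  refine ⟨(K.mem_edgeSet).mpr he.1, ?_⟩
  intro x hx
  rcases Sym2.mem_iff.mp hx with rfl | rfl
  · exact he.2.1
  · exact he.2.2

/-- The central estimate: for a graph of arboricity `≤ ν` and max degree `≤ 2ν+2`,
twice the edge count of an induced subgraph is at most `(5ν+9)` times its matching number. -/
lemma main_bound (K : SimpleGraph V) (ν : ℕ)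
    (harb : ∀ t : Finset V, t.Nonempty → ∀ s' : Finset (Sym2 V),
      (∀ e ∈ s', e ∈ K.edgeSet ∧ ∀ x ∈ e, x ∈ t) → s'.card ≤ ν * (t.card - 1))
    (hdeg : ∀ v : V, K.degree v ≤ 2 * ν + 2) :
    ∀ (m : ℕ) (s : Finset V), s.card = m →
      2 * (IndG K s).edgeFinset.card ≤ (5 * ν + 9) * matchNum (IndG K s) := by
  intro m
  induction m using Nat.strong_induction_on with
  | _ m IH =>
    intro s hs
    by_cases hA : ∃ v ∈ s, matchNum (IndG K (s.erase v)) < matchNum (IndG K s)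
    · -- Case A : delete an essential vertex
      obtain ⟨v, hvs, hvlt⟩ := hA
      have hcard : (s.erase v).card = s.card - 1 := Finset.card_erase_of_mem hvs
      have hm1 : 0 < m := by
        rw [← hs]
        exact Finset.card_pos.mpr ⟨v, hvs⟩
      have hIH := IH (m - 1) (by omega) (s.erase v) (by omega)
      -- edge counting
      have hsub : (IndG K s).edgeFinset ⊆
          (IndG K (s.erase v)).edgeFinset ∪ (IndG K s).incidenceFinset v := by
        intro e he
        rw [SimpleGraph.mem_edgeFinset] at he
        rw [Finset.mem_union]
        by_cases hv : v ∈ e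
        · right
          rw [SimpleGraph.mem_incidenceFinset]
          exact ⟨he, hv⟩
        · left
          rw [SimpleGraph.mem_edgeFinset]
          obtain ⟨heK, hin⟩ := IndG_edge_mem he
          have hKadj : ∀ x ∈ e, x ∈ s.erase v := by
            intro x hx
            rw [Finset.mem_erase]
            exact ⟨fun hxv => hv (hxv ▸ hx), hin x hx⟩
          revert heK hKadj
          induction e using Sym2.ind with | _ a b => ?_
          intro heK hKadj
          rw [SimpleGraph.mem_edgeSet] at heK ⊢
          exact ⟨heK, hKadj a (Sym2.mem_mk_left a b), hKadj b (Sym2.mem_mk_right a b)⟩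
      have hinc : ((IndG K s).incidenceFinset v).card ≤ 2 * ν + 2 := by
        rw [SimpleGraph.card_incidenceFinset_eq_degree]
        calc (IndG K s).degree v ≤ K.degree v := by
              apply Finset.card_le_card
              intro b hb
              rw [SimpleGraph.mem_neighborFinset] at hb ⊢
              exact hb.1
          _ ≤ 2 * ν + 2 := hdeg v
      have hcount : (IndG K s).edgeFinset.card ≤
          (IndG K (s.erase v)).edgeFinset.card + (2 * ν + 2) := by
        calc (IndG K s).edgeFinset.card
            ≤ ((IndG K (s.erase v)).edgeFinset ∪ (IndG K s).incidenceFinset v).card :=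
              Finset.card_le_card hsub
          _ ≤ _ := Finset.card_union_le _ _
          _ ≤ _ := by omega
      have hmono : matchNum (IndG K (s.erase v)) + 1 ≤ matchNum (IndG K s) := hvlt
      have hmul : (5 * ν + 9) * (matchNum (IndG K (s.erase v)) + 1) ≤
          (5 * ν + 9) * matchNum (IndG K s) := Nat.mul_le_mul_left _ hmono
      rw [Nat.mul_add, mul_one] at hmul
      omega
    · -- Case B : all vertices avoidable in IndG K s
      push_neg at hA
      set K' := IndG K s with hK'
      have havB : ∀ v : V, matchNum (IndG K (s.erase v)) = matchNum K' := by
        intro v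
        by_cases hv : v ∈ s
        · exact le_antisymm (matchNum_mono' (IndG_mono K (Finset.erase_subset v s))) (hA v hv)
        · rw [Finset.erase_eq_of_notMem hv]
      have hav : ∀ w : V, ∃ gw : Equiv.Perm V,
          InvM K' gw ∧ (isupp gw).card = 2 * matchNum K' ∧ gw w = w := by
        intro w
        obtain ⟨M, hM, hMc⟩ := matchNum_spec (IndG K (s.erase w))
        have hM' : IsMatchingSet K' M :=
          matchset_mono (IndG_mono K (Finset.erase_subset w s)) hM
        obtain ⟨g, hg, hgc, hgfix⟩ := exists_inv_of_matchset hM'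
        refine ⟨g, hg, ?_, ?_⟩
        · rw [hgc, hMc, havB w]
        · rw [hgfix]
          rintro ⟨e, heM, hwe⟩
          have := (IndG_edge_mem (hM.1 heM)).2 w hwe
          rw [Finset.mem_erase] at this
          exact this.1 rfl
      -- maximum matching of K' as involution
      obtain ⟨M, hM, hMc⟩ := matchNum_spec K'
      obtain ⟨g, hg, hgc, -⟩ := exists_inv_of_matchset hM
      have hgc' : (isupp g).card = 2 * matchNum K' := by rw [hgc, hMc]
      have hgal : ∀ u v : V, g u = u → g v = v → u ≠ v → ¬ K'.Reachable u v := by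
        intro u v hu hv huv hreach
        obtain ⟨p⟩ := hreach
        exact gallai_aux K' hav p.length g hg hgc' u v hu hv huv p le_rfl
      have harb' : ∀ t : Finset V, t.Nonempty → ∀ s' : Finset (Sym2 V),
          (∀ e ∈ s', e ∈ K'.edgeSet ∧ ∀ x ∈ e, x ∈ t) → s'.card ≤ ν * (t.card - 1) := by
        intro t ht s' hs'
        refine harb t ht s' (fun e he => ⟨?_, (hs' e he).2⟩)
        exact (IndG_edge_mem (hs' e he).1).1
      have hcb := count_bound K' ν harb' g hg hgal
      rw [hgc'] at hcb
      calc 2 * K'.edgeFinset.card ≤ 2 * (ν * (2 * matchNum K')) := by omega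
        _ = (4 * ν) * matchNum K' := by ring
        _ ≤ (5 * ν + 9) * matchNum K' := Nat.mul_le_mul_right _ (by omega)






lemma heavy_bound (G : SimpleGraph V) [DecidableRel G.Adj] (ν : ℕ)
    (harb : ∀ t : Finset V, t.Nonempty → ∀ s' : Finset (Sym2 V),
      (∀ e ∈ s', e ∈ G.edgeSet ∧ ∀ x ∈ e, x ∈ t) → s'.card ≤ ν * (t.card - 1)) :
    (Finset.univ.filter (fun v : V => 2 * ν + 3 ≤ G.degree v)).card ≤ 4 * matchNum G := by
  classical
  obtain ⟨M, hM, hMc⟩ := matchNum_spec G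
  have huniq : ∀ (x : V) (e e' : Sym2 V), e ∈ M → e' ∈ M → x ∈ e → x ∈ e' → e = e' := by
    intro x e e' he he' hxe hxe'
    by_contra hne
    exact hM.2 e he e' he' hne x hxe hxe'
  have hedges : ∀ e ∈ M, ¬ e.IsDiag := fun e he =>
    SimpleGraph.not_isDiag_of_mem_edgeSet G (hM.1 he)
  set VM : Finset V := Finset.univ.filter (fun x : V => ∃ e, e ∈ M ∧ x ∈ e) with hVM
  have hVMc : VM.card = 2 * matchNum G := by
    rw [hVM, two_mul_card_of_pairing M hedges huniq, hMc]
  -- independence of uncovered vertices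
  have hindep : ∀ x y : V, ¬ (∃ e, e ∈ M ∧ x ∈ e) → ¬ (∃ e, e ∈ M ∧ y ∈ e) →
      G.Adj x y → False := by
    intro x y hx hy hadj
    have hnotmem : s(x, y) ∉ M := fun hmem => hx ⟨s(x, y), hmem, Sym2.mem_mk_left x y⟩
    have hM' : IsMatchingSet G (insert s(x, y) M) := by
      constructor
      · intro e he
        rw [Finset.coe_insert, Set.mem_insert_iff] at he
        rcases he with rfl | he
        · exact (G.mem_edgeSet).mpr hadj
        · exact hM.1 he
      · intro e he e' he' hne v hv hv'
        rw [Finset.mem_insert] at he he'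
        rcases he with rfl | he <;> rcases he' with rfl | he'
        · exact hne rfl
        · rcases Sym2.mem_iff.mp hv with rfl | rfl
          · exact hx ⟨e', he', hv'⟩
          · exact hy ⟨e', he', hv'⟩
        · rcases Sym2.mem_iff.mp hv' with rfl | rfl
          · exact hx ⟨e, he, hv⟩
          · exact hy ⟨e, he, hv⟩
        · exact hM.2 e he e' he' hne v hv hv'
    have := le_matchNum hM'
    rw [Finset.card_insert_of_notMem hnotmem, hMc] at this
    omega
  set H' : Finset V := Finset.univ.filter
    (fun x : V => 2 * ν + 3 ≤ G.degree x ∧ ¬ (∃ e, e ∈ M ∧ x ∈ e)) with hH'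
  -- heavy count splits
  have hsplit : (Finset.univ.filter (fun v : V => 2 * ν + 3 ≤ G.degree v)).card ≤
      VM.card + H'.card := by
    have h1 := Finset.card_filter_add_card_filter_not
      (s := Finset.univ.filter (fun v : V => 2 * ν + 3 ≤ G.degree v))
      (p := fun x : V => ∃ e, e ∈ M ∧ x ∈ e)
    have h2 : ((Finset.univ.filter (fun v : V => 2 * ν + 3 ≤ G.degree v)).filter
        (fun x : V => ∃ e, e ∈ M ∧ x ∈ e)).card ≤ VM.card := by
      apply Finset.card_le_card
      intro x hx
      rw [Finset.mem_filter] at hx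
      rw [hVM, Finset.mem_filter]
      exact ⟨Finset.mem_univ x, hx.2⟩
    have h3 : ((Finset.univ.filter (fun v : V => 2 * ν + 3 ≤ G.degree v)).filter
        (fun x : V => ¬ ∃ e, e ∈ M ∧ x ∈ e)).card ≤ H'.card := by
      apply Finset.card_le_card
      intro x hx
      rw [Finset.mem_filter] at hx
      obtain ⟨hx1, hx2⟩ := hx
      rw [Finset.mem_filter] at hx1
      rw [hH', Finset.mem_filter]
      exact ⟨Finset.mem_univ x, hx1.2, hx2⟩
    omega
  rcases Finset.eq_empty_or_nonempty H' with hemp | hne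
  · rw [hemp] at hsplit
    simp only [Finset.card_empty, add_zero] at hsplit
    omega
  · obtain ⟨x0, hx0⟩ := hne
    have : Nonempty V := ⟨x0⟩
    -- the edges incident to H'
    set E' : Finset (Sym2 V) := G.edgeFinset.filter (fun e => ∃ x, x ∈ e ∧ x ∈ H') with hE'
    have htot : ∀ e : Sym2 V, ∃ x : V, (∃ y, y ∈ e ∧ y ∈ H') → (x ∈ e ∧ x ∈ H') := by
      intro e
      by_cases h : ∃ y, y ∈ e ∧ y ∈ H'
      · exact ⟨h.choose, fun _ => h.choose_spec⟩
      · exact ⟨x0, fun hh => absurd hh h⟩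
    choose χ hχ using htot
    have hχspec : ∀ e ∈ E', χ e ∈ e ∧ χ e ∈ H' := by
      intro e he
      rw [hE', Finset.mem_filter] at he
      exact hχ e he.2
    -- uncovered vertices have all members of incident edges either themselves or covered
    have hH'mem : ∀ x ∈ H', 2 * ν + 3 ≤ G.degree x ∧ ¬ (∃ e, e ∈ M ∧ x ∈ e) := by
      intro x hx
      rw [hH', Finset.mem_filter] at hx
      exact hx.2
    -- fiber counting : E'.card ≥ (2ν+3) * H'.card
    have hfib := Finset.card_eq_sum_card_fiberwise
      (f := χ) (s := E') (t := H') (fun e he => (hχspec e he).2)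
    have hfiber_ge : ∀ x ∈ H', G.degree x ≤ (E'.filter (fun e => χ e = x)).card := by
      intro x hx
      rw [← SimpleGraph.card_incidenceFinset_eq_degree]
      apply Finset.card_le_card
      intro e he
      rw [SimpleGraph.mem_incidenceFinset] at he
      obtain ⟨heE, hxe⟩ := he
      have heE' : e ∈ E' := by
        rw [hE', Finset.mem_filter, SimpleGraph.mem_edgeFinset]
        exact ⟨heE, x, hxe, hx⟩
      rw [Finset.mem_filter]
      refine ⟨heE', ?_⟩
      -- χ e and x are both in e and both in H'; if distinct, they'd be adjacent: contradiction
      by_contra hne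
      obtain ⟨hχe, hχH⟩ := hχspec e heE'
      have he2 : e = s(χ e, x) := (Sym2.mem_and_mem_iff hne).mp ⟨hχe, hxe⟩
      have hadj : G.Adj (χ e) x := by
        rw [← SimpleGraph.mem_edgeSet, ← he2]
        exact heE
      exact hindep (χ e) x (hH'mem _ hχH).2 (hH'mem _ hx).2 hadj
    have hlow : (2 * ν + 3) * H'.card ≤ E'.card := by
      rw [hfib]
      calc (2 * ν + 3) * H'.card = ∑ _x ∈ H', (2 * ν + 3) := by
            rw [Finset.sum_const, smul_eq_mul, mul_comm]
        _ ≤ ∑ x ∈ H', G.degree x := Finset.sum_le_sum (fun x hx => (hH'mem x hx).1)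
        _ ≤ ∑ x ∈ H', (E'.filter (fun e => χ e = x)).card :=
            Finset.sum_le_sum hfiber_ge
    -- all E'-edges live inside VM ∪ H'
    have hinside : ∀ e ∈ E', e ∈ G.edgeSet ∧ ∀ z ∈ e, z ∈ VM ∪ H' := by
      intro e he
      have heE : e ∈ G.edgeSet := by
        rw [hE', Finset.mem_filter, SimpleGraph.mem_edgeFinset] at he
        exact he.1
      refine ⟨heE, fun z hz => ?_⟩
      rw [Finset.mem_union]
      by_cases hzcov : ∃ e', e' ∈ M ∧ z ∈ e'
      · left; rw [hVM, Finset.mem_filter]; exact ⟨Finset.mem_univ z, hzcov⟩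
      · right
        obtain ⟨hχe, hχH⟩ := hχspec e he
        by_cases hzx : z = χ e
        · exact hzx ▸ hχH
        · exfalso
          have he2 : e = s(z, χ e) := (Sym2.mem_and_mem_iff hzx).mp ⟨hz, hχe⟩
          have hadj : G.Adj z (χ e) := by
            rw [← SimpleGraph.mem_edgeSet, ← he2]
            exact heE
          exact hindep z (χ e) hzcov (hH'mem _ hχH).2 hadj
    have hTne : (VM ∪ H').Nonempty := ⟨x0, Finset.mem_union.mpr (Or.inr hx0)⟩
    have harbE := harb (VM ∪ H') hTne E' hinside
    have hTcard : (VM ∪ H').card ≤ 2 * matchNum G + H'.card := by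
      calc (VM ∪ H').card ≤ VM.card + H'.card := Finset.card_union_le _ _
        _ = _ := by rw [hVMc]
    -- put the inequalities together : (2ν+3)|H'| ≤ ν(2μ + |H'|)
    have hchain : (2 * ν + 3) * H'.card ≤ ν * (2 * matchNum G) + ν * H'.card := by
      calc (2 * ν + 3) * H'.card ≤ E'.card := hlow
        _ ≤ ν * ((VM ∪ H').card - 1) := harbE
        _ ≤ ν * (2 * matchNum G + H'.card) := by
            apply Nat.mul_le_mul_left
            omega
        _ = ν * (2 * matchNum G) + ν * H'.card := by ring
    have hH'le : H'.card ≤ 2 * matchNum G := by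
      have h1 : (ν + 3) * H'.card ≤ (ν + 3) * (2 * matchNum G) := by nlinarith
      exact Nat.le_of_mul_le_mul_left h1 (by omega)
    omega


end MatchAux

theorem stmt_19 {V : Type*} [Fintype V] [DecidableEq V]
    (ν : ℕ) (hν : 1 ≤ ν)
    (G : SimpleGraph V) [DecidableRel G.Adj]
    (harb : ∃ f : Sym2 V → Fin ν, ∀ i : Fin ν,
      (SimpleGraph.fromEdgeSet {e | e ∈ G.edgeSet ∧ f e = i}).IsAcyclic) :
    let h : ℕ := (Finset.univ.filter (fun v : V => 2 * ν + 3 ≤ G.degree v)).card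
    let s : ℕ := (G.edgeFinset.filter (fun e => ∀ v ∈ e, G.degree v < 2 * ν + 3)).card
    ((max h s : ℕ) : ℝ) / (2.5 * (ν : ℝ) + 4.5) ≤ (matchNum G : ℝ) ∧
      matchNum G ≤ 2 * max h s := by
  classical
  intro h s
  have harbL : ∀ t : Finset V, t.Nonempty → ∀ s' : Finset (Sym2 V),
      (∀ e ∈ s', e ∈ G.edgeSet ∧ ∀ x ∈ e, x ∈ t) → s'.card ≤ ν * (t.card - 1) :=
    fun t ht s' hs' => MatchAux.arb_inner_card G ν harb t ht s' hs'
  -- the heavy bound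
  have hh : h ≤ 4 * matchNum G := MatchAux.heavy_bound G ν harbL
  -- the shallow bound
  set low : Finset V := Finset.univ.filter (fun v : V => G.degree v < 2 * ν + 3) with hlow
  set SG : SimpleGraph V := MatchAux.IndG G low with hSG
  have hSGadj : ∀ a b : V, SG.Adj a b ↔ G.Adj a b ∧ a ∈ low ∧ b ∈ low := fun a b => Iff.rfl
  have hedge_eq : (G.edgeFinset.filter (fun e => ∀ v ∈ e, G.degree v < 2 * ν + 3))
      = SG.edgeFinset := by
    ext e
    induction e using Sym2.ind with | _ a b => ?_
    rw [Finset.mem_filter, SimpleGraph.mem_edgeFinset, SimpleGraph.mem_edgeFinset,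
      SimpleGraph.mem_edgeSet, SimpleGraph.mem_edgeSet]
    constructor
    · rintro ⟨hadj, hall⟩
      refine ⟨hadj, ?_, ?_⟩ <;> rw [hlow, Finset.mem_filter]
      · exact ⟨Finset.mem_univ a, hall a (Sym2.mem_mk_left a b)⟩
      · exact ⟨Finset.mem_univ b, hall b (Sym2.mem_mk_right a b)⟩
    · rintro ⟨hadj, ha, hb⟩
      rw [hlow, Finset.mem_filter] at ha hb
      refine ⟨hadj, fun v hv => ?_⟩
      rcases Sym2.mem_iff.mp hv with rfl | rfl
      · exact ha.2
      · exact hb.2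
  have hSGdeg : ∀ v : V, SG.degree v ≤ 2 * ν + 2 := by
    intro v
    by_cases hv : v ∈ low
    · have hsub : SG.neighborFinset v ⊆ G.neighborFinset v := by
        intro x hx
        rw [SimpleGraph.mem_neighborFinset] at hx ⊢
        exact hx.1
      have h1 : SG.degree v ≤ G.degree v := Finset.card_le_card hsub
      rw [hlow, Finset.mem_filter] at hv
      omega
    · have hzero : SG.neighborFinset v = ∅ := by
        ext x
        rw [SimpleGraph.mem_neighborFinset]
        simp only [Finset.notMem_empty, iff_false]
        intro hadj
        exact hv hadj.2.1
      have : SG.degree v = 0 := by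
        rw [← SimpleGraph.card_neighborFinset_eq_degree, hzero, Finset.card_empty]
      omega
  have hSGarb : ∀ t : Finset V, t.Nonempty → ∀ s' : Finset (Sym2 V),
      (∀ e ∈ s', e ∈ SG.edgeSet ∧ ∀ x ∈ e, x ∈ t) → s'.card ≤ ν * (t.card - 1) := by
    intro t ht s' hs'
    refine harbL t ht s' (fun e he => ⟨?_, (hs' e he).2⟩)
    exact (MatchAux.IndG_edge_mem (hs' e he).1).1
  have hmain := MatchAux.main_bound SG ν hSGarb hSGdeg
    (Finset.univ : Finset V).card Finset.univ rfl
  rw [MatchAux.IndG_univ] at hmain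
  have hSGle : matchNum SG ≤ matchNum G :=
    MatchAux.matchNum_mono' (MatchAux.IndG_le G low)
  have hs2 : 2 * s ≤ (5 * ν + 9) * matchNum G := by
    have h1 : s = SG.edgeFinset.card := congrArg Finset.card hedge_eq
    calc 2 * s = 2 * SG.edgeFinset.card := by rw [h1]
      _ ≤ (5 * ν + 9) * matchNum SG := hmain
      _ ≤ (5 * ν + 9) * matchNum G := Nat.mul_le_mul_left _ hSGle
  constructor
  · -- lower bound
    have hpos : (0:ℝ) < 2.5 * (ν : ℝ) + 4.5 := by
      have : (0:ℝ) ≤ (ν : ℝ) := Nat.cast_nonneg ν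
      nlinarith
    rw [div_le_iff₀ hpos]
    have hcast : ((max h s : ℕ) : ℝ) = max (h : ℝ) (s : ℝ) := by
      push_cast
      rfl
    rw [hcast]
    have hν' : (1:ℝ) ≤ (ν : ℝ) := by exact_mod_cast hν
    have hμ0 : (0:ℝ) ≤ (matchNum G : ℝ) := Nat.cast_nonneg _
    have hhR : (h : ℝ) ≤ 4 * (matchNum G : ℝ) := by exact_mod_cast hh
    have hsR : 2 * (s : ℝ) ≤ (5 * (ν : ℝ) + 9) * (matchNum G : ℝ) := by exact_mod_cast hs2
    apply max_le
    · nlinarith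
    · nlinarith
  · -- upper bound
    obtain ⟨M, hM, hMc⟩ := MatchAux.matchNum_spec G
    have := MatchAux.upper_bound ν hM
    rw [hMc] at this
    have hhs : h + s ≤ 2 * max h s := by
      have := le_max_left h s
      have := le_max_right h s
      omega
    omega
end
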